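/- arXiv:2011.05607 — 3 statements merged into one kernel-verified Lean document; each statement's English description precedes it below -/
import Mathlib

section
/- Let d ≥ 1 and let k be a real number with 1 < k < d that is not an integer. Then the number of (d−1)-dimensional exposed faces (facets) of ρ_{d,k} equals 2^{⌊k⌋+1} · binom(d, ⌊k⌋+1) · (⌊k⌋+1); more precisely, the facets of k·ρ_{d,k} are exactly the sets conv(G ∪ S) where, for some subset I ⊆ {1,…,d} of cardinality ⌊k⌋+1 and some signs σ_i ∈ {−1,+1} for i ∈ I, G = {x ∈ [−1,1]^d : x_i = σ_i for all i ∈ I} is a (d−⌊k⌋−1)-dimensional face of γ_d and S is the simplex whose vertices are any ⌊k⌋ of the ⌊k⌋+1 points {k σ_i e_i : i ∈ I}. -/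
open scoped Pointwise

noncomputable section

/-- The hypercube `γ_d = [-1,1]^d` in `ℝ^d`. -/
def hcube (d : ℕ) : Set (EuclideanSpace ℝ (Fin d)) := {x | ∀ i, |x i| ≤ 1}

/-- The cross-polytope `β_d = {x : ∑ |x_i| ≤ 1}` in `ℝ^d`. -/
def cross (d : ℕ) : Set (EuclideanSpace ℝ (Fin d)) := {x | ∑ i, |x i| ≤ 1}

/-- The polytope `ρ_{d,k} = conv(β_d ∪ (1/k)γ_d)`. -/
def rho (d : ℕ) (k : ℝ) : Set (EuclideanSpace ℝ (Fin d)) :=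
  convexHull ℝ (cross d ∪ (1 / k) • hcube d)

namespace RhoFacets

variable {d : ℕ}

abbrev Eu (d : ℕ) := EuclideanSpace ℝ (Fin d)

/-- plain dot product -/
def dot (u x : Eu d) : ℝ := ∑ i, u i * x i

lemma innerSL_apply (u x : Eu d) : (innerSL ℝ u) x = dot u x := by
  simp [dot, PiLp.inner_apply, RCLike.inner_apply, mul_comm]

lemma dot_add (u x y : Eu d) : dot u (x + y) = dot u x + dot u y := by
  simp [dot, mul_add, Finset.sum_add_distrib]

lemma dot_smul (u : Eu d) (c : ℝ) (x : Eu d) : dot u (c • x) = c * dot u x := by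
  simp [dot, Finset.mul_sum]; congr 1; ext i; ring

lemma dot_sub (u x y : Eu d) : dot u (x - y) = dot u x - dot u y := by
  simp [dot, mul_sub, Finset.sum_sub_distrib]

lemma single_apply' (i l : Fin d) (a : ℝ) :
    (a • EuclideanSpace.single i (1 : ℝ)) l = if l = i then a else 0 := by
  simp [EuclideanSpace.single_apply]

lemma dot_single (u : Eu d) (i : Fin d) (a : ℝ) :
    dot u (a • EuclideanSpace.single i (1 : ℝ)) = a * u i := by
  rw [dot_smul]
  simp [dot, EuclideanSpace.single_apply]

/-- sign of a coordinate -/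
def sg (u : Eu d) (i : Fin d) : ℝ := if u i < 0 then -1 else 1

lemma sg_cases (u : Eu d) (i : Fin d) : sg u i = 1 ∨ sg u i = -1 := by
  unfold sg; split <;> simp

lemma sg_mul_self (u : Eu d) (i : Fin d) : sg u i * sg u i = 1 := by
  rcases sg_cases u i with h | h <;> rw [h] <;> norm_num

lemma abs_sg (u : Eu d) (i : Fin d) : |sg u i| = 1 := by
  rcases sg_cases u i with h | h <;> rw [h] <;> norm_num

lemma sg_mul_abs (u : Eu d) (i : Fin d) : sg u i * |u i| = u i := by
  unfold sg
  rcases lt_trichotomy (u i) 0 with h | h | h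
  · rw [if_pos h, abs_of_neg h]; ring
  · simp [h]
  · rw [if_neg (not_lt.2 h.le), abs_of_pos h]; ring

lemma mul_sg (u : Eu d) (i : Fin d) : u i * sg u i = |u i| := by
  unfold sg
  rcases lt_trichotomy (u i) 0 with h | h | h
  · rw [if_pos h, abs_of_neg h]; ring
  · simp [h]
  · rw [if_neg (not_lt.2 h.le), abs_of_pos h]; ring

def supp (u : Eu d) : Finset (Fin d) := Finset.univ.filter (fun i => u i ≠ 0)

lemma mem_supp {u : Eu d} {i : Fin d} : i ∈ supp u ↔ u i ≠ 0 := by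
  simp [supp]

def SU (u : Eu d) : ℝ := ∑ i, |u i|

section tmax
variable (hd : 1 ≤ d)

def uNe (hd : 1 ≤ d) : (Finset.univ : Finset (Fin d)).Nonempty :=
  ⟨⟨0, hd⟩, Finset.mem_univ _⟩

def tmax (hd : 1 ≤ d) (u : Eu d) : ℝ :=
  Finset.univ.sup' (uNe hd) fun i => |u i|

lemma abs_le_tmax (u : Eu d) (i : Fin d) : |u i| ≤ tmax hd u :=
  Finset.le_sup' (fun i => |u i|) (Finset.mem_univ i)

lemma exists_tmax (u : Eu d) : ∃ i, tmax hd u = |u i| := by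
  obtain ⟨i, _, h⟩ := Finset.exists_mem_eq_sup' (uNe hd) (fun i => |u i|)
  exact ⟨i, h⟩

lemma tmax_nonneg (u : Eu d) : 0 ≤ tmax hd u := by
  obtain ⟨i⟩ := uNe hd
  exact le_trans (abs_nonneg _) (abs_le_tmax hd u i)

lemma exists_ne_of_ne_zero {u : Eu d} (hu : u ≠ 0) : ∃ i, u i ≠ 0 := by
  by_contra h
  push_neg at h
  exact hu (by ext i; simp [h i])

lemma tmax_pos {u : Eu d} (hu : u ≠ 0) : 0 < tmax hd u := by
  obtain ⟨i, hi⟩ := exists_ne_of_ne_zero hu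
  exact lt_of_lt_of_le (abs_pos.2 hi) (abs_le_tmax hd u i)

def Tset (hd : 1 ≤ d) (u : Eu d) : Finset (Fin d) :=
  Finset.univ.filter (fun i => |u i| = tmax hd u)

lemma mem_Tset {u : Eu d} {i : Fin d} : i ∈ Tset hd u ↔ |u i| = tmax hd u := by
  simp [Tset]

lemma Tset_nonempty (u : Eu d) : (Tset hd u).Nonempty := by
  obtain ⟨i, hi⟩ := exists_tmax hd u
  exact ⟨i, (mem_Tset hd).2 hi.symm⟩

lemma Tset_subset_supp {u : Eu d} (hu : u ≠ 0) : Tset hd u ⊆ supp u := by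
  intro i hi
  rw [mem_Tset hd] at hi
  rw [mem_supp]
  intro h
  rw [h] at hi
  simp at hi
  exact absurd hi.symm (ne_of_gt (tmax_pos hd hu))

end tmax

end RhoFacets


namespace RhoFacets
variable {d : ℕ}

lemma mem_smul_cross {k : ℝ} (hk : 0 < k) {y : Eu d} :
    y ∈ k • cross d ↔ ∑ i, |y i| ≤ k := by
  rw [Set.mem_smul_set]
  constructor
  · rintro ⟨z, hz, rfl⟩
    have : ∀ i, |(k • z : Eu d) i| = k * |z i| := by
      intro i
      show |k * z i| = k * |z i|
      rw [abs_mul, abs_of_pos hk]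
    rw [Finset.sum_congr rfl (fun i _ => this i), ← Finset.mul_sum]
    calc k * ∑ i, |z i| ≤ k * 1 := by
          exact mul_le_mul_of_nonneg_left hz hk.le
      _ = k := mul_one k
  · intro h
    refine ⟨k⁻¹ • y, ?_, by rw [smul_smul, mul_inv_cancel₀ hk.ne', one_smul]⟩
    show ∑ i, |(k⁻¹ • y : Eu d) i| ≤ 1
    have : ∀ i, |(k⁻¹ • y : Eu d) i| = k⁻¹ * |y i| := by
      intro i
      show |k⁻¹ * y i| = k⁻¹ * |y i|
      rw [abs_mul, abs_of_pos (by positivity)]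
    rw [Finset.sum_congr rfl (fun i _ => this i), ← Finset.mul_sum]
    rw [inv_mul_le_iff₀ hk, mul_one]
    exact h

lemma dot_term_le {u x : Eu d} (hx : x ∈ hcube d) (i : Fin d) : u i * x i ≤ |u i| := by
  calc u i * x i ≤ |u i * x i| := le_abs_self _
    _ = |u i| * |x i| := abs_mul _ _
    _ ≤ |u i| * 1 := mul_le_mul_of_nonneg_left (hx i) (abs_nonneg _)
    _ = |u i| := mul_one _

lemma dot_le_SU {u x : Eu d} (hx : x ∈ hcube d) : dot u x ≤ SU u :=
  Finset.sum_le_sum (fun i _ => dot_term_le hx i)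

lemma dot_eq_SU_iff {u x : Eu d} (hx : x ∈ hcube d) :
    dot u x = SU u ↔ ∀ i ∈ supp u, x i = sg u i := by
  unfold dot SU
  rw [Finset.sum_eq_sum_iff_of_le (fun i _ => dot_term_le hx i)]
  constructor
  · intro h i hi
    have hne := mem_supp.1 hi
    have h1 : u i * (x i - sg u i) = 0 := by
      rw [mul_sub, mul_sg, h i (Finset.mem_univ i)]; ring
    rcases mul_eq_zero.1 h1 with h2 | h2
    · exact absurd h2 hne
    · linarith [sub_eq_zero.1 h2]
  · intro h i _
    by_cases hi : u i = 0
    · simp [hi]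
    · rw [h i (mem_supp.2 hi), mul_sg]

lemma dot_le_ktmax (hd : 1 ≤ d) {k : ℝ} (hk : 0 < k) {u y : Eu d} (hy : y ∈ k • cross d) :
    dot u y ≤ k * tmax hd u := by
  have hyk : ∑ i, |y i| ≤ k := (mem_smul_cross hk).1 hy
  calc dot u y ≤ ∑ i, |u i| * |y i| := by
        apply Finset.sum_le_sum
        intro i _
        calc u i * y i ≤ |u i * y i| := le_abs_self _
          _ = |u i| * |y i| := abs_mul _ _
    _ ≤ ∑ i, tmax hd u * |y i| :=
        Finset.sum_le_sum (fun i _ =>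
          mul_le_mul_of_nonneg_right (abs_le_tmax hd u i) (abs_nonneg _))
    _ = tmax hd u * ∑ i, |y i| := by rw [Finset.mul_sum]
    _ ≤ tmax hd u * k := mul_le_mul_of_nonneg_left hyk (tmax_nonneg hd u)
    _ = k * tmax hd u := mul_comm _ _

/-- the cube part of a face -/
def Gface (I : Finset (Fin d)) (σ : Fin d → ℝ) : Set (Eu d) :=
  {x ∈ hcube d | ∀ i ∈ I, x i = σ i}

/-- the simplex part of a face -/
def Sface (k : ℝ) (J : Finset (Fin d)) (σ : Fin d → ℝ) : Set (Eu d) :=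
  {p | ∃ i ∈ J, p = (k * σ i) • EuclideanSpace.single i (1 : ℝ)}

lemma Sface_mem_cross (hd : 1 ≤ d) {k : ℝ} (hk : 0 < k) {u : Eu d} {p : Eu d}
    (hp : p ∈ Sface k (Tset hd u) (sg u)) : p ∈ k • cross d := by
  obtain ⟨i, _, rfl⟩ := hp
  rw [mem_smul_cross hk]
  have : ∀ l, |((k * sg u i) • EuclideanSpace.single i (1:ℝ) : Eu d) l|
      = if l = i then k else 0 := by
    intro l
    rw [single_apply']
    split
    · rw [abs_mul, abs_sg, abs_of_pos hk, mul_one]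
    · exact abs_zero
  rw [Finset.sum_congr rfl (fun l _ => this l), Finset.sum_ite_eq' Finset.univ i fun _ => k]
  simp

lemma Sface_dot (hd : 1 ≤ d) {k : ℝ} {u : Eu d} {p : Eu d}
    (hp : p ∈ Sface k (Tset hd u) (sg u)) : dot u p = k * tmax hd u := by
  obtain ⟨i, hi, rfl⟩ := hp
  rw [dot_single]
  have : u i * sg u i = tmax hd u := by rw [mul_sg]; exact (mem_Tset hd).1 hi
  calc k * sg u i * u i = k * (u i * sg u i) := by ring
    _ = k * tmax hd u := by rw [this]

lemma kcross_face (hd : 1 ≤ d) {k : ℝ} (hk : 0 < k) {u : Eu d} (hu : u ≠ 0) {y : Eu d}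
    (hy : y ∈ k • cross d) (heq : dot u y = k * tmax hd u) :
    y ∈ convexHull ℝ (Sface k (Tset hd u) (sg u)) := by
  set t := tmax hd u with ht
  have htpos : 0 < t := tmax_pos hd hu
  have hyk : ∑ i, |y i| ≤ k := (mem_smul_cross hk).1 hy
  -- chain of inequalities, all equalities
  have c1 : ∀ i, u i * y i ≤ |u i| * |y i| := fun i => by
    calc u i * y i ≤ |u i * y i| := le_abs_self _
      _ = |u i| * |y i| := abs_mul _ _
  have c2 : ∀ i, |u i| * |y i| ≤ t * |y i| := fun i =>
    mul_le_mul_of_nonneg_right (abs_le_tmax hd u i) (abs_nonneg _)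
  have e3 : ∑ i, t * |y i| = t * ∑ i, |y i| := by rw [Finset.mul_sum]
  have hchain1 : dot u y ≤ ∑ i, |u i| * |y i| := Finset.sum_le_sum fun i _ => c1 i
  have hchain2 : ∑ i, |u i| * |y i| ≤ ∑ i, t * |y i| := Finset.sum_le_sum fun i _ => c2 i
  have hchain3 : t * ∑ i, |y i| ≤ t * k := mul_le_mul_of_nonneg_left hyk htpos.le
  -- all equal
  have key : ∑ i, |u i| * |y i| = ∑ i, t * |y i| := by
    apply le_antisymm hchain2
    rw [e3] at *
    nlinarith [heq, hchain1, hchain3]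
  have key1 : dot u y = ∑ i, |u i| * |y i| := by
    apply le_antisymm hchain1
    rw [key, e3]
    nlinarith [heq, hchain3]
  have keysum : ∑ i, |y i| = k := by
    have h1 : t * ∑ i, |y i| = t * k := by
      rw [← e3, ← key, ← key1, heq]; ring
    have := mul_left_cancel₀ htpos.ne' h1
    exact this
  -- termwise consequences
  have hoff : ∀ i, i ∉ Tset hd u → y i = 0 := by
    intro i hiT
    have hterm := (Finset.sum_eq_sum_iff_of_le (fun i _ => c2 i)).1 key i (Finset.mem_univ i)
    by_contra hyi
    exact hiT ((mem_Tset hd).2 (mul_right_cancel₀ (abs_ne_zero.2 hyi) hterm))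
  have hsign : ∀ i, y i = sg u i * |y i| := by
    intro i
    have hterm := (Finset.sum_eq_sum_iff_of_le (fun i _ => c1 i)).1 key1 i (Finset.mem_univ i)
    by_cases hyi : y i = 0
    · rw [hyi, abs_zero, mul_zero]
    by_cases hui : u i = 0
    · -- then i ∉ T so y i = 0
      have : i ∉ Tset hd u := by
        rw [mem_Tset hd]
        rw [hui]
        simp
        exact htpos.ne
      exact absurd (hoff i this) hyi
    · -- u i * y i = |u i| |y i| > 0, same signs
      have h1 : u i * (y i - sg u i * |y i|) = 0 := by
        rw [mul_sub, hterm]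
        have : u i * (sg u i * |y i|) = |u i| * |y i| := by
          rw [← mul_assoc, mul_sg]
        rw [this]; ring
      rcases mul_eq_zero.1 h1 with h2 | h2
      · exact absurd h2 hui
      · linarith [sub_eq_zero.1 h2]
  -- convex combination
  have hTsum : ∑ i ∈ Tset hd u, |y i| = k := by
    rw [← keysum]
    apply Finset.sum_subset (Finset.subset_univ _)
    intro i _ hiT
    rw [hoff i hiT, abs_zero]
  have hw1 : ∑ i ∈ Tset hd u, |y i| / k = 1 := by
    rw [← Finset.sum_div, hTsum, div_self hk.ne']
  have hcm : (Tset hd u).centerMass (fun i => |y i| / k)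
      (fun i => (k * sg u i) • EuclideanSpace.single i (1:ℝ)) = y := by
    rw [Finset.centerMass_eq_of_sum_1 _ _ hw1]
    ext l
    rw [WithLp.ofLp_sum, Finset.sum_apply]
    have : ∀ i ∈ Tset hd u,
        ((|y i| / k) • ((k * sg u i) • EuclideanSpace.single i (1:ℝ)) : Eu d) l
        = if l = i then sg u i * |y i| else 0 := by
      intro i _
      show (|y i| / k) * (((k * sg u i) • EuclideanSpace.single i (1:ℝ) : Eu d) l) = _
      rw [single_apply']
      split
      · field_simp
      · exact mul_zero _
    rw [Finset.sum_congr rfl this]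
    by_cases hl : l ∈ Tset hd u
    · rw [Finset.sum_eq_single_of_mem l hl (fun i _ hne => by rw [if_neg (fun h => hne h.symm)]),
        if_pos rfl, ← hsign l]
    · rw [Finset.sum_eq_zero, hoff l hl]
      intro i hi
      rw [if_neg]
      intro h
      exact hl (h ▸ hi)
  rw [← hcm]
  exact Finset.centerMass_mem_convexHull _ (fun i _ => by positivity)
    (by rw [hw1]; norm_num) (fun i hi => ⟨i, hi, rfl⟩)

end RhoFacets

namespace RhoFacets

variable {d : ℕ}

/-- bound on convex hull -/
lemma hull_le {A : Set (Eu d)} {l : Eu d →L[ℝ] ℝ} {M : ℝ} (hA : ∀ a ∈ A, l a ≤ M) :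
    ∀ x ∈ convexHull ℝ A, l x ≤ M := by
  intro x hx
  have : convexHull ℝ A ⊆ {x | l x ≤ M} := by
    apply convexHull_min hA
    exact convex_halfSpace_le ⟨fun a b => map_add l a b, fun c a => map_smul l c a⟩ M
  exact this hx

/-- a point of the hull attaining the max over A lies in the hull of the argmax set -/
lemma mem_convexHull_inter_max {A : Set (Eu d)} {l : Eu d →L[ℝ] ℝ} {M : ℝ}
    (hA : ∀ a ∈ A, l a ≤ M) {x : Eu d} (hx : x ∈ convexHull ℝ A) (hxM : l x = M) :
    x ∈ convexHull ℝ {a ∈ A | l a = M} := by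
  rw [convexHull_eq] at hx
  obtain ⟨ι, t, w, z, hw0, hw1, hz, hcm⟩ := hx
  rw [Finset.centerMass_eq_of_sum_1 _ _ hw1] at hcm
  -- l x = ∑ w i * l (z i)
  have hlx : l x = ∑ i ∈ t, w i * l (z i) := by
    rw [← hcm, map_sum]
    congr 1; ext i; rw [map_smul]; rfl
  have hsum0 : ∑ i ∈ t, w i * (M - l (z i)) = 0 := by
    have : ∑ i ∈ t, w i * (M - l (z i)) = (∑ i ∈ t, w i) * M - ∑ i ∈ t, w i * l (z i) := by
      rw [Finset.sum_mul, ← Finset.sum_sub_distrib]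
      congr 1; ext i; ring
    rw [this, hw1, ← hlx, hxM]; ring
  have hterm : ∀ i ∈ t, w i * (M - l (z i)) = 0 :=
    (Finset.sum_eq_zero_iff_of_nonneg (fun i hi =>
      mul_nonneg (hw0 i hi) (sub_nonneg.2 (hA _ (hz i hi))))).1 hsum0
  -- restrict to positive weights
  set t' := t.filter (fun i => w i ≠ 0) with ht'
  have hz' : ∀ i ∈ t', z i ∈ {a ∈ A | l a = M} := by
    intro i hi
    rw [ht', Finset.mem_filter] at hi
    refine ⟨hz i hi.1, ?_⟩
    have := hterm i hi.1
    rcases mul_eq_zero.1 this with h | h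
    · exact absurd h hi.2
    · linarith [sub_eq_zero.1 h]
  have hw1' : ∑ i ∈ t', w i = 1 := by
    rw [ht', Finset.sum_filter_ne_zero]
    exact hw1
  have hx' : t'.centerMass w z = x := by
    rw [Finset.centerMass_eq_of_sum_1 _ _ hw1', ← hcm]
    rw [ht']
    apply Finset.sum_filter_of_ne
    intro i _ h
    intro hw
    exact h (by rw [hw, zero_smul])
  rw [← hx']
  apply Finset.centerMass_mem_convexHull _ (fun i hi => hw0 i (Finset.mem_of_mem_filter i hi))
    (by rw [hw1']; norm_num) hz'

/-- construction of exposed faces -/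
lemma isExposed_of {A : Set (Eu d)} (l : Eu d →L[ℝ] ℝ) {M : ℝ}
    (hA : ∀ a ∈ A, l a ≤ M) (h0 : ∃ x ∈ A, l x = M) :
    IsExposed ℝ A {x ∈ A | l x = M} := by
  intro _
  refine ⟨l, ?_⟩
  ext x
  constructor
  · rintro ⟨hxA, hxM⟩
    exact ⟨hxA, fun y hy => by rw [hxM]; exact hA y hy⟩
  · rintro ⟨hxA, hmax⟩
    obtain ⟨x0, hx0A, hx0M⟩ := h0
    refine ⟨hxA, le_antisymm (hA x hxA) ?_⟩
    rw [← hx0M]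
    exact hmax x0 hx0A

end RhoFacets


namespace RhoFacets
variable {d : ℕ}

lemma krho_eq {k : ℝ} (hk : k ≠ 0) :
    k • rho d k = convexHull ℝ (k • cross d ∪ hcube d) := by
  rw [rho, ← convexHull_smul, Set.smul_set_union, smul_smul]
  congr 2
  rw [show k * (1/k) = 1 by field_simp, one_smul]

/-- the candidate ambient generator set -/
def Aset (d : ℕ) (k : ℝ) : Set (Eu d) := k • cross d ∪ hcube d

lemma dot_le_on_A (hd : 1 ≤ d) {k : ℝ} (hk : 0 < k) {u : Eu d}
    (hSU : SU u = k * tmax hd u) :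
    ∀ a ∈ Aset d k, (innerSL ℝ u) a ≤ k * tmax hd u := by
  rintro a (ha | ha)
  · rw [innerSL_apply]; exact dot_le_ktmax hd hk ha
  · rw [innerSL_apply, ← hSU]; exact dot_le_SU ha

lemma face_eq (hd : 1 ≤ d) {k : ℝ} (hk : 0 < k) {u : Eu d} (hu : u ≠ 0)
    (hSU : SU u = k * tmax hd u) :
    {x ∈ convexHull ℝ (Aset d k) | dot u x = k * tmax hd u}
      = convexHull ℝ (Gface (supp u) (sg u) ∪ Sface k (Tset hd u) (sg u)) := by
  apply Set.Subset.antisymm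
  · rintro x ⟨hxP, hxM⟩
    have hmax := mem_convexHull_inter_max (dot_le_on_A hd hk hSU) hxP
      (by rw [innerSL_apply]; exact hxM)
    have hsub : {a ∈ Aset d k | (innerSL ℝ u) a = k * tmax hd u}
        ⊆ Gface (supp u) (sg u) ∪ convexHull ℝ (Sface k (Tset hd u) (sg u)) := by
      rintro a ⟨(ha | ha), haM⟩
      · right
        exact kcross_face hd hk hu ha (by rw [← innerSL_apply]; exact haM)
      · left
        rw [innerSL_apply] at haM
        exact ⟨ha, (dot_eq_SU_iff ha).1 (by rw [haM, hSU])⟩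
    have step := convexHull_mono hsub hmax
    rwa [convexHull_convexHull_union_right] at step
  · -- reverse inclusion
    have hgen : Gface (supp u) (sg u) ∪ Sface k (Tset hd u) (sg u)
        ⊆ {x ∈ convexHull ℝ (Aset d k) | dot u x = k * tmax hd u} := by
      rintro a (ha | ha)
      · refine ⟨subset_convexHull ℝ _ (Or.inr ha.1), ?_⟩
        rw [(dot_eq_SU_iff ha.1).2 ha.2, hSU]
      · exact ⟨subset_convexHull ℝ _ (Or.inl (Sface_mem_cross hd hk ha)), Sface_dot hd ha⟩
    apply convexHull_min hgen
    have h1 : Convex ℝ (convexHull ℝ (Aset d k)) := convex_convexHull ℝ _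
    have h2 : Convex ℝ {x : Eu d | dot u x = k * tmax hd u} := by
      have : {x : Eu d | dot u x = k * tmax hd u}
          = {x : Eu d | (innerSL ℝ u) x = k * tmax hd u} := by
        ext x; rw [Set.mem_setOf_eq, Set.mem_setOf_eq, innerSL_apply]
      rw [this]
      exact convex_hyperplane ⟨fun a b => map_add _ a b, fun c a => map_smul _ c a⟩ _
    exact fun x hx y hy a b ha hb hab =>
      ⟨h1 (hx.1) (hy.1) ha hb hab, h2 hx.2 hy.2 ha hb hab⟩

lemma isExposed_face (hd : 1 ≤ d) {k : ℝ} (hk : 0 < k) {u : Eu d} (hu : u ≠ 0)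
    (hSU : SU u = k * tmax hd u) :
    IsExposed ℝ (convexHull ℝ (Aset d k))
      {x ∈ convexHull ℝ (Aset d k) | dot u x = k * tmax hd u} := by
  have : {x ∈ convexHull ℝ (Aset d k) | dot u x = k * tmax hd u}
      = {x ∈ convexHull ℝ (Aset d k) | (innerSL ℝ u) x = k * tmax hd u} := by
    ext x
    simp only [Set.mem_setOf_eq, innerSL_apply]
  rw [this]
  apply isExposed_of
  · exact fun a ha => hull_le (dot_le_on_A hd hk hSU) a ha
  · obtain ⟨i0, hi0⟩ := Tset_nonempty hd u
    refine ⟨(k * sg u i0) • EuclideanSpace.single i0 (1:ℝ), ?_, ?_⟩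
    · exact subset_convexHull ℝ _ (Or.inl (Sface_mem_cross hd hk ⟨i0, hi0, rfl⟩))
    · rw [innerSL_apply]
      exact Sface_dot hd ⟨i0, hi0, rfl⟩

end RhoFacets


namespace RhoFacets
variable {d : ℕ}

/-- dot as a linear map -/
def dotL (u : Eu d) : Eu d →ₗ[ℝ] ℝ where
  toFun := dot u
  map_add' := dot_add u
  map_smul' := fun c x => by simp [dot_smul]

@[simp] lemma dotL_apply (u x : Eu d) : dotL u x = dot u x := rfl

lemma dot_comm (u v : Eu d) : dot u v = dot v u := by
  unfold dot; congr 1; ext i; ring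

lemma dot_self_eq_zero {w : Eu d} (h : dot w w = 0) : w = 0 := by
  have h2 : ∀ i ∈ Finset.univ, w i * w i = 0 := by
    rw [← Finset.sum_eq_zero_iff_of_nonneg (fun i _ => mul_self_nonneg (w i))]
    exact h
  ext i
  have := h2 i (Finset.mem_univ i)
  exact (mul_self_eq_zero).1 this

lemma dot_self_ne_zero {u : Eu d} (hu : u ≠ 0) : dot u u ≠ 0 :=
  fun h => hu (dot_self_eq_zero h)

lemma finrank_ker_dotL {u : Eu d} (hu : u ≠ 0) :
    Module.finrank ℝ (LinearMap.ker (dotL u)) = d - 1 := by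
  have hr : LinearMap.range (dotL u) = ⊤ := by
    rw [LinearMap.range_eq_top]
    intro c
    refine ⟨(c / dot u u) • u, ?_⟩
    rw [dotL_apply, dot_smul, div_mul_cancel₀ _ (dot_self_ne_zero hu)]
  have := LinearMap.finrank_range_add_finrank_ker (dotL u)
  rw [hr] at this
  rw [finrank_euclideanSpace, Fintype.card_fin] at this
  rw [finrank_top] at this
  rw [Module.finrank_self] at this
  omega

lemma sub_mem_vectorSpan {s : Set (Eu d)} {x y : Eu d} (hx : x ∈ s) (hy : y ∈ s) :
    x - y ∈ vectorSpan ℝ s := by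
  rw [vectorSpan_def]
  exact Submodule.subset_span ⟨x, hx, y, hy, rfl⟩

lemma vectorSpan_le_ker {s : Set (Eu d)} {u : Eu d} {c : ℝ} (h : ∀ x ∈ s, dot u x = c) :
    vectorSpan ℝ s ≤ LinearMap.ker (dotL u) := by
  rw [vectorSpan_def]
  rw [Submodule.span_le]
  rintro v ⟨x, hx, y, hy, rfl⟩
  rw [SetLike.mem_coe, LinearMap.mem_ker]
  show dot u (x - y) = 0
  rw [dot_sub, h x hx, h y hy, sub_self]

lemma vectorSpan_convexHull' (s : Set (Eu d)) :
    vectorSpan ℝ (convexHull ℝ s) = vectorSpan ℝ s := by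
  rw [← direction_affineSpan, ← direction_affineSpan ℝ s, affineSpan_convexHull]

/-- vectors supported in a finset lie in the span of the singles -/
lemma mem_span_singles {s : Finset (Fin d)} {v : Eu d} (h : ∀ l, l ∉ s → v l = 0) :
    v ∈ Submodule.span ℝ ((fun l => (EuclideanSpace.single l (1:ℝ) : Eu d)) '' ↑s) := by
  have hv : v = ∑ l ∈ s, v l • (EuclideanSpace.single l (1:ℝ) : Eu d) := by
    ext i
    rw [WithLp.ofLp_sum, Finset.sum_apply]
    have : ∀ l ∈ s, (v l • (EuclideanSpace.single l (1:ℝ) : Eu d)) i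
        = if i = l then v l else 0 := fun l _ => single_apply' l i (v l)
    rw [Finset.sum_congr rfl this]
    by_cases hi : i ∈ s
    · rw [Finset.sum_eq_single_of_mem i hi (fun l _ hne => by
        rw [if_neg (fun hh => hne hh.symm)]), if_pos rfl]
    · rw [Finset.sum_eq_zero, h i hi]
      intro l hl
      rw [if_neg]
      intro hh
      exact hi (hh ▸ hl)
  rw [hv]
  exact Submodule.sum_mem _ (fun l hl => Submodule.smul_mem _ _
    (Submodule.subset_span ⟨l, hl, rfl⟩))

lemma finrank_span_image_le (s : Finset (Fin d)) (f : Fin d → Eu d) :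
    Module.finrank ℝ (Submodule.span ℝ (f '' ↑s)) ≤ s.card := by
  classical
  rw [← Finset.coe_image]
  exact le_trans (finrank_span_finset_le_card _) Finset.card_image_le

end RhoFacets


namespace RhoFacets
variable {d : ℕ}

lemma add_apply' (x y : Eu d) (l : Fin d) : (x + y) l = x l + y l := rfl
lemma smul_apply' (c : ℝ) (x : Eu d) (l : Fin d) : (c • x) l = c * x l := rfl
lemma sub_apply' (x y : Eu d) (l : Fin d) : (x - y) l = x l - y l := rfl

lemma sum_single_apply (s : Finset (Fin d)) (f : Fin d → ℝ) (l : Fin d) :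
    (∑ i ∈ s, f i • (EuclideanSpace.single i (1:ℝ) : Eu d)) l
      = if l ∈ s then f l else 0 := by
  rw [WithLp.ofLp_sum, Finset.sum_apply]
  have : ∀ i ∈ s, (f i • (EuclideanSpace.single i (1:ℝ) : Eu d)) l
      = if l = i then f i else 0 := fun i _ => single_apply' i l (f i)
  rw [Finset.sum_congr rfl this]
  by_cases hl : l ∈ s
  · rw [Finset.sum_eq_single_of_mem l hl
      (fun i _ hne => by rw [if_neg (fun hh => hne hh.symm)]), if_pos rfl, if_pos hl]
  · rw [if_neg hl, Finset.sum_eq_zero]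
    intro i hi
    rw [if_neg]
    intro hh
    exact hl (hh ▸ hi)

/-- canonical normal vector associated to face data -/
def ucan (k : ℝ) (J : Finset (Fin d)) (j : Fin d) (σ : Fin d → ℝ) : Eu d :=
  WithLp.toLp 2 fun l => if l ∈ J then σ l else if l = j then (k - ⌊k⌋₊) * σ l else 0

section ucanfacts

variable {k : ℝ} {J : Finset (Fin d)} {j : Fin d} {σ : Fin d → ℝ}

lemma ucan_mem_J (h : ∀ l, l ∈ J → True) : True := trivial

lemma ucan_apply_J {l : Fin d} (hl : l ∈ J) : ucan k J j σ l = σ l := by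
  unfold ucan; rw [PiLp.toLp_apply, if_pos hl]

lemma ucan_apply_j (hj : j ∉ J) : ucan k J j σ j = (k - ⌊k⌋₊) * σ j := by
  unfold ucan; rw [PiLp.toLp_apply, if_neg hj, if_pos rfl]

lemma ucan_apply_zero {l : Fin d} (hl : l ∉ insert j J) : ucan k J j σ l = 0 := by
  unfold ucan
  rw [PiLp.toLp_apply, if_neg (fun h => hl (Finset.mem_insert_of_mem h)),
    if_neg (fun h : l = j => hl (by rw [h]; exact Finset.mem_insert_self j J))]

variable (hj : j ∉ J) (hσ : ∀ i ∈ insert j J, σ i = 1 ∨ σ i = -1)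
  (hfrac0 : 0 < k - ⌊k⌋₊) (hfrac1 : k - ⌊k⌋₊ < 1)

include hσ in
lemma abs_ucan_J {l : Fin d} (hl : l ∈ J) : |ucan k J j σ l| = 1 := by
  rw [ucan_apply_J hl]
  rcases hσ l (Finset.mem_insert_of_mem hl) with h | h <;> rw [h] <;> norm_num

include hj hσ hfrac0 in
lemma abs_ucan_j : |ucan k J j σ j| = k - ⌊k⌋₊ := by
  rw [ucan_apply_j hj, abs_mul]
  rcases hσ j (Finset.mem_insert_self j J) with h | h <;>
    rw [h] <;> simp [abs_of_pos hfrac0]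

include hj hσ hfrac0 in
lemma supp_ucan : supp (ucan k J j σ) = insert j J := by
  ext l
  rw [mem_supp]
  constructor
  · intro h
    by_contra hl
    exact h (ucan_apply_zero hl)
  · intro hl
    rcases Finset.mem_insert.1 hl with rfl | hlJ
    · rw [ucan_apply_j hj]
      rcases hσ l (Finset.mem_insert_self l J) with h | h <;> rw [h] <;> nlinarith
    · rw [ucan_apply_J hlJ]
      rcases hσ l (Finset.mem_insert_of_mem hlJ) with h | h <;> rw [h] <;> norm_num

include hj hσ hfrac0 hfrac1 in
lemma tmax_ucan (hd : 1 ≤ d) (hJne : J.Nonempty) : tmax hd (ucan k J j σ) = 1 := by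
  apply le_antisymm
  · apply Finset.sup'_le
    intro l _
    by_cases hlJ : l ∈ J
    · rw [abs_ucan_J hσ hlJ]
    · by_cases hlj : l = j
      · subst hlj
        rw [abs_ucan_j hj hσ hfrac0]
        linarith
      · rw [ucan_apply_zero (by
          intro h
          rcases Finset.mem_insert.1 h with h | h
          exacts [hlj h, hlJ h])]
        norm_num
  · obtain ⟨i, hi⟩ := hJne
    rw [← abs_ucan_J hσ hi]
    exact abs_le_tmax hd _ i

include hj hσ hfrac0 hfrac1 in
lemma Tset_ucan (hd : 1 ≤ d) (hJne : J.Nonempty) : Tset hd (ucan k J j σ) = J := by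
  ext l
  rw [mem_Tset hd, tmax_ucan hj hσ hfrac0 hfrac1 hd hJne]
  constructor
  · intro h
    by_contra hlJ
    by_cases hlj : l = j
    · subst hlj
      rw [abs_ucan_j hj hσ hfrac0] at h
      linarith
    · rw [ucan_apply_zero (by
        intro hh
        rcases Finset.mem_insert.1 hh with hh | hh
        exacts [hlj hh, hlJ hh])] at h
      norm_num at h
  · exact fun h => abs_ucan_J hσ h

include hj hσ hfrac0 in
lemma sg_ucan {i : Fin d} (hi : i ∈ insert j J) : sg (ucan k J j σ) i = σ i := by
  unfold sg
  rcases Finset.mem_insert.1 hi with rfl | hiJ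
  · rw [ucan_apply_j hj]
    rcases hσ i (Finset.mem_insert_self i J) with h | h <;> rw [h]
    · rw [if_neg (by nlinarith)]
    · rw [if_pos (by nlinarith)]
  · rw [ucan_apply_J hiJ]
    rcases hσ i (Finset.mem_insert_of_mem hiJ) with h | h <;> rw [h]
    · rw [if_neg (by norm_num)]
    · rw [if_pos (by norm_num)]

include hj hσ hfrac0 in
lemma SU_ucan (hm : J.card = ⌊k⌋₊) : SU (ucan k J j σ) = k := by
  unfold SU
  rw [← Finset.sum_subset (Finset.subset_univ (insert j J))
    (fun l _ hl => by rw [ucan_apply_zero hl, abs_zero])]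
  rw [Finset.sum_insert hj, abs_ucan_j hj hσ hfrac0,
    Finset.sum_congr rfl (fun l hl => abs_ucan_J hσ (l := l) hl), Finset.sum_const, hm]
  simp

include hj hσ hfrac0 in
lemma ucan_ne_zero : ucan k J j σ ≠ 0 := by
  intro h
  have : ucan k J j σ j = 0 := by rw [h]; rfl
  rw [ucan_apply_j hj] at this
  rcases hσ j (Finset.mem_insert_self j J) with hh | hh <;> rw [hh] at this <;> nlinarith

include hσ in
lemma Gface_ucan_eq (hd : 1 ≤ d) (hJne : J.Nonempty) (hm : J.card = ⌊k⌋₊)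
    (h1 : j ∉ J) (h2 : 0 < k - ⌊k⌋₊) (h3 : k - ⌊k⌋₊ < 1) :
    Gface (supp (ucan k J j σ)) (sg (ucan k J j σ)) = Gface (insert j J) σ := by
  unfold Gface
  rw [supp_ucan h1 hσ h2]
  ext x
  simp only [Set.mem_setOf_eq]
  constructor
  · exact fun ⟨hx, h⟩ => ⟨hx, fun i hi => by rw [h i hi, sg_ucan h1 hσ h2 hi]⟩
  · exact fun ⟨hx, h⟩ => ⟨hx, fun i hi => by rw [h i hi, sg_ucan h1 hσ h2 hi]⟩

include hσ in
lemma Sface_ucan_eq (hd : 1 ≤ d) (hJne : J.Nonempty) (h1 : j ∉ J)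
    (h2 : 0 < k - ⌊k⌋₊) (h3 : k - ⌊k⌋₊ < 1) :
    Sface k (Tset hd (ucan k J j σ)) (sg (ucan k J j σ)) = Sface k J σ := by
  unfold Sface
  rw [Tset_ucan h1 hσ h2 h3 hd hJne]
  ext p
  simp only [Set.mem_setOf_eq]
  constructor
  · rintro ⟨i, hi, rfl⟩
    exact ⟨i, hi, by rw [sg_ucan h1 hσ h2 (Finset.mem_insert_of_mem hi)]⟩
  · rintro ⟨i, hi, rfl⟩
    exact ⟨i, hi, by rw [sg_ucan h1 hσ h2 (Finset.mem_insert_of_mem hi)]⟩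

end ucanfacts

end RhoFacets


namespace RhoFacets
variable {d : ℕ}

/-- canonical cube point of a cube face -/
def g0v (I : Finset (Fin d)) (σ : Fin d → ℝ) : Eu d := WithLp.toLp 2 fun i => if i ∈ I then σ i else 0

lemma g0v_apply (I : Finset (Fin d)) (σ : Fin d → ℝ) (i : Fin d) :
    g0v I σ i = if i ∈ I then σ i else 0 := rfl

/-- vertices of the simplex part -/
def pvec (k : ℝ) (σ : Fin d → ℝ) (i : Fin d) : Eu d :=
  (k * σ i) • EuclideanSpace.single i (1:ℝ)

lemma pvec_apply (k : ℝ) (σ : Fin d → ℝ) (i l : Fin d) :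
    pvec k σ i l = if l = i then k * σ i else 0 := single_apply' i l (k * σ i)

lemma g0v_mem_Gface {I : Finset (Fin d)} {σ : Fin d → ℝ}
    (hσ : ∀ i ∈ I, σ i = 1 ∨ σ i = -1) : g0v I σ ∈ Gface I σ := by
  constructor
  · intro i
    rw [g0v_apply]
    by_cases hi : i ∈ I
    · rw [if_pos hi]
      rcases hσ i hi with h | h <;> rw [h] <;> norm_num
    · rw [if_neg hi]; norm_num
  · intro i hi
    rw [g0v_apply, if_pos hi]

lemma g0v_add_single_mem_Gface {I : Finset (Fin d)} {σ : Fin d → ℝ}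
    (hσ : ∀ i ∈ I, σ i = 1 ∨ σ i = -1) {l : Fin d} (hl : l ∉ I) (a : ℝ) (ha : |a| ≤ 1) :
    g0v I σ + a • (EuclideanSpace.single l (1:ℝ) : Eu d) ∈ Gface I σ := by
  constructor
  · intro i
    rw [add_apply', single_apply', g0v_apply]
    by_cases hil : i = l
    · subst hil
      rw [if_neg hl, if_pos rfl]
      simpa using ha
    · rw [if_neg hil, add_zero]
      by_cases hi : i ∈ I
      · rw [if_pos hi]
        rcases hσ i hi with h | h <;> rw [h] <;> norm_num
      · rw [if_neg hi]; norm_num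
  · intro i hi
    rw [add_apply', single_apply', g0v_apply, if_pos hi,
      if_neg (fun h : i = l => hl (h ▸ hi)), add_zero]

lemma pvec_mem_Sface {k : ℝ} {J : Finset (Fin d)} {σ : Fin d → ℝ} {i : Fin d} (hi : i ∈ J) :
    pvec k σ i ∈ Sface k J σ := ⟨i, hi, rfl⟩

lemma ker_le_vectorSpan (hd : 1 ≤ d) {k : ℝ} (hk0 : 0 < k)
    {J : Finset (Fin d)} {j : Fin d} {σ : Fin d → ℝ} (hj : j ∉ J) (hJne : J.Nonempty)
    (hσ : ∀ i ∈ insert j J, σ i = 1 ∨ σ i = -1)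
    (hfrac0 : 0 < k - ⌊k⌋₊) (hm : J.card = ⌊k⌋₊) :
    LinearMap.ker (dotL (ucan k J j σ))
      ≤ vectorSpan ℝ (Gface (insert j J) σ ∪ Sface k J σ) := by
  classical
  set I := insert j J with hI
  set u := ucan k J j σ with hu
  intro v hv
  rw [LinearMap.mem_ker, dotL_apply] at hv
  obtain ⟨i0, hi0⟩ := hJne
  set g0 : Eu d := g0v I σ with hg0
  set p : Fin d → Eu d := pvec k σ with hp
  have hσJ : ∀ i ∈ J, σ i = 1 ∨ σ i = -1 := fun i hi => hσ i (Finset.mem_insert_of_mem hi)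
  have hσsq : ∀ i ∈ I, σ i * σ i = 1 := by
    intro i hi
    rcases hσ i hi with h | h <;> rw [h] <;> norm_num
  -- membership facts
  have hg0mem : g0 ∈ Gface I σ := g0v_mem_Gface (fun i hi => hσ i hi)
  have hVS : ∀ x y : Eu d, x ∈ Gface I σ ∪ Sface k J σ → y ∈ Gface I σ ∪ Sface k J σ →
      x - y ∈ vectorSpan ℝ (Gface I σ ∪ Sface k J σ) := fun x y hx hy =>
    sub_mem_vectorSpan hx hy
  have hbmem : g0 - p i0 ∈ vectorSpan ℝ (Gface I σ ∪ Sface k J σ) :=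
    hVS _ _ (Or.inl hg0mem) (Or.inr (pvec_mem_Sface hi0))
  have hsinglemem : ∀ l, l ∉ I →
      (EuclideanSpace.single l (1:ℝ) : Eu d) ∈ vectorSpan ℝ (Gface I σ ∪ Sface k J σ) := by
    intro l hl
    have h1 := hVS _ _ (Or.inl (g0v_add_single_mem_Gface (fun i hi => hσ i hi) hl 1 (by norm_num)))
      (Or.inl hg0mem)
    have h2 : g0v I σ + (1:ℝ) • (EuclideanSpace.single l (1:ℝ) : Eu d) - g0v I σ
        = (EuclideanSpace.single l (1:ℝ) : Eu d) := by
      rw [one_smul]; abel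
    rwa [h2] at h1
  have hamem : ∀ i ∈ J, p i - p i0 ∈ vectorSpan ℝ (Gface I σ ∪ Sface k J σ) := fun i hi =>
    hVS _ _ (Or.inr (pvec_mem_Sface hi)) (Or.inr (pvec_mem_Sface hi0))
  -- coefficients
  set c : ℝ := σ j * v j with hc
  set b : Eu d := g0 - p i0 with hb
  set r : Fin d → ℝ := fun i => v i - c * b i with hr
  have hbcoord : ∀ l, b l = (if l ∈ I then σ l else 0) - (if l = i0 then k * σ i0 else 0) := by
    intro l
    rw [hb, sub_apply', hg0, g0v_apply, hp, pvec_apply]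
  have hji0 : j ≠ i0 := fun h => hj (h ▸ hi0)
  -- the sum identity
  have hsum : ∑ i ∈ J, σ i * r i = 0 := by
    have h1 : ∀ i ∈ J, σ i * b i = 1 - (if i = i0 then k else 0) := by
      intro i hi
      rw [hbcoord i, if_pos (Finset.mem_insert_of_mem hi), mul_sub,
        hσsq i (Finset.mem_insert_of_mem hi)]
      congr 1
      by_cases h : i = i0
      · subst h; rw [if_pos rfl, if_pos rfl, ← mul_assoc, mul_comm (σ i) k, mul_assoc,
          hσsq i (Finset.mem_insert_of_mem hi), mul_one]
      · rw [if_neg h, if_neg h, mul_zero]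
    have h2 : ∑ i ∈ J, σ i * b i = J.card - k := by
      rw [Finset.sum_congr rfl h1, Finset.sum_sub_distrib, Finset.sum_const,
        Finset.sum_ite_eq' J i0 (fun _ => k), if_pos hi0]
      simp
    have h3 : ∑ i ∈ J, σ i * v i = -(k - ⌊k⌋₊) * c := by
      have hdotv : ∑ l, u l * v l = 0 := hv
      have hsplit : ∑ l, u l * v l = ∑ l ∈ I, u l * v l := by
        rw [Finset.sum_subset (Finset.subset_univ I)]
        intro l _ hl
        rw [hu, ucan_apply_zero hl, zero_mul]
      have hIsum : ∑ l ∈ I, u l * v l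
          = (k - ⌊k⌋₊) * σ j * v j + ∑ l ∈ J, σ l * v l := by
        rw [hI, Finset.sum_insert hj]
        congr 1
        · rw [hu, ucan_apply_j hj]
        · apply Finset.sum_congr rfl
          intro l hl
          rw [hu, ucan_apply_J hl]
      have := hsplit ▸ hdotv
      rw [hIsum] at this
      rw [hc]
      linarith [this]
    have hrsum : ∑ i ∈ J, σ i * r i = ∑ i ∈ J, σ i * v i - c * ∑ i ∈ J, σ i * b i := by
      rw [Finset.mul_sum, ← Finset.sum_sub_distrib]
      apply Finset.sum_congr rfl
      intro i _
      rw [hr]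
      ring
    rw [hrsum, h2, h3, hm]
    ring
  -- the decomposition identity
  have hkey : v = c • b + (∑ l ∈ Iᶜ, v l • (EuclideanSpace.single l (1:ℝ) : Eu d))
      + ∑ i ∈ J, ((σ i * r i) / k) • (p i - p i0) := by
    ext l
    rw [add_apply', add_apply', smul_apply', sum_single_apply]
    have hS3 : (∑ i ∈ J, ((σ i * r i) / k) • (p i - p i0)) l
        = if l ∈ J then r l else 0 := by
      rw [WithLp.ofLp_sum, Finset.sum_apply]
      have hterm : ∀ i ∈ J, (((σ i * r i) / k) • (p i - p i0)) l
          = ((σ i * r i) / k) * (if l = i then k * σ i else 0)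
            - ((σ i * r i) / k) * (if l = i0 then k * σ i0 else 0) := by
        intro i _
        rw [smul_apply', sub_apply', hp, pvec_apply, pvec_apply]
        ring
      rw [Finset.sum_congr rfl hterm, Finset.sum_sub_distrib]
      have hpart2 : ∑ i ∈ J, ((σ i * r i) / k) * (if l = i0 then k * σ i0 else 0) = 0 := by
        rw [← Finset.sum_mul]
        have : ∑ i ∈ J, (σ i * r i) / k = 0 := by
          rw [← Finset.sum_div, hsum, zero_div]
        rw [this, zero_mul]
      rw [hpart2, sub_zero]
      have hpart1 : ∀ i ∈ J, ((σ i * r i) / k) * (if l = i then k * σ i else 0)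
          = if l = i then r i else 0 := by
        intro i hi
        by_cases h : l = i
        · rw [if_pos h, if_pos h]
          have hs := hσsq i (Finset.mem_insert_of_mem hi)
          field_simp
          linear_combination (v i - σ j * v j * b i) * hs
        · rw [if_neg h, if_neg h, mul_zero]
      rw [Finset.sum_congr rfl hpart1]
      by_cases hl : l ∈ J
      · rw [Finset.sum_eq_single_of_mem l hl
          (fun i _ hne => by rw [if_neg (fun hh => hne hh.symm)]), if_pos rfl, if_pos hl]
      · rw [if_neg hl, Finset.sum_eq_zero]
        intro i hi
        rw [if_neg]
        intro hh
        exact hl (hh ▸ hi)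
    rw [hS3]
    by_cases hlJ : l ∈ J
    · -- c * b l + 0 + r l = v l
      rw [if_neg (Finset.notMem_compl.2 (Finset.mem_insert_of_mem hlJ)), if_pos hlJ, hr]
      ring
    · by_cases hlj : l = j
      · subst hlj
        rw [if_neg (Finset.notMem_compl.2 (Finset.mem_insert_self l J)), if_neg hlJ]
        rw [hbcoord l, if_pos (Finset.mem_insert_self l J),
          if_neg (fun h : l = i0 => hlJ (by rw [h]; exact hi0))]
        rw [hc]
        have hs := hσsq l (Finset.mem_insert_self l J)
        linear_combination (- v l) * hs
      · have hlI : l ∉ I := by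
          intro h
          rcases Finset.mem_insert.1 h with h | h
          exacts [hlj h, hlJ h]
        rw [if_pos (Finset.mem_compl.2 hlI), if_neg hlJ]
        rw [hbcoord l, if_neg hlI,
          if_neg (fun h : l = i0 => hlI (by rw [h]; exact Finset.mem_insert_of_mem hi0))]
        ring
  rw [hkey]
  apply Submodule.add_mem
  apply Submodule.add_mem
  · exact Submodule.smul_mem _ _ hbmem
  · exact Submodule.sum_mem _ (fun l hl =>
      Submodule.smul_mem _ _ (hsinglemem l (Finset.mem_compl.1 hl)))
  · exact Submodule.sum_mem _ (fun i hi => Submodule.smul_mem _ _ (hamem i hi))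

end RhoFacets


namespace RhoFacets
variable {d : ℕ}

section forward
variable (hd : 1 ≤ d) {k : ℝ} (hk1 : 1 < k)
  {J : Finset (Fin d)} {j : Fin d} {σ : Fin d → ℝ} (hj : j ∉ J) (hJne : J.Nonempty)
  (hσ : ∀ i ∈ insert j J, σ i = 1 ∨ σ i = -1)
  (hfrac0 : 0 < k - ⌊k⌋₊) (hfrac1 : k - ⌊k⌋₊ < 1) (hm : J.card = ⌊k⌋₊)

include hd hk1 hj hJne hσ hfrac0 hfrac1 hm

lemma dot_ucan_on_gen :
    ∀ x ∈ Gface (insert j J) σ ∪ Sface k J σ, dot (ucan k J j σ) x = k := by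
  have hk0 : (0:ℝ) < k := lt_trans one_pos hk1
  rintro x (hx | hx)
  · have : dot (ucan k J j σ) x = SU (ucan k J j σ) := by
      rw [dot_eq_SU_iff hx.1]
      intro i hi
      rw [supp_ucan hj hσ hfrac0] at hi
      rw [sg_ucan hj hσ hfrac0 hi]
      exact hx.2 i hi
    rw [this, SU_ucan hj hσ hfrac0 hm]
  · obtain ⟨i, hi, rfl⟩ := hx
    rw [dot_single, ucan_apply_J hi]
    have : σ i * σ i = 1 := by
      rcases hσ i (Finset.mem_insert_of_mem hi) with h | h <;> rw [h] <;> norm_num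
    calc k * σ i * σ i = k * (σ i * σ i) := by ring
      _ = k := by rw [this, mul_one]

lemma SU_eq_ktmax : SU (ucan k J j σ) = k * tmax hd (ucan k J j σ) := by
  rw [SU_ucan hj hσ hfrac0 hm, tmax_ucan hj hσ hfrac0 hfrac1 hd hJne, mul_one]

lemma face_eq_can :
    {x ∈ convexHull ℝ (Aset d k) | dot (ucan k J j σ) x = k}
      = convexHull ℝ (Gface (insert j J) σ ∪ Sface k J σ) := by
  have hk0 : (0:ℝ) < k := lt_trans one_pos hk1
  have h := face_eq hd hk0 (ucan_ne_zero hj hσ hfrac0) (SU_eq_ktmax hd hk1 hj hJne hσ hfrac0 hfrac1 hm)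
  rw [tmax_ucan hj hσ hfrac0 hfrac1 hd hJne, mul_one] at h
  rw [h, Gface_ucan_eq hσ hd hJne hm hj hfrac0 hfrac1,
    Sface_ucan_eq hσ hd hJne hj hfrac0 hfrac1]

lemma isExposed_can :
    IsExposed ℝ (convexHull ℝ (Aset d k))
      (convexHull ℝ (Gface (insert j J) σ ∪ Sface k J σ)) := by
  have hk0 : (0:ℝ) < k := lt_trans one_pos hk1
  have h := isExposed_face hd hk0 (ucan_ne_zero hj hσ hfrac0)
    (SU_eq_ktmax hd hk1 hj hJne hσ hfrac0 hfrac1 hm)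
  rw [tmax_ucan hj hσ hfrac0 hfrac1 hd hJne, mul_one] at h
  rwa [face_eq_can hd hk1 hj hJne hσ hfrac0 hfrac1 hm] at h

lemma nonempty_can :
    (convexHull ℝ (Gface (insert j J) σ ∪ Sface k J σ)).Nonempty := by
  obtain ⟨i0, hi0⟩ := hJne
  exact ⟨pvec k σ i0, subset_convexHull ℝ _ (Or.inr (pvec_mem_Sface hi0))⟩

lemma vectorSpan_can :
    vectorSpan ℝ (convexHull ℝ (Gface (insert j J) σ ∪ Sface k J σ))
      = LinearMap.ker (dotL (ucan k J j σ)) := by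
  have hk0 : (0:ℝ) < k := lt_trans one_pos hk1
  rw [vectorSpan_convexHull']
  apply le_antisymm
  · exact vectorSpan_le_ker (dot_ucan_on_gen hd hk1 hj hJne hσ hfrac0 hfrac1 hm)
  · exact ker_le_vectorSpan hd hk0 hj hJne hσ hfrac0 hm

lemma finrank_can :
    Module.finrank ℝ (vectorSpan ℝ (convexHull ℝ (Gface (insert j J) σ ∪ Sface k J σ)))
      = d - 1 := by
  rw [vectorSpan_can hd hk1 hj hJne hσ hfrac0 hfrac1 hm,
    finrank_ker_dotL (ucan_ne_zero hj hσ hfrac0)]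

end forward

end RhoFacets


namespace RhoFacets
variable {d : ℕ}

lemma eq_sum_single (x : Eu d) : x = ∑ i, x i • (EuclideanSpace.single i (1:ℝ) : Eu d) := by
  ext l
  rw [sum_single_apply]
  simp

lemma clm_eq_dot (l : Eu d →L[ℝ] ℝ) (x : Eu d) :
    l x = dot (WithLp.toLp 2 (fun i => l (EuclideanSpace.single i (1:ℝ)) : Fin d → ℝ)) x := by
  conv_lhs => rw [eq_sum_single x]
  rw [map_sum]
  unfold dot
  apply Finset.sum_congr rfl
  intro i _
  rw [map_smul]
  simp [mul_comm]

lemma vectorSpan_P_top {k : ℝ} :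
    vectorSpan ℝ (convexHull ℝ (Aset d k)) = ⊤ := by
  rw [eq_top_iff]
  intro v _
  have hsingle : ∀ i : Fin d,
      (EuclideanSpace.single i (1:ℝ) : Eu d) ∈ vectorSpan ℝ (convexHull ℝ (Aset d k)) := by
    intro i
    have h1 : (EuclideanSpace.single i (1:ℝ) : Eu d) ∈ hcube d := by
      intro l
      rw [EuclideanSpace.single_apply]
      split <;> norm_num
    have h2 : (0 : Eu d) ∈ hcube d := by
      intro l
      show |(0:ℝ)| ≤ 1
      norm_num
    have hmem := sub_mem_vectorSpan (s := convexHull ℝ (Aset d k))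
      (subset_convexHull ℝ _ (Or.inr h1)) (subset_convexHull ℝ _ (Or.inr h2))
    rwa [sub_zero] at hmem
  have hv : v = ∑ i, v i • (EuclideanSpace.single i (1:ℝ) : Eu d) := eq_sum_single v
  rw [hv]
  exact Submodule.sum_mem _ (fun i _ => Submodule.smul_mem _ _ (hsingle i))

lemma dot_two_supp {j1 j2 : Fin d} (hne : j1 ≠ j2) (a b : ℝ) (x : Eu d) :
    dot (WithLp.toLp 2 (fun l => if l = j1 then a else if l = j2 then b else 0 : Fin d → ℝ)) x
      = a * x j1 + b * x j2 := by
  unfold dot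
  rw [← Finset.sum_subset (Finset.subset_univ ({j1, j2} : Finset (Fin d)))]
  · rw [Finset.sum_pair hne]
    show (if j1 = j1 then a else if j1 = j2 then b else 0) * x j1
        + (if j2 = j1 then a else if j2 = j2 then b else 0) * x j2 = a * x j1 + b * x j2
    rw [if_pos (rfl : j1 = j1), if_neg (fun h : j2 = j1 => hne h.symm), if_pos (rfl : j2 = j2)]
  · intro x_1 _ hl
    rw [Finset.mem_insert, Finset.mem_singleton] at hl
    push_neg at hl
    show (if x_1 = j1 then a else if x_1 = j2 then b else 0) * x x_1 = 0
    rw [if_neg hl.1, if_neg hl.2, zero_mul]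

theorem backward_main (hd : 1 ≤ d) {k : ℝ} (hk1 : 1 < k) (hkd : k < d)
    (hknotint : ¬ ∃ m : ℤ, (m : ℝ) = k)
    {F : Set (Eu d)} (hexp : IsExposed ℝ (convexHull ℝ (Aset d k)) F) (hne : F.Nonempty)
    (hrank : Module.finrank ℝ (vectorSpan ℝ F) = d - 1) :
    ∃ (I J : Finset (Fin d)) (σ : Fin d → ℝ), I.card = ⌊k⌋₊ + 1 ∧ J ⊆ I ∧ J.card = ⌊k⌋₊ ∧
      (∀ i ∈ I, σ i = 1 ∨ σ i = -1) ∧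
      F = convexHull ℝ (Gface I σ ∪ Sface k J σ) := by
  classical
  have hk0 : (0:ℝ) < k := lt_trans one_pos hk1
  have hkd' : (1:ℝ) < d := lt_trans hk1 hkd
  have hd2 : 2 ≤ d := by exact_mod_cast Nat.one_lt_cast.1 hkd'
  obtain ⟨l, hF⟩ := hexp hne
  set u : Eu d := WithLp.toLp 2 (fun i => l (EuclideanSpace.single i (1:ℝ)) : Fin d → ℝ) with hu
  have hlu : ∀ x, l x = dot u x := fun x => clm_eq_dot l x
  obtain ⟨x0, hx0⟩ := hne
  have hx0' := hF ▸ hx0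
  obtain ⟨hx0P, hx0max⟩ := hx0'
  set M : ℝ := dot u x0 with hM
  have hPle : ∀ y ∈ convexHull ℝ (Aset d k), dot u y ≤ M := by
    intro y hy
    rw [← hlu, hM, ← hlu]
    exact hx0max y hy
  have hFM : F = {x ∈ convexHull ℝ (Aset d k) | dot u x = M} := by
    rw [hF]
    ext x
    constructor
    · rintro ⟨hxP, hxmax⟩
      refine ⟨hxP, le_antisymm (hPle x hxP) ?_⟩
      calc M = l x0 := (hlu x0).symm
        _ ≤ l x := hxmax x0 hx0P
        _ = dot u x := hlu x
    · rintro ⟨hxP, hxM⟩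
      refine ⟨hxP, fun y hy => ?_⟩
      rw [hlu, hlu, hxM]
      exact hPle y hy
  by_cases hu0 : u = 0
  · exfalso
    have hM0 : M = 0 := by rw [hM, hu0]; simp [dot]
    have hFP : F = convexHull ℝ (Aset d k) := by
      rw [hFM, hM0, hu0]
      ext x
      simp [dot]
    rw [hFP, vectorSpan_P_top, finrank_top, finrank_euclideanSpace, Fintype.card_fin] at hrank
    omega
  -- main case
  set t : ℝ := tmax hd u with ht
  have htpos : 0 < t := tmax_pos hd hu0
  -- SU is attained
  have hgsgcube : WithLp.toLp 2 (fun i => sg u i : Fin d → ℝ) ∈ hcube d := by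
    intro i
    show |sg u i| ≤ 1
    rw [abs_sg]
  have hSUle : SU u ≤ M := by
    have h1 : dot u (WithLp.toLp 2 (fun i => sg u i : Fin d → ℝ)) = SU u := by
      unfold dot SU
      exact Finset.sum_congr rfl (fun i _ => mul_sg u i)
    rw [← h1]
    exact hPle _ (subset_convexHull ℝ _ (Or.inr hgsgcube))
  -- k*t is attained
  obtain ⟨i0, hi0T⟩ := Tset_nonempty hd u
  have hktle : k * t ≤ M := by
    have h1 : dot u (pvec k (sg u) i0) = k * t := Sface_dot hd ⟨i0, hi0T, rfl⟩
    rw [← h1]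
    exact hPle _ (subset_convexHull ℝ _ (Or.inl (Sface_mem_cross hd hk0 ⟨i0, hi0T, rfl⟩)))
  have hMle : M ≤ max (SU u) (k * t) := by
    rw [hM, ← innerSL_apply]
    apply hull_le (l := innerSL ℝ u) (M := max (SU u) (k * t)) _ x0 hx0P
    rintro a (ha | ha)
    · rw [innerSL_apply]
      exact le_trans (dot_le_ktmax hd hk0 ha) (le_max_right _ _)
    · rw [innerSL_apply]
      exact le_trans (dot_le_SU ha) (le_max_left _ _)
  rcases lt_trichotomy (SU u) (k * t) with hcase | hcase | hcase
  · -- only the simplex: dimension too small, contradiction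
    exfalso
    have hMkt : M = k * t := le_antisymm (by rwa [max_eq_right hcase.le] at hMle) hktle
    have hAbound : ∀ a ∈ Aset d k, (innerSL ℝ u) a ≤ k * t := by
      rintro a (ha | ha)
      · rw [innerSL_apply]; exact dot_le_ktmax hd hk0 ha
      · rw [innerSL_apply]; exact le_trans (dot_le_SU ha) hcase.le
    have hFsub : F ⊆ convexHull ℝ (Sface k (Tset hd u) (sg u)) := by
      intro x hx
      rw [hFM] at hx
      obtain ⟨hxP, hxM⟩ := hx
      have hmem := mem_convexHull_inter_max hAbound hxP
        (by rw [innerSL_apply, hxM, hMkt])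
      have hsub : {a ∈ Aset d k | (innerSL ℝ u) a = k * t}
          ⊆ convexHull ℝ (Sface k (Tset hd u) (sg u)) := by
        rintro a ⟨(ha | ha), haM⟩
        · exact kcross_face hd hk0 hu0 ha (by rw [← innerSL_apply]; exact haM)
        · exfalso
          rw [innerSL_apply] at haM
          have := dot_le_SU (u := u) ha
          rw [haM] at this
          linarith
      exact convexHull_min hsub (convex_convexHull ℝ _) hmem
    -- dimension bound
    have hdim : Module.finrank ℝ (vectorSpan ℝ F) ≤ ((Tset hd u).erase i0).card := by
      have h1 : vectorSpan ℝ F ≤ Submodule.span ℝ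
          ((fun i => pvec k (sg u) i - pvec k (sg u) i0) '' ↑((Tset hd u).erase i0)) := by
        have h2 : vectorSpan ℝ F ≤ vectorSpan ℝ (Sface k (Tset hd u) (sg u)) := by
          calc vectorSpan ℝ F ≤ vectorSpan ℝ (convexHull ℝ (Sface k (Tset hd u) (sg u))) :=
              vectorSpan_mono ℝ hFsub
            _ = vectorSpan ℝ (Sface k (Tset hd u) (sg u)) := vectorSpan_convexHull' _
        refine le_trans h2 ?_
        rw [vectorSpan_def, Submodule.span_le]
        rintro v ⟨x, ⟨i, hi, rfl⟩, y, ⟨i', hi', rfl⟩, rfl⟩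
        have hq : ∀ i'' ∈ Tset hd u, pvec k (sg u) i'' - pvec k (sg u) i0 ∈ Submodule.span ℝ
            ((fun i => pvec k (sg u) i - pvec k (sg u) i0) '' ↑((Tset hd u).erase i0)) := by
          intro i'' hi''
          by_cases h : i'' = i0
          · subst h
            rw [sub_self]
            exact Submodule.zero_mem _
          · exact Submodule.subset_span ⟨i'', Finset.mem_erase.2 ⟨h, hi''⟩, rfl⟩
        rw [SetLike.mem_coe]
        show ((k * sg u i) • EuclideanSpace.single i (1:ℝ) : Eu d)
            - ((k * sg u i') • EuclideanSpace.single i' (1:ℝ) : Eu d) ∈ _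
        rw [show ((k * sg u i) • EuclideanSpace.single i (1:ℝ) : Eu d)
            - ((k * sg u i') • EuclideanSpace.single i' (1:ℝ) : Eu d)
            = (pvec k (sg u) i - pvec k (sg u) i0) - (pvec k (sg u) i' - pvec k (sg u) i0) from by
          unfold pvec; abel]
        exact Submodule.sub_mem _ (hq i hi) (hq i' hi')
      exact le_trans (Submodule.finrank_mono h1) (finrank_span_image_le _ _)
    rw [hrank] at hdim
    have hTcard : (Tset hd u).card ≤ d := le_trans (Finset.card_le_univ _) (by simp)
    have hTd : (Tset hd u).card = d := by
      have herase : ((Tset hd u).erase i0).card = (Tset hd u).card - 1 :=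
        Finset.card_erase_of_mem hi0T
      omega
    have hTuniv : Tset hd u = Finset.univ := Finset.eq_univ_of_card _ (by simp [hTd])
    have hSUd : SU u = d * t := by
      unfold SU
      have hall : ∀ i ∈ (Finset.univ : Finset (Fin d)), |u i| = t := fun i _ => by
        have : i ∈ Tset hd u := hTuniv ▸ Finset.mem_univ i
        exact (mem_Tset hd).1 this
      rw [(Finset.sum_congr rfl hall :
        ∑ i, |u i| = ∑ _i : Fin d, t), Finset.sum_const]
      simp [mul_comm]
    rw [hSUd] at hcase
    have : (d:ℝ) < k := by
      have := lt_of_mul_lt_mul_right hcase htpos.le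
      exact this
    linarith
  · -- the real case
    have hMkt : M = k * t := le_antisymm (by rwa [hcase, max_self] at hMle) hktle
    have hFface := face_eq hd hk0 hu0 hcase
    rw [← ht, ← hMkt, ← hFM] at hFface
    -- classify by the slack set
    set sfin := supp u \ Tset hd u with hsfin
    have hTsub : Tset hd u ⊆ supp u := Tset_subset_supp hd hu0
    rcases Nat.lt_trichotomy sfin.card 1 with hs | hs | hs
    · -- card 0 : k integer, contradiction
      exfalso
      have h0 : sfin = ∅ := Finset.card_eq_zero.1 (by omega)
      have hsuppT : supp u = Tset hd u :=
        Finset.Subset.antisymm (by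
          intro i hi
          by_contra hiT
          have : i ∈ sfin := Finset.mem_sdiff.2 ⟨hi, hiT⟩
          rw [h0] at this
          exact absurd this (Finset.notMem_empty i)) hTsub
      have hSUat : SU u = (Tset hd u).card * t := by
        unfold SU
        rw [← Finset.sum_subset (Finset.subset_univ (Tset hd u)) (fun i _ hi => by
          have : i ∉ supp u := by rwa [hsuppT]
          rw [mem_supp, not_not] at this
          rw [this, abs_zero])]
        rw [(Finset.sum_congr rfl (fun i hi => (mem_Tset hd).1 hi) :
          ∑ i ∈ Tset hd u, |u i| = ∑ _i ∈ Tset hd u, t), Finset.sum_const]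
        simp [mul_comm]
      rw [hSUat] at hcase
      have hkint : ((Tset hd u).card : ℝ) = k := (mul_right_cancel₀ htpos.ne' hcase)
      exact hknotint ⟨(Tset hd u).card, by exact_mod_cast hkint⟩
    · -- card 1 : the good case
      obtain ⟨j, hj⟩ := Finset.card_eq_one.1 hs
      have hjmem : j ∈ sfin := by rw [hj]; exact Finset.mem_singleton_self j
      have hjsupp : j ∈ supp u := (Finset.mem_sdiff.1 hjmem).1
      have hjT : j ∉ Tset hd u := (Finset.mem_sdiff.1 hjmem).2
      have hIins : supp u = insert j (Tset hd u) := by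
        ext i
        rw [Finset.mem_insert]
        constructor
        · intro hi
          by_cases hiT : i ∈ Tset hd u
          · exact Or.inr hiT
          · left
            have : i ∈ sfin := Finset.mem_sdiff.2 ⟨hi, hiT⟩
            rw [hj] at this
            exact Finset.mem_singleton.1 this
        · rintro (rfl | hi)
          exacts [hjsupp, hTsub hi]
      -- |u j| = (k - a) t with a = card Tset
      set a := (Tset hd u).card with ha
      have hSUsplit : SU u = |u j| + a * t := by
        unfold SU
        rw [← Finset.sum_subset (Finset.subset_univ (supp u)) (fun i _ hi => by
          rw [mem_supp, not_not] at hi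
          rw [hi, abs_zero])]
        rw [hIins, Finset.sum_insert hjT]
        congr 1
        rw [(Finset.sum_congr rfl (fun i hi => (mem_Tset hd).1 hi) :
          ∑ i ∈ Tset hd u, |u i| = ∑ _i ∈ Tset hd u, t), Finset.sum_const]
        simp [mul_comm, ha]
      have huj : |u j| = (k - a) * t := by
        rw [hcase] at hSUsplit
        linarith
      have hujpos : 0 < |u j| := abs_pos.2 (mem_supp.1 hjsupp)
      have hujlt : |u j| < t := by
        rcases lt_or_eq_of_le (abs_le_tmax hd u j) with h | h
        · exact h
        · exact absurd ((mem_Tset hd).2 h) hjT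
      have hak : (a : ℝ) < k := by nlinarith
      have hka : k < a + 1 := by nlinarith
      have hfloor : ⌊k⌋₊ = a := by
        rw [Nat.floor_eq_iff hk0.le]
        constructor
        · exact hak.le
        · exact_mod_cast hka
      refine ⟨supp u, Tset hd u, sg u, ?_, hTsub, ?_, ?_, ?_⟩
      · rw [hIins, Finset.card_insert_of_notMem hjT, hfloor]
      · rw [hfloor]
      · exact fun i _ => sg_cases u i
      · exact hFface
    · -- card ≥ 2 : dimension too small, contradiction
      exfalso
      obtain ⟨j1, hj1, j2, hj2, hj12⟩ := Finset.one_lt_card.1 hs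
      have hj1supp : j1 ∈ supp u := (Finset.mem_sdiff.1 hj1).1
      have hj2supp : j2 ∈ supp u := (Finset.mem_sdiff.1 hj2).1
      have hj1T : j1 ∉ Tset hd u := (Finset.mem_sdiff.1 hj1).2
      have hj2T : j2 ∉ Tset hd u := (Finset.mem_sdiff.1 hj2).2
      set vlam : Eu d := WithLp.toLp 2 (fun l => if l = j1 then |u j2| * u j1
        else if l = j2 then -(|u j1| * u j2) else 0 : Fin d → ℝ) with hvlam
      have hvlamdot : ∀ x : Eu d, dot vlam x = |u j2| * u j1 * x j1 - |u j1| * u j2 * x j2 := by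
        intro x
        rw [hvlam, dot_two_supp hj12]
        ring
      have hgenvanish : ∀ x ∈ Gface (supp u) (sg u) ∪ Sface k (Tset hd u) (sg u),
          dot vlam x = 0 := by
        rintro x (hx | hx)
        · rw [hvlamdot, hx.2 j1 hj1supp, hx.2 j2 hj2supp, mul_assoc, mul_assoc,
            mul_sg, mul_sg]
          ring
        · obtain ⟨i, hi, rfl⟩ := hx
          rw [hvlamdot]
          rw [single_apply', single_apply']
          rw [if_neg (fun h : j1 = i => hj1T (h ▸ hi)), if_neg (fun h : j2 = i => hj2T (h ▸ hi))]
          ring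
      have hgendot : ∀ x ∈ Gface (supp u) (sg u) ∪ Sface k (Tset hd u) (sg u),
          dot u x = k * t := by
        rintro x (hx | hx)
        · rw [(dot_eq_SU_iff hx.1).2 hx.2, hcase]
        · exact Sface_dot hd hx
      have hWle : vectorSpan ℝ F ≤ LinearMap.ker (dotL u) ⊓ LinearMap.ker (dotL vlam) := by
        rw [hFface, vectorSpan_convexHull']
        exact le_inf (vectorSpan_le_ker hgendot) (vectorSpan_le_ker hgenvanish)
      -- strict inequality
      set w : Eu d := WithLp.toLp 2 (fun l => if l = j1 then u j2 else if l = j2 then -(u j1) else 0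
        : Fin d → ℝ) with hw
      have hwker : w ∈ LinearMap.ker (dotL u) := by
        rw [LinearMap.mem_ker, dotL_apply]
        have : dot u w = dot w u := dot_comm u w
        rw [this, hw, dot_two_supp hj12]
        ring
      have hwnot : w ∉ LinearMap.ker (dotL vlam) := by
        rw [LinearMap.mem_ker, dotL_apply]
        have hdvw : dot vlam w = u j1 * u j2 * (|u j1| + |u j2|) := by
          rw [hvlamdot]
          have hw1 : w j1 = u j2 := by
            show (if j1 = j1 then u j2 else if j1 = j2 then -(u j1) else 0) = u j2
            rw [if_pos rfl]
          have hw2 : w j2 = -(u j1) := by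
            show (if j2 = j1 then u j2 else if j2 = j2 then -(u j1) else 0) = -(u j1)
            rw [if_neg (fun h : j2 = j1 => hj12 h.symm), if_pos (rfl : j2 = j2)]
          rw [hw1, hw2]
          ring
        rw [hdvw]
        refine mul_ne_zero (mul_ne_zero (mem_supp.1 hj1supp) (mem_supp.1 hj2supp)) ?_
        have h1 : 0 < |u j1| := abs_pos.2 (mem_supp.1 hj1supp)
        have h2 : 0 ≤ |u j2| := abs_nonneg (u j2)
        exact ne_of_gt (by linarith)
      have hltlt : LinearMap.ker (dotL u) ⊓ LinearMap.ker (dotL vlam)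
          < LinearMap.ker (dotL u) := by
        apply lt_of_le_of_ne inf_le_left
        intro heq
        have hwin : w ∈ LinearMap.ker (dotL u) ⊓ LinearMap.ker (dotL vlam) := by
          rw [heq]; exact hwker
        exact hwnot (Submodule.mem_inf.1 hwin).2
      have hfr := Submodule.finrank_lt_finrank_of_lt hltlt
      rw [finrank_ker_dotL hu0] at hfr
      have hle2 := Submodule.finrank_mono hWle
      rw [hrank] at hle2
      omega
  · -- only the cube : dimension too small, contradiction
    exfalso
    have hMSU : M = SU u := le_antisymm (by rwa [max_eq_left hcase.le] at hMle) hSUle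
    have hAbound : ∀ a ∈ Aset d k, (innerSL ℝ u) a ≤ SU u := by
      rintro a (ha | ha)
      · rw [innerSL_apply]; exact le_trans (dot_le_ktmax hd hk0 ha) hcase.le
      · rw [innerSL_apply]; exact dot_le_SU ha
    have hFsub : F ⊆ convexHull ℝ (Gface (supp u) (sg u)) := by
      intro x hx
      rw [hFM] at hx
      obtain ⟨hxP, hxM⟩ := hx
      have hmem := mem_convexHull_inter_max hAbound hxP
        (by rw [innerSL_apply, hxM, hMSU])
      have hsub : {a ∈ Aset d k | (innerSL ℝ u) a = SU u}
          ⊆ Gface (supp u) (sg u) := by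
        rintro a ⟨(ha | ha), haM⟩
        · exfalso
          rw [innerSL_apply] at haM
          have := dot_le_ktmax hd hk0 (u := u) ha
          rw [haM] at this
          linarith
        · rw [innerSL_apply] at haM
          exact ⟨ha, (dot_eq_SU_iff ha).1 haM⟩
      exact convexHull_min (le_trans hsub (subset_convexHull ℝ _)) (convex_convexHull ℝ _) hmem
    have hdim : Module.finrank ℝ (vectorSpan ℝ F) ≤ ((supp u)ᶜ).card := by
      have h1 : vectorSpan ℝ F ≤ Submodule.span ℝ
          ((fun i => (EuclideanSpace.single i (1:ℝ) : Eu d)) '' ↑((supp u)ᶜ)) := by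
        have h2 : vectorSpan ℝ F ≤ vectorSpan ℝ (Gface (supp u) (sg u)) := by
          calc vectorSpan ℝ F ≤ vectorSpan ℝ (convexHull ℝ (Gface (supp u) (sg u))) :=
              vectorSpan_mono ℝ hFsub
            _ = vectorSpan ℝ (Gface (supp u) (sg u)) := vectorSpan_convexHull' _
        refine le_trans h2 ?_
        rw [vectorSpan_def, Submodule.span_le]
        rintro v ⟨x, hx, y, hy, rfl⟩
        rw [SetLike.mem_coe]
        show x - y ∈ _
        apply mem_span_singles
        intro i hi
        rw [Finset.mem_compl, not_not] at hi
        rw [sub_apply', hx.2 i hi, hy.2 i hi, sub_self]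
      exact le_trans (Submodule.finrank_mono h1) (finrank_span_image_le _ _)
    rw [hrank] at hdim
    have hscard : (supp u).card ≤ 1 := by
      have := Finset.card_compl (supp u)
      have hcardle : (supp u).card ≤ d := le_trans (Finset.card_le_univ _) (by simp)
      rw [Finset.card_compl] at hdim
      simp only [Fintype.card_fin] at hdim
      omega
    obtain ⟨i1, hi1⟩ := exists_ne_of_ne_zero hu0
    have hi1supp : i1 ∈ supp u := mem_supp.2 hi1
    have hsupp1 : supp u = {i1} := by
      apply Finset.eq_singleton_iff_unique_mem.2
      refine ⟨hi1supp, fun x hx => ?_⟩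
      by_contra hne'
      have : 2 ≤ (supp u).card := Finset.one_lt_card.2 ⟨x, hx, i1, hi1supp, hne'⟩
      omega
    have hSUi1 : SU u = |u i1| := by
      unfold SU
      rw [← Finset.sum_subset (Finset.subset_univ (supp u)) (fun i _ hi => by
        rw [mem_supp, not_not] at hi
        rw [hi, abs_zero]), hsupp1, Finset.sum_singleton]
    have hti1 : t ≤ |u i1| := by
      obtain ⟨i', hi'⟩ := exists_tmax hd u
      have hteq : t = |u i'| := by rw [ht]; exact hi'
      by_cases h : i' = i1
      · rw [hteq, h]
      · exfalso
        have hz : u i' = 0 := by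
          by_contra hne'
          have hmm : i' ∈ supp u := mem_supp.2 hne'
          rw [hsupp1, Finset.mem_singleton] at hmm
          exact h hmm
        rw [hz, abs_zero] at hteq
        rw [hteq] at htpos
        exact lt_irrefl _ htpos
    -- k * t < SU = |u i1| ≤ t : contradiction with k > 1
    rw [hSUi1] at hcase
    nlinarith [abs_le_tmax hd u i1]

end RhoFacets


namespace RhoFacets
variable {d : ℕ}

lemma isExposed_smul {A B : Set (Eu d)} {c : ℝ} (hc : 0 < c) (h : IsExposed ℝ A B) :
    IsExposed ℝ (c • A) (c • B) := by
  intro hne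
  have hBne : B.Nonempty := by
    obtain ⟨x, y, hy, rfl⟩ := hne
    exact ⟨y, hy⟩
  obtain ⟨l, hl⟩ := h hBne
  refine ⟨l, ?_⟩
  ext x
  constructor
  · rintro ⟨y, hy, rfl⟩
    rw [hl] at hy
    obtain ⟨hyA, hymax⟩ := hy
    refine ⟨Set.smul_mem_smul_set hyA, ?_⟩
    rintro z ⟨z', hz', rfl⟩
    have h1 : l (c • z') = c * l z' := by rw [map_smul]; rfl
    have h2 : l (c • y) = c * l y := by rw [map_smul]; rfl
    rw [h1, h2]
    exact mul_le_mul_of_nonneg_left (hymax z' hz') hc.le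
  · rintro ⟨⟨y, hyA, rfl⟩, hmax⟩
    refine Set.smul_mem_smul_set ?_
    rw [hl]
    refine ⟨hyA, fun z hz => ?_⟩
    have h1 := hmax (c • z) (Set.smul_mem_smul_set hz)
    have h2 : l (c • z) = c * l z := by rw [map_smul]; rfl
    have h3 : l (c • y) = c * l y := by rw [map_smul]; rfl
    rw [h2, h3] at h1
    exact le_of_mul_le_mul_left h1 hc

lemma vectorSpan_smul_set {s : Set (Eu d)} {c : ℝ} (hc : c ≠ 0) :
    vectorSpan ℝ (c • s) = vectorSpan ℝ s := by
  apply le_antisymm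
  · rw [vectorSpan_def, Submodule.span_le]
    rintro v ⟨x, ⟨x', hx', rfl⟩, y, ⟨y', hy', rfl⟩, rfl⟩
    rw [SetLike.mem_coe]
    show c • x' - c • y' ∈ _
    rw [← smul_sub]
    exact Submodule.smul_mem _ _ (sub_mem_vectorSpan hx' hy')
  · rw [vectorSpan_def, Submodule.span_le]
    rintro v ⟨x, hx, y, hy, rfl⟩
    rw [SetLike.mem_coe]
    show x - y ∈ _
    have h1 : x - y = c⁻¹ • (c • x - c • y) := by
      rw [smul_sub, smul_smul, smul_smul, inv_mul_cancel₀ hc, one_smul, one_smul]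
    rw [h1]
    exact Submodule.smul_mem _ _
      (sub_mem_vectorSpan (Set.smul_mem_smul_set hx) (Set.smul_mem_smul_set hy))

lemma smul_smul_set_inv {c : ℝ} (hc : c ≠ 0) (s : Set (Eu d)) : c • c⁻¹ • s = s := by
  rw [smul_smul, mul_inv_cancel₀ hc, one_smul]

lemma inv_smul_smul_set {c : ℝ} (hc : c ≠ 0) (s : Set (Eu d)) : c⁻¹ • c • s = s := by
  rw [smul_smul, inv_mul_cancel₀ hc, one_smul]

/-- the facet set of a scaled body is the scaled facet set -/
lemma facet_set_smul {k : ℝ} (hk : 0 < k) (A : Set (Eu d)) :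
    {F : Set (Eu d) | IsExposed ℝ (k • A) F ∧ F.Nonempty ∧
        Module.finrank ℝ (vectorSpan ℝ F) = d - 1}
      = (fun F => k • F) '' {F : Set (Eu d) | IsExposed ℝ A F ∧ F.Nonempty ∧
        Module.finrank ℝ (vectorSpan ℝ F) = d - 1} := by
  ext F
  constructor
  · rintro ⟨hexp, hne, hrank⟩
    refine ⟨k⁻¹ • F, ⟨?_, ?_, ?_⟩, smul_smul_set_inv hk.ne' F⟩
    · have := isExposed_smul (c := k⁻¹) (by positivity) hexp
      rwa [inv_smul_smul_set hk.ne'] at this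
    · obtain ⟨x, hx⟩ := hne
      exact ⟨k⁻¹ • x, Set.smul_mem_smul_set hx⟩
    · rwa [vectorSpan_smul_set (by positivity : (k:ℝ)⁻¹ ≠ 0)]
  · rintro ⟨G, ⟨hexp, hne, hrank⟩, rfl⟩
    refine ⟨isExposed_smul hk hexp, ?_, ?_⟩
    · obtain ⟨x, hx⟩ := hne
      exact ⟨k • x, Set.smul_mem_smul_set hx⟩
    · rwa [vectorSpan_smul_set hk.ne']

lemma smul_set_injective {c : ℝ} (hc : c ≠ 0) :
    Function.Injective (fun F : Set (Eu d) => c • F) := by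
  intro F G h
  have := congrArg (fun s => c⁻¹ • s) h
  simpa [inv_smul_smul_set hc] using this

end RhoFacets


namespace RhoFacets
variable {d : ℕ}

lemma exists_insert_form {I J : Finset (Fin d)} {n : ℕ} (hJI : J ⊆ I)
    (hI : I.card = n + 1) (hJ : J.card = n) : ∃ j, j ∉ J ∧ I = insert j J := by
  classical
  have hsd : (I \ J).card = 1 := by
    rw [Finset.card_sdiff_of_subset hJI, hI, hJ]
    omega
  obtain ⟨j, hj⟩ := Finset.card_eq_one.1 hsd
  have hjmem : j ∈ I \ J := by rw [hj]; exact Finset.mem_singleton_self j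
  have hjI : j ∈ I := (Finset.mem_sdiff.1 hjmem).1
  have hjJ : j ∉ J := (Finset.mem_sdiff.1 hjmem).2
  refine ⟨j, hjJ, ?_⟩
  ext i
  rw [Finset.mem_insert]
  constructor
  · intro hi
    by_cases hiJ : i ∈ J
    · exact Or.inr hiJ
    · left
      have : i ∈ I \ J := Finset.mem_sdiff.2 ⟨hi, hiJ⟩
      rw [hj] at this
      exact Finset.mem_singleton.1 this
  · rintro (rfl | hi)
    exacts [hjI, hJI hi]

lemma dot_sub_left (x y u : Eu d) : dot (x - y) u = dot x u - dot y u := by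
  unfold dot
  rw [← Finset.sum_sub_distrib]
  apply Finset.sum_congr rfl
  intro i _
  rw [sub_apply']
  ring

lemma dot_smul_left (c : ℝ) (x u : Eu d) : dot (c • x) u = c * dot x u := by
  unfold dot
  rw [Finset.mul_sum]
  apply Finset.sum_congr rfl
  intro i _
  rw [smul_apply']
  ring

lemma eq_smul_of_ker_eq {u v : Eu d} (hu : u ≠ 0)
    (h : LinearMap.ker (dotL u) = LinearMap.ker (dotL v)) :
    ∃ c : ℝ, v = c • u := by
  set c := dot u v / dot u u with hc
  refine ⟨c, ?_⟩
  set w : Eu d := v - c • u with hw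
  have huw : dot u w = 0 := by
    rw [hw, dot_sub, dot_smul, hc, div_mul_cancel₀ _ (dot_self_ne_zero hu), sub_self]
  have hwker : w ∈ LinearMap.ker (dotL v) := by
    rw [← h, LinearMap.mem_ker, dotL_apply]
    exact huw
  have hvw : dot v w = 0 := by
    rw [LinearMap.mem_ker, dotL_apply] at hwker
    exact hwker
  have hww : dot w w = 0 := by
    nth_rewrite 1 [hw]
    rw [dot_sub_left, dot_smul_left, hvw, huw]
    ring
  have : w = 0 := dot_self_eq_zero hww
  rw [hw] at this
  have := sub_eq_zero.1 this
  exact this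

end RhoFacets


namespace RhoFacets
variable {d : ℕ}

def sB (b : Fin d → Bool) : Fin d → ℝ := fun i => if b i then 1 else -1

lemma sB_cases (b : Fin d → Bool) (i : Fin d) : sB b i = 1 ∨ sB b i = -1 := by
  unfold sB; split <;> simp

lemma sB_inj {b b' : Fin d → Bool} {i : Fin d} (h : sB b i = sB b' i) : b i = b' i := by
  unfold sB at h
  cases hb : b i <;> cases hb' : b' i <;> rw [hb, hb'] at h <;> norm_num at h <;> rfl

lemma Gface_congr {I : Finset (Fin d)} {σ σ' : Fin d → ℝ} (h : ∀ i ∈ I, σ i = σ' i) :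
    Gface I σ = Gface I σ' := by
  unfold Gface
  ext x
  simp only [Set.mem_setOf_eq]
  exact ⟨fun ⟨hx, hf⟩ => ⟨hx, fun i hi => (h i hi) ▸ hf i hi⟩,
    fun ⟨hx, hf⟩ => ⟨hx, fun i hi => (h i hi).symm ▸ hf i hi⟩⟩

lemma Sface_congr {k : ℝ} {J : Finset (Fin d)} {σ σ' : Fin d → ℝ} (h : ∀ i ∈ J, σ i = σ' i) :
    Sface k J σ = Sface k J σ' := by
  unfold Sface
  ext p
  simp only [Set.mem_setOf_eq]
  exact ⟨fun ⟨i, hi, hp⟩ => ⟨i, hi, by rw [hp, h i hi]⟩,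
    fun ⟨i, hi, hp⟩ => ⟨i, hi, by rw [hp, h i hi]⟩⟩

lemma frac_facts {k : ℝ} (hk1 : 1 < k) (hknotint : ¬ ∃ m : ℤ, (m : ℝ) = k) :
    0 < k - ⌊k⌋₊ ∧ k - ⌊k⌋₊ < 1 ∧ 1 ≤ ⌊k⌋₊ := by
  have hk0 : (0:ℝ) ≤ k := le_of_lt (lt_trans one_pos hk1)
  have h1 : (⌊k⌋₊ : ℝ) ≤ k := Nat.floor_le hk0
  have h2 : k < ⌊k⌋₊ + 1 := Nat.lt_floor_add_one k
  have h3 : (⌊k⌋₊ : ℝ) ≠ k := by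
    intro h
    exact hknotint ⟨(⌊k⌋₊ : ℤ), by push_cast; exact h⟩
  refine ⟨by cases lt_or_eq_of_le h1 with
    | inl h => linarith
    | inr h => exact absurd h h3, by linarith, ?_⟩
  exact Nat.le_floor (by exact_mod_cast hk1.le)

def Qset (d m : ℕ) : Set (Finset (Fin d) × Fin d × (Fin d → Bool)) :=
  {p | p.1.card = m + 1 ∧ p.2.1 ∈ p.1 ∧ ∀ l, l ∉ p.1 → p.2.2 l = false}

def Phi (k : ℝ) (p : Finset (Fin d) × Fin d × (Fin d → Bool)) : Set (Eu d) :=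
  convexHull ℝ (Gface p.1 (sB p.2.2) ∪ Sface k (p.1.erase p.2.1) (sB p.2.2))

lemma facetP_eq_image (hd : 1 ≤ d) {k : ℝ} (hk1 : 1 < k) (hkd : k < d)
    (hknotint : ¬ ∃ m : ℤ, (m : ℝ) = k) :
    {F : Set (Eu d) | IsExposed ℝ (convexHull ℝ (Aset d k)) F ∧ F.Nonempty ∧
        Module.finrank ℝ (vectorSpan ℝ F) = d - 1}
      = Phi k '' Qset d ⌊k⌋₊ := by
  classical
  obtain ⟨hfrac0, hfrac1, hm1⟩ := frac_facts hk1 hknotint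
  ext F
  constructor
  · rintro ⟨hexp, hne, hrank⟩
    obtain ⟨I, J, σ, hIcard, hJI, hJcard, hσ, hFeq⟩ :=
      backward_main hd hk1 hkd hknotint hexp hne hrank
    obtain ⟨j, hjJ, hIins⟩ := exists_insert_form hJI (by rw [hIcard, hJcard]) rfl
    set b : Fin d → Bool := fun i => if i ∈ I ∧ σ i = 1 then true else false with hb
    have hboff : ∀ l, l ∉ I → b l = false := by
      intro l hl
      show (if l ∈ I ∧ σ l = 1 then true else false) = false
      rw [if_neg (fun h : l ∈ I ∧ σ l = 1 => hl h.1)]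
    have hsB : ∀ i ∈ I, sB b i = σ i := by
      intro i hi
      rcases hσ i hi with h | h
      · have hbi : b i = true := by
          show (if i ∈ I ∧ σ i = 1 then true else false) = true
          rw [if_pos ⟨hi, h⟩]
        show (if b i then (1:ℝ) else -1) = σ i
        rw [hbi, h]
        simp
      · have hbi : b i = false := by
          show (if i ∈ I ∧ σ i = 1 then true else false) = false
          rw [if_neg (fun hh : i ∈ I ∧ σ i = 1 => by
            have := hh.2
            rw [h] at this
            norm_num at this)]
        show (if b i then (1:ℝ) else -1) = σ i
        rw [hbi, h]
        simp
    have hjI : j ∈ I := by rw [hIins]; exact Finset.mem_insert_self j J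
    have hJerase : I.erase j = J := by rw [hIins, Finset.erase_insert hjJ]
    refine ⟨(I, j, b), ⟨hIcard, hjI, hboff⟩, ?_⟩
    show convexHull ℝ (Gface I (sB b) ∪ Sface k (I.erase j) (sB b)) = F
    rw [hJerase, Gface_congr hsB, Sface_congr (fun i hi => hsB i (hJI hi))]
    exact hFeq.symm
  · rintro ⟨⟨I, j, b⟩, ⟨hIcard, hjI, hboff⟩, rfl⟩
    set J := I.erase j with hJ
    have hjJ : j ∉ J := Finset.notMem_erase j I
    have hIins : insert j J = I := Finset.insert_erase hjI
    have hJcard : J.card = ⌊k⌋₊ := by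
      rw [hJ, Finset.card_erase_of_mem hjI, hIcard]
      omega
    have hJne : J.Nonempty := Finset.card_pos.1 (by omega)
    have hσ : ∀ i ∈ insert j J, sB b i = 1 ∨ sB b i = -1 := fun i _ => sB_cases b i
    have h1 := isExposed_can hd hk1 hjJ hJne hσ hfrac0 hfrac1 hJcard
    have h2 := nonempty_can hd hk1 hjJ hJne hσ hfrac0 hfrac1 hJcard
    have h3 := finrank_can hd hk1 hjJ hJne hσ hfrac0 hfrac1 hJcard
    rw [hIins] at h1 h2 h3
    exact ⟨h1, h2, h3⟩

end RhoFacets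


namespace RhoFacets
variable {d : ℕ}

lemma Phi_injOn (hd : 1 ≤ d) {k : ℝ} (hk1 : 1 < k)
    (hknotint : ¬ ∃ m : ℤ, (m : ℝ) = k) :
    Set.InjOn (Phi k) (Qset d ⌊k⌋₊) := by
  classical
  obtain ⟨hfrac0, hfrac1, hm1⟩ := frac_facts hk1 hknotint
  have hk0 : (0:ℝ) < k := lt_trans one_pos hk1
  rintro ⟨I1, j1, b1⟩ ⟨hI1card, hj1I, hb1off⟩ ⟨I2, j2, b2⟩ ⟨hI2card, hj2I, hb2off⟩ heq
  replace hI1card : I1.card = ⌊k⌋₊ + 1 := hI1card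
  replace hI2card : I2.card = ⌊k⌋₊ + 1 := hI2card
  replace hj1I : j1 ∈ I1 := hj1I
  replace hj2I : j2 ∈ I2 := hj2I
  replace hb1off : ∀ l, l ∉ I1 → b1 l = false := hb1off
  replace hb2off : ∀ l, l ∉ I2 → b2 l = false := hb2off
  -- set up canonical data
  set J1 := I1.erase j1 with hJ1
  set J2 := I2.erase j2 with hJ2
  have hj1J : j1 ∉ J1 := Finset.notMem_erase j1 I1
  have hj2J : j2 ∉ J2 := Finset.notMem_erase j2 I2
  have hI1ins : insert j1 J1 = I1 := Finset.insert_erase hj1I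
  have hI2ins : insert j2 J2 = I2 := Finset.insert_erase hj2I
  have hJ1card : J1.card = ⌊k⌋₊ := by
    rw [hJ1, Finset.card_erase_of_mem hj1I, hI1card]; omega
  have hJ2card : J2.card = ⌊k⌋₊ := by
    rw [hJ2, Finset.card_erase_of_mem hj2I, hI2card]; omega
  have hJ1ne : J1.Nonempty := Finset.card_pos.1 (by omega)
  have hJ2ne : J2.Nonempty := Finset.card_pos.1 (by omega)
  have hσ1 : ∀ i ∈ insert j1 J1, sB b1 i = 1 ∨ sB b1 i = -1 := fun i _ => sB_cases b1 i
  have hσ2 : ∀ i ∈ insert j2 J2, sB b2 i = 1 ∨ sB b2 i = -1 := fun i _ => sB_cases b2 i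
  set u1 := ucan k J1 j1 (sB b1) with hu1
  set u2 := ucan k J2 j2 (sB b2) with hu2
  -- Phi in terms of generators
  have hPhi1 : Phi k (I1, j1, b1)
      = convexHull ℝ (Gface (insert j1 J1) (sB b1) ∪ Sface k J1 (sB b1)) := by
    unfold Phi
    rw [hI1ins]
  have hPhi2 : Phi k (I2, j2, b2)
      = convexHull ℝ (Gface (insert j2 J2) (sB b2) ∪ Sface k J2 (sB b2)) := by
    unfold Phi
    rw [hI2ins]
  -- equal kernels
  have hker : LinearMap.ker (dotL u1) = LinearMap.ker (dotL u2) := by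
    rw [← vectorSpan_can hd hk1 hj1J hJ1ne hσ1 hfrac0 hfrac1 hJ1card,
      ← vectorSpan_can hd hk1 hj2J hJ2ne hσ2 hfrac0 hfrac1 hJ2card,
      ← hPhi1, ← hPhi2, heq]
  have hu1ne : u1 ≠ 0 := ucan_ne_zero hj1J hσ1 hfrac0
  obtain ⟨c, hc⟩ := eq_smul_of_ker_eq hu1ne hker
  -- evaluate at a common point
  have hi0ex := hJ1ne
  obtain ⟨i0, hi0⟩ := hi0ex
  have hx1mem : pvec k (sB b1) i0 ∈ Phi k (I1, j1, b1) := by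
    rw [hPhi1]
    exact subset_convexHull ℝ _ (Or.inr (pvec_mem_Sface hi0))
  have hd1 : dot u1 (pvec k (sB b1) i0) = k :=
    dot_ucan_on_gen hd hk1 hj1J hJ1ne hσ1 hfrac0 hfrac1 hJ1card _
      (Or.inr (pvec_mem_Sface hi0))
  have hd2 : dot u2 (pvec k (sB b1) i0) = k := by
    have hface := face_eq_can hd hk1 hj2J hJ2ne hσ2 hfrac0 hfrac1 hJ2card
    have hx2mem : pvec k (sB b1) i0 ∈ Phi k (I2, j2, b2) := by rw [← heq]; exact hx1mem
    rw [hPhi2, ← hface] at hx2mem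
    exact hx2mem.2
  have hc1 : c = 1 := by
    rw [hc, dot_smul_left, hd1] at hd2
    have h' : c * k = 1 * k := by rw [one_mul]; exact hd2
    exact mul_right_cancel₀ hk0.ne' h'
  rw [hc1, one_smul] at hc
  -- now recover the data
  have hsupp : I1 = I2 := by
    rw [← hI1ins, ← hI2ins, ← supp_ucan hj1J hσ1 hfrac0, ← supp_ucan hj2J hσ2 hfrac0,
      ← hu1, ← hu2, hc]
  have hjj : j1 = j2 := by
    by_contra hne
    have hj1I2 : j1 ∈ I2 := hsupp ▸ hj1I
    have hj1J2 : j1 ∈ J2 := by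
      rw [hJ2, Finset.mem_erase]
      exact ⟨hne, hj1I2⟩
    have h1 : |u2 j1| = 1 := abs_ucan_J hσ2 hj1J2
    have h2 : |u1 j1| = k - ⌊k⌋₊ := abs_ucan_j hj1J hσ1 hfrac0
    rw [hc, h2] at h1
    linarith
  have hJJ : J1 = J2 := by rw [hJ1, hJ2, hsupp, hjj]
  have hbb : b1 = b2 := by
    funext l
    by_cases hlI : l ∈ I1
    · by_cases hlj : l = j1
      · subst hlj
        have e1 : u1 l = (k - ⌊k⌋₊) * sB b1 l := ucan_apply_j hj1J
        have e2 : u2 l = (k - ⌊k⌋₊) * sB b2 l := by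
          rw [hjj]
          exact ucan_apply_j hj2J
        have heqv : (k - ⌊k⌋₊) * sB b1 l = (k - ⌊k⌋₊) * sB b2 l := by
          rw [← e1, ← e2, hc]
        exact sB_inj (mul_left_cancel₀ hfrac0.ne' heqv)
      · have hlJ1 : l ∈ J1 := by
          rw [hJ1, Finset.mem_erase]
          exact ⟨hlj, hlI⟩
        have e1 : u1 l = sB b1 l := ucan_apply_J hlJ1
        have e2 : u2 l = sB b2 l := ucan_apply_J (hJJ ▸ hlJ1)
        have : sB b1 l = sB b2 l := by
          rw [← e1, ← e2, hc]
        exact sB_inj this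
    · exact (hb1off l hlI).trans (hb2off l (hsupp ▸ hlI)).symm
  rw [hsupp, hjj, hbb]

end RhoFacets


namespace RhoFacets
variable {d : ℕ}

def QEquiv (d m : ℕ) : ↥(Qset d m) ≃
    Σ (I : {s : Finset (Fin d) // s.card = m + 1}), (↥(I.1) × (↥(I.1) → Bool)) where
  toFun p := ⟨⟨p.1.1, p.2.1⟩, ⟨⟨p.1.2.1, p.2.2.1⟩, fun i => p.1.2.2 i.1⟩⟩
  invFun q := ⟨(q.1.1, q.2.1.1, fun l => if h : l ∈ q.1.1 then q.2.2 ⟨l, h⟩ else false),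
    ⟨q.1.2, q.2.1.2, fun l hl => dif_neg hl⟩⟩
  left_inv := by
    rintro ⟨⟨I, j, b⟩, hI, hj, hb⟩
    apply Subtype.ext
    show (I, j, fun l => if h : l ∈ I then b l else false) = (I, j, b)
    have : (fun l => if h : l ∈ I then b l else false) = b := by
      funext l
      by_cases h : l ∈ I
      · rw [dif_pos h]
      · rw [dif_neg h]
        exact (hb l h).symm
    rw [this]
  right_inv := by
    rintro ⟨⟨I, hI⟩, ⟨j, hj⟩, f⟩
    show (⟨⟨I, hI⟩, ⟨j, hj⟩, fun i => if h : i.1 ∈ I then f ⟨i.1, h⟩ else false⟩ :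
      Σ (I : {s : Finset (Fin d) // s.card = m + 1}), (↥(I.1) × (↥(I.1) → Bool))) = _
    congr 1
    apply Prod.ext
    · rfl
    · funext i
      show (if h : i.1 ∈ I then f ⟨i.1, h⟩ else false) = f i
      rw [dif_pos i.2]

lemma Qset_ncard (d m : ℕ) :
    (Qset d m).ncard = 2 ^ (m + 1) * d.choose (m + 1) * (m + 1) := by
  classical
  rw [← Nat.card_coe_set_eq, Nat.card_congr (QEquiv d m), Nat.card_eq_fintype_card,
    Fintype.card_sigma]
  have hconst : ∀ I : {s : Finset (Fin d) // s.card = m + 1},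
      Fintype.card (↥(I.1) × (↥(I.1) → Bool)) = (m + 1) * 2 ^ (m + 1) := by
    intro I
    rw [Fintype.card_prod, Fintype.card_coe, Fintype.card_fun, Fintype.card_coe, I.2]
    rfl
  rw [Finset.sum_congr rfl (fun I _ => hconst I), Finset.sum_const, Finset.card_univ,
    Fintype.card_finset_len, Fintype.card_fin]
  rw [smul_eq_mul]
  ring

end RhoFacets



open RhoFacets

/-- For non-integer `k` with `1 < k < d`, the polytope `ρ_{d,k}` has
`2^{⌊k⌋+1} · binom(d,⌊k⌋+1) · (⌊k⌋+1)` facets; more precisely, the facets of `k·ρ_{d,k}`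
are exactly the convex hulls of a `(d-⌊k⌋-1)`-dimensional face `G` of `γ_d` with a simplex
whose vertices are any `⌊k⌋` of the `⌊k⌋+1` points `k σ_i e_i` pulled from the centers of the
facets of `γ_d` incident to `G`. -/
theorem facets_of_rho_nonint (d : ℕ) (hd : 1 ≤ d) (k : ℝ) (hk1 : 1 < k) (hkd : k < d)
    (hknotint : ¬ ∃ m : ℤ, (m : ℝ) = k) :
    {F : Set (EuclideanSpace ℝ (Fin d)) | IsExposed ℝ (rho d k) F ∧ F.Nonempty ∧
        Module.finrank ℝ (vectorSpan ℝ F) = d - 1}.ncard =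
      2 ^ (⌊k⌋₊ + 1) * d.choose (⌊k⌋₊ + 1) * (⌊k⌋₊ + 1) ∧
    ∀ F : Set (EuclideanSpace ℝ (Fin d)),
      (IsExposed ℝ (k • rho d k) F ∧ F.Nonempty ∧
          Module.finrank ℝ (vectorSpan ℝ F) = d - 1) ↔
        ∃ (I J : Finset (Fin d)) (σ : Fin d → ℝ), I.card = ⌊k⌋₊ + 1 ∧ J ⊆ I ∧ J.card = ⌊k⌋₊ ∧
          (∀ i ∈ I, σ i = 1 ∨ σ i = -1) ∧
          F = convexHull ℝ
            ({x ∈ hcube d | ∀ i ∈ I, x i = σ i} ∪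
              {p | ∃ i ∈ J, p = (k * σ i) • EuclideanSpace.single i (1 : ℝ)}) := by
  classical
  have hk0 : (0:ℝ) < k := lt_trans one_pos hk1
  obtain ⟨hfrac0, hfrac1, hm1⟩ := frac_facts hk1 hknotint
  have hP : k • rho d k = convexHull ℝ (Aset d k) := krho_eq hk0.ne'
  constructor
  · have himg := facet_set_smul (d := d) hk0 (rho d k)
    have h2 : {F : Set (EuclideanSpace ℝ (Fin d)) | IsExposed ℝ (k • rho d k) F ∧ F.Nonempty ∧
        Module.finrank ℝ (vectorSpan ℝ F) = d - 1}.ncard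
        = {F : Set (EuclideanSpace ℝ (Fin d)) | IsExposed ℝ (rho d k) F ∧ F.Nonempty ∧
        Module.finrank ℝ (vectorSpan ℝ F) = d - 1}.ncard := by
      rw [himg]
      exact Set.ncard_image_of_injOn ((smul_set_injective hk0.ne').injOn)
    rw [← h2, hP, facetP_eq_image hd hk1 hkd hknotint,
      Set.ncard_image_of_injOn (Phi_injOn hd hk1 hknotint), Qset_ncard]
  · intro F
    rw [hP]
    constructor
    · intro hF
      have hFim : F ∈ Phi k '' Qset d ⌊k⌋₊ := by
        rw [← facetP_eq_image hd hk1 hkd hknotint]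
        exact hF
      obtain ⟨⟨I, j, b⟩, ⟨hIcard, hjI, hboff⟩, rfl⟩ := hFim
      replace hIcard : I.card = ⌊k⌋₊ + 1 := hIcard
      replace hjI : j ∈ I := hjI
      refine ⟨I, I.erase j, sB b, hIcard, Finset.erase_subset _ _, ?_,
        fun i _ => sB_cases b i, ?_⟩
      · rw [Finset.card_erase_of_mem hjI, hIcard]
        omega
      · rfl
    · rintro ⟨I, J, σ, hIcard, hJI, hJcard, hσ, rfl⟩
      obtain ⟨j, hjJ, hIins⟩ := exists_insert_form hJI hIcard hJcard
      have hJne : J.Nonempty := Finset.card_pos.1 (by omega)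
      have hσ' : ∀ i ∈ insert j J, σ i = 1 ∨ σ i = -1 := by
        rw [← hIins]
        exact hσ
      have h1 := isExposed_can hd hk1 hjJ hJne hσ' hfrac0 hfrac1 hJcard
      have h2 := nonempty_can hd hk1 hjJ hJne hσ' hfrac0 hfrac1 hJcard
      have h3 := finrank_can hd hk1 hjJ hJne hσ' hfrac0 hfrac1 hJcard
      rw [← hIins] at h1 h2 h3
      exact ⟨h1, h2, h3⟩
end
end

section
/- Let d ≥ 1 and let k be a real number with 1 ≤ k ≤ d. If k > 1, then for every integer i with 0 ≤ i < d−k the polytopes ρ_{d,k} and γ_d/k have exactly 2^{d−i}·binom(d,i) common i-dimensional exposed faces, and they share no i-dimensional face when d−k ≤ i < d. If k < d, then for every integer i with 0 ≤ i < k−1 the polytopes ρ_{d,k} and β_d have exactly 2^{i+1}·binom(d,i+1) common i-dimensional exposed faces, and they share no i-dimensional face when k−1 ≤ i < d. -/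
open scoped Pointwise

noncomputable section

abbrev Euc (d : ℕ) := EuclideanSpace ℝ (Fin d)



theorem euc_decomp (d : ℕ) (x : Euc d) : x = ∑ j, x j • EuclideanSpace.single j (1:ℝ) := by
  ext i
  rw [WithLp.ofLp_sum, Finset.sum_apply i Finset.univ _]
  have : ∀ j : Fin d, (x j • EuclideanSpace.single j (1:ℝ)) i = x j * (if i = j then 1 else 0) := by
    intro j; rw [PiLp.smul_apply, EuclideanSpace.single_apply]; simp
  simp only [this, mul_ite, mul_one, mul_zero, Finset.sum_ite_eq, Finset.mem_univ, if_true]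

def lfun (d : ℕ) (c : Fin d → ℝ) : Euc d →L[ℝ] ℝ := ∑ j, c j • EuclideanSpace.proj j

theorem lfun_apply (d : ℕ) (c : Fin d → ℝ) (x : Euc d) : lfun d c x = ∑ j, c j * x j := by
  simp [lfun]

theorem clf_repr (d : ℕ) (l : Euc d →L[ℝ] ℝ) (x : Euc d) :
    l x = ∑ j, l (EuclideanSpace.single j 1) * x j := by
  conv_lhs => rw [euc_decomp d x]
  rw [map_sum]
  congr 1; ext j; rw [map_smul]; simp [mul_comm]

/-- the argmax set of `l` over the convex hull of `A` equals `F`. -/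
theorem argmax_hull {d : ℕ} {A F : Set (Euc d)} {l : Euc d →L[ℝ] ℝ} {M : ℝ}
    (hA : ∀ a ∈ A, l a ≤ M) (hAF : ∀ a ∈ A, l a = M → a ∈ F)
    (hFA : F ⊆ convexHull ℝ A) (hFM : ∀ x ∈ F, l x = M)
    (hF : Convex ℝ F) (hne : F.Nonempty) :
    {x ∈ convexHull ℝ A | ∀ y ∈ convexHull ℝ A, l y ≤ l x} = F := by
  have hub : ∀ y ∈ convexHull ℝ A, l y ≤ M := by
    intro y hy
    have : convexHull ℝ A ⊆ {z | l z ≤ M} :=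
      convexHull_min hA (convex_halfSpace_le (ContinuousLinearMap.toLinearMap l).isLinear M)
    exact this hy
  ext x
  constructor
  · rintro ⟨hx, hopt⟩
    obtain ⟨x0, hx0⟩ := hne
    have hxM : l x = M := le_antisymm (hub x hx)
      (by simpa [hFM x0 hx0] using hopt x0 (hFA hx0))
    rw [convexHull_eq] at hx
    obtain ⟨ι, t, w, z, hw0, hw1, hz, hcm⟩ := hx
    rw [Finset.centerMass_eq_of_sum_1 t z hw1] at hcm
    have hlx : ∑ i ∈ t, w i * l (z i) = M := by
      rw [← hxM, ← hcm, map_sum]; simp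
    have hterm : ∀ i ∈ t, w i * (M - l (z i)) = 0 := by
      have hsum : ∑ i ∈ t, w i * (M - l (z i)) = 0 := by
        simp only [mul_sub]
        rw [Finset.sum_sub_distrib, ← Finset.sum_mul, hw1, hlx, one_mul, sub_self]
      exact (Finset.sum_eq_zero_iff_of_nonneg (fun i hi =>
        mul_nonneg (hw0 i hi) (sub_nonneg.2 (hA _ (hz i hi))))).1 hsum
    classical
    have hx' : x = ∑ i ∈ t.filter (fun i => w i ≠ 0), w i • z i := by
      rw [← hcm]
      exact (Finset.sum_filter_of_ne (fun i _ h => by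
        intro hw; apply h; rw [hw, zero_smul])).symm
    rw [hx']
    refine hF.sum_mem (fun i hi => hw0 i (Finset.mem_filter.1 hi).1) ?_ ?_
    · rw [Finset.sum_filter_ne_zero, hw1]
    · intro i hi
      obtain ⟨hit, hwi⟩ := Finset.mem_filter.1 hi
      have := hterm i hit
      rcases mul_eq_zero.1 this with h | h
      · exact absurd h hwi
      · exact hAF _ (hz i hit) (by linarith [sub_eq_zero.1 h])
  · intro hx
    exact ⟨hFA hx, fun y hy => (hub y hy).trans_eq (hFM x hx).symm⟩

theorem mem_scaled_hcube {d : ℕ} {k : ℝ} (hk : 0 < k) (x : Euc d) :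
    x ∈ (1/k) • hcube d ↔ ∀ j, |x j| ≤ 1/k := by
  rw [Set.mem_smul_set]
  constructor
  · rintro ⟨y, hy, rfl⟩ j
    rw [PiLp.smul_apply, smul_eq_mul, abs_mul, abs_of_pos (by positivity : (0:ℝ) < 1/k)]
    calc 1/k * |y j| ≤ 1/k * 1 := by
          exact mul_le_mul_of_nonneg_left (hy j) (by positivity)
      _ = 1/k := mul_one _
  · intro h
    refine ⟨k • x, fun j => ?_, ?_⟩
    · rw [PiLp.smul_apply, smul_eq_mul, abs_mul, abs_of_pos hk]
      calc k * |x j| ≤ k * (1/k) := mul_le_mul_of_nonneg_left (h j) hk.le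
        _ = 1 := by field_simp
    · rw [smul_smul]; field_simp; rw [one_smul]

-- SignType helpers
theorem st_abs_le (s : SignType) : |(s:ℝ)| ≤ 1 := by cases s <;> norm_num

theorem st_abs_eq (s : SignType) (h : s ≠ 0) : |(s:ℝ)| = 1 := by cases s <;> simp_all

theorem st_sq (s : SignType) (h : s ≠ 0) : (s:ℝ) * (s:ℝ) = 1 := by cases s <;> simp_all

theorem st_inj {s t : SignType} (h : (s:ℝ) = (t:ℝ)) : s = t := by
  cases s <;> cases t <;> simp_all <;> norm_num at h

theorem real_sign_mul (r : ℝ) : (SignType.sign r : ℝ) * r = |r| := by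
  rcases lt_trichotomy r 0 with h|h|h
  · rw [sign_neg h]; simp [abs_of_neg h]
  · simp [h]
  · rw [sign_pos h]; simp [abs_of_pos h]

-- support and zero sets
def suppF {d : ℕ} (σ : Fin d → SignType) : Finset (Fin d) :=
  Finset.univ.filter (fun j => σ j ≠ 0)

def zsF {d : ℕ} (σ : Fin d → SignType) : Finset (Fin d) :=
  Finset.univ.filter (fun j => σ j = 0)

theorem zs_supp_card {d : ℕ} (σ : Fin d → SignType) : (zsF σ).card + (suppF σ).card = d := by
  rw [zsF, suppF, Finset.card_filter_add_card_filter_not]; simp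

/-- A face of the cube `(1/k)γ_d` given by a sign pattern. -/
def cubeFace (d : ℕ) (k : ℝ) (σ : Fin d → SignType) : Set (Euc d) :=
  {x | ∀ j, |x j| ≤ 1/k ∧ (σ j ≠ 0 → x j = (σ j : ℝ)/k)}

/-- the center of a cube face -/
def ctr (d : ℕ) (k : ℝ) (σ : Fin d → SignType) : Euc d := WithLp.toLp 2 (fun j => (σ j : ℝ)/k)

theorem ctr_apply {d : ℕ} (k : ℝ) (σ : Fin d → SignType) (j : Fin d) :
    ctr d k σ j = (σ j : ℝ)/k := rfl

theorem ctr_mem {d : ℕ} {k : ℝ} (hk : 0 < k) (σ : Fin d → SignType) :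
    ctr d k σ ∈ cubeFace d k σ := by
  intro j
  refine ⟨?_, fun _ => rfl⟩
  rw [ctr_apply, abs_div, abs_of_pos hk]
  gcongr
  · exact st_abs_le _

theorem st_sign_coe (s : SignType) : SignType.sign ((s : ℝ)) = s := by
  cases s
  · show SignType.sign ((0:ℝ)) = _
    simp
  · show SignType.sign ((-1:ℝ)) = _
    rw [sign_neg (by norm_num)]; decide
  · show SignType.sign ((1:ℝ)) = _
    rw [sign_pos (by norm_num)]; decide

theorem cube_term_le {k : ℝ} (hk : 0 < k) (a b : ℝ) (hb : |b| ≤ 1/k) :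
    a * b ≤ |a|/k := by
  calc a * b ≤ |a * b| := le_abs_self _
    _ = |a| * |b| := abs_mul _ _
    _ ≤ |a| * (1/k) := by gcongr
    _ = |a|/k := by ring

theorem cube_lfun_le {d : ℕ} {k : ℝ} (hk : 0 < k) (c : Fin d → ℝ) {x : Euc d}
    (hx : ∀ j, |x j| ≤ 1/k) : lfun d c x ≤ (∑ j, |c j|)/k := by
  rw [lfun_apply, Finset.sum_div]
  exact Finset.sum_le_sum fun j _ => cube_term_le hk _ _ (hx j)

theorem cube_lfun_eq_iff {d : ℕ} {k : ℝ} (hk : 0 < k) (c : Fin d → ℝ) {x : Euc d}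
    (hx : ∀ j, |x j| ≤ 1/k) :
    lfun d c x = (∑ j, |c j|)/k ↔ x ∈ cubeFace d k (fun j => SignType.sign (c j)) := by
  constructor
  · intro h
    have hterm : ∀ j ∈ Finset.univ, |c j|/k - c j * x j = 0 := by
      apply (Finset.sum_eq_zero_iff_of_nonneg (fun j _ =>
        sub_nonneg.2 (cube_term_le hk _ _ (hx j)))).1
      rw [Finset.sum_sub_distrib, ← Finset.sum_div, ← lfun_apply, h, sub_self]
    intro j
    refine ⟨hx j, fun hs => ?_⟩
    have hcj : c j ≠ 0 := by
      intro h0; exact hs (by simp [h0])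
    have h1 : c j * x j = |c j|/k := by
      have := hterm j (Finset.mem_univ j); linarith
    have h2 : |c j| * x j = |c j| * ((SignType.sign (c j) : ℝ)/k) := by
      calc |c j| * x j = (SignType.sign (c j) : ℝ) * (c j * x j) := by
            rw [← mul_assoc, real_sign_mul]
        _ = (SignType.sign (c j) : ℝ) * (|c j|/k) := by rw [h1]
        _ = |c j| * ((SignType.sign (c j) : ℝ)/k) := by ring
    exact mul_left_cancel₀ (abs_ne_zero.2 hcj) h2
  · intro hmem
    rw [lfun_apply, Finset.sum_div]
    apply Finset.sum_congr rfl
    intro j _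
    by_cases h0 : c j = 0
    · simp [h0]
    · have hs : SignType.sign (c j) ≠ 0 := by simp [sign_eq_zero_iff, h0]
      have := (hmem j).2 hs
      rw [this,
        show c j * ((((fun j => SignType.sign (c j)) j : SignType) : ℝ)/k)
          = ((SignType.sign (c j) : ℝ) * c j)/k by ring,
        real_sign_mul]

theorem cubeFace_subset {d : ℕ} {k : ℝ} (hk : 0 < k) (σ : Fin d → SignType) :
    cubeFace d k σ ⊆ (1/k) • hcube d := fun x hx =>
  (mem_scaled_hcube hk x).2 fun j => (hx j).1

theorem cubeFace_exposed_cube {d : ℕ} {k : ℝ} (hk : 0 < k) (σ : Fin d → SignType) :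
    IsExposed ℝ ((1/k) • hcube d) (cubeFace d k σ) := by
  intro _
  refine ⟨lfun d (fun j => (σ j : ℝ)), ?_⟩
  have hsgn : (fun j => SignType.sign ((σ j : ℝ))) = σ := funext fun j => st_sign_coe _
  have hctr : ctr d k σ ∈ cubeFace d k σ := ctr_mem hk σ
  have hctrval : lfun d (fun j => (σ j : ℝ)) (ctr d k σ) = (∑ j, |(σ j : ℝ)|)/k := by
    rw [cube_lfun_eq_iff hk _ (fun j => (ctr_mem hk σ j).1), hsgn]
    exact hctr
  ext x
  constructor
  · intro hx
    have hxc : ∀ j, |x j| ≤ 1/k := fun j => (hx j).1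
    refine ⟨(mem_scaled_hcube hk x).2 hxc, fun y hy => ?_⟩
    have hxval : lfun d (fun j => (σ j : ℝ)) x = (∑ j, |(σ j : ℝ)|)/k := by
      rw [cube_lfun_eq_iff hk _ hxc, hsgn]; exact hx
    rw [hxval]
    exact cube_lfun_le hk _ (fun j => ((mem_scaled_hcube hk y).1 hy) j)
  · rintro ⟨hxA, hopt⟩
    have hxc := (mem_scaled_hcube hk x).1 hxA
    have hle := cube_lfun_le hk (fun j => ((σ j : ℝ))) hxc
    have hge := hopt (ctr d k σ) (cubeFace_subset hk σ hctr)
    rw [hctrval] at hge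
    have : lfun d (fun j => (σ j : ℝ)) x = (∑ j, |(σ j : ℝ)|)/k := le_antisymm hle hge
    rw [cube_lfun_eq_iff hk _ hxc, hsgn] at this
    exact this

theorem sum_abs_coe {d : ℕ} (σ : Fin d → SignType) :
    ∑ j, |(σ j : ℝ)| = (suppF σ).card := by
  rw [suppF, Finset.card_filter]
  push_cast
  apply Finset.sum_congr rfl
  intro j _
  by_cases h : σ j = 0
  · simp [h]
  · rw [st_abs_eq _ h]; simp [h]

theorem pilp_add_apply {d : ℕ} (x y : Euc d) (j : Fin d) : (x + y) j = x j + y j := rfl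
theorem pilp_sub_apply {d : ℕ} (x y : Euc d) (j : Fin d) : (x - y) j = x j - y j := rfl
theorem pilp_smul_apply {d : ℕ} (a : ℝ) (x : Euc d) (j : Fin d) : (a • x) j = a * x j := rfl

theorem cubeFace_convex {d : ℕ} {k : ℝ} (σ : Fin d → SignType) :
    Convex ℝ (cubeFace d k σ) := by
  intro x hx y hy a b ha hb hab
  intro j
  have e : (a • x + b • y) j = a * x j + b * y j := rfl
  refine ⟨?_, fun hs => ?_⟩
  · rw [e]
    calc |a * x j + b * y j| ≤ |a * x j| + |b * y j| := abs_add_le _ _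
      _ = a * |x j| + b * |y j| := by
          rw [abs_mul, abs_mul, abs_of_nonneg ha, abs_of_nonneg hb]
      _ ≤ a * (1/k) + b * (1/k) :=
          add_le_add (mul_le_mul_of_nonneg_left (hx j).1 ha)
            (mul_le_mul_of_nonneg_left (hy j).1 hb)
      _ = 1/k := by rw [← add_mul, hab, one_mul]
  · rw [e, (hx j).2 hs, (hy j).2 hs, ← add_mul, hab, one_mul]

theorem cross_subset_rho {d : ℕ} {k : ℝ} : cross d ⊆ rho d k :=
  subset_trans Set.subset_union_left (subset_convexHull ℝ _)

theorem cube_subset_rho {d : ℕ} {k : ℝ} : (1/k) • hcube d ⊆ rho d k :=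
  subset_trans Set.subset_union_right (subset_convexHull ℝ _)

theorem cross_lfun_le {d : ℕ} (c : Fin d → ℝ) {M : ℝ} (hM : ∀ j, |c j| ≤ M)
    (hM0 : 0 ≤ M) {x : Euc d} (hx : x ∈ cross d) : lfun d c x ≤ M := by
  rw [lfun_apply]
  calc ∑ j, c j * x j ≤ ∑ j, M * |x j| := by
        apply Finset.sum_le_sum
        intro j _
        calc c j * x j ≤ |c j * x j| := le_abs_self _
          _ = |c j| * |x j| := abs_mul _ _
          _ ≤ M * |x j| := mul_le_mul_of_nonneg_right (hM j) (abs_nonneg _)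
    _ = M * ∑ j, |x j| := by rw [Finset.mul_sum]
    _ ≤ M * 1 := mul_le_mul_of_nonneg_left hx hM0
    _ = M := mul_one M

theorem cubeFace_exposed_rho {d : ℕ} {k : ℝ} (hk1 : 1 < k) (σ : Fin d → SignType)
    (hcard : k < ((suppF σ).card : ℝ)) :
    IsExposed ℝ (rho d k) (cubeFace d k σ) := by
  intro _
  have hk : 0 < k := lt_trans one_pos hk1
  have hsgn : (fun j => SignType.sign ((σ j : ℝ))) = σ := funext fun j => st_sign_coe _
  have hM1 : (1:ℝ) < (∑ j, |(σ j : ℝ)|)/k := by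
    rw [sum_abs_coe, lt_div_iff₀ hk]; linarith
  refine ⟨lfun d (fun j => (σ j : ℝ)), ?_⟩
  refine (argmax_hull (M := (∑ j, |(σ j : ℝ)|)/k) ?_ ?_ ?_ ?_ (cubeFace_convex σ)
    ⟨ctr d k σ, ctr_mem hk σ⟩).symm
  · rintro a (ha | ha)
    · have h1 : lfun d (fun j => (σ j : ℝ)) a ≤ 1 :=
        cross_lfun_le _ (fun j => st_abs_le _) zero_le_one ha
      linarith
    · exact cube_lfun_le hk _ ((mem_scaled_hcube hk a).1 ha)
  · rintro a (ha | ha) haM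
    · exfalso
      have h1 : lfun d (fun j => (σ j : ℝ)) a ≤ 1 :=
        cross_lfun_le _ (fun j => st_abs_le _) zero_le_one ha
      rw [haM] at h1; linarith
    · rw [cube_lfun_eq_iff hk _ ((mem_scaled_hcube hk a).1 ha), hsgn] at haM
      exact haM
  · exact subset_trans (cubeFace_subset hk σ) cube_subset_rho
  · intro x hx
    rw [cube_lfun_eq_iff hk _ (fun j => (hx j).1), hsgn]
    exact hx

theorem li_single {d : ℕ} (p : Fin d → Prop) [DecidablePred p] :
    LinearIndependent ℝ (fun j : {j : Fin d // p j} => EuclideanSpace.single (j : Fin d) (1:ℝ)) := by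
  have hb := (EuclideanSpace.basisFun (Fin d) ℝ).toBasis.linearIndependent
  have := hb.comp (Subtype.val : {j // p j} → Fin d) Subtype.val_injective
  have h2 : (fun j : {j : Fin d // p j} => EuclideanSpace.single (j : Fin d) (1:ℝ))
      = ⇑(EuclideanSpace.basisFun (Fin d) ℝ).toBasis ∘ Subtype.val := by
    funext j
    rw [Function.comp_apply, OrthonormalBasis.coe_toBasis, EuclideanSpace.basisFun_apply]
  rw [h2]; exact this

theorem mem_span_single {d : ℕ} (p : Fin d → Prop) [DecidablePred p] (u : Euc d)
    (hu : ∀ j, ¬ p j → u j = 0) :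
    u ∈ Submodule.span ℝ
      (Set.range (fun j : {j : Fin d // p j} => EuclideanSpace.single (j : Fin d) (1:ℝ))) := by
  rw [euc_decomp d u]
  apply Submodule.sum_mem
  intro j _
  by_cases hj : p j
  · exact Submodule.smul_mem _ _ (Submodule.subset_span ⟨⟨j, hj⟩, rfl⟩)
  · rw [hu j hj, zero_smul]
    exact Submodule.zero_mem _

theorem cubeFace_vectorSpan {d : ℕ} {k : ℝ} (hk : 0 < k) (σ : Fin d → SignType) :
    vectorSpan ℝ (cubeFace d k σ) =
      Submodule.span ℝ
        (Set.range (fun j : {j : Fin d // σ j = 0} => EuclideanSpace.single (j : Fin d) (1:ℝ))) := by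
  apply le_antisymm
  · apply Submodule.span_le.2
    rintro u hu
    rw [Set.mem_vsub] at hu
    obtain ⟨x, hx, y, hy, rfl⟩ := hu
    apply mem_span_single
    intro j hj
    have : σ j ≠ 0 := hj
    show x j - y j = 0
    rw [(hx j).2 this, (hy j).2 this, sub_self]
  · apply Submodule.span_le.2
    rintro _ ⟨⟨j, hj⟩, rfl⟩
    have h1 : ctr d k σ + (1/k) • EuclideanSpace.single j (1:ℝ) ∈ cubeFace d k σ := by
      intro i
      have e : (ctr d k σ + (1/k) • EuclideanSpace.single j (1:ℝ)) i
          = (σ i : ℝ)/k + (1/k) * (if i = j then 1 else 0) := by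
        rw [pilp_add_apply, pilp_smul_apply, ctr_apply, EuclideanSpace.single_apply]
      constructor
      · rw [e]
        by_cases hij : i = j
        · subst hij; rw [hj]
          simp only [SignType.coe_zero, zero_div, if_true, mul_one, zero_add]
          rw [abs_of_pos (by positivity : (0:ℝ) < 1/k)]
        · simp only [hij, if_false, mul_zero, add_zero]
          rw [abs_div, abs_of_pos hk]
          gcongr
          exact st_abs_le _
      · intro hs
        rw [e]
        by_cases hij : i = j
        · exact absurd (hij ▸ hs) (fun h => h hj)
        · simp [hij]
    have h2 := vsub_mem_vectorSpan ℝ h1 (ctr_mem hk σ)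
    have e2 : (ctr d k σ + (1/k) • EuclideanSpace.single j (1:ℝ)) -ᵥ ctr d k σ
        = (1/k) • EuclideanSpace.single j (1:ℝ) := by
      rw [vsub_eq_sub]; abel
    rw [e2] at h2
    have h3 := Submodule.smul_mem _ k h2
    rwa [smul_smul, mul_one_div, div_self (ne_of_gt hk), one_smul] at h3

theorem cubeFace_finrank {d : ℕ} {k : ℝ} (hk : 0 < k) (σ : Fin d → SignType) :
    Module.finrank ℝ (vectorSpan ℝ (cubeFace d k σ)) = (zsF σ).card := by
  classical
  rw [cubeFace_vectorSpan hk σ, finrank_span_eq_card (li_single (fun j => σ j = 0)),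
    Fintype.card_subtype]
  rfl

theorem cubeFace_inj {d : ℕ} {k : ℝ} (hk : 0 < k) :
    Function.Injective (cubeFace d k) := by
  intro σ τ h
  have key : ∀ σ' τ' : Fin d → SignType, cubeFace d k σ' = cubeFace d k τ' →
      ∀ j, τ' j ≠ 0 → σ' j = τ' j := by
    intro σ' τ' hh j hτ
    have hmem : ctr d k σ' ∈ cubeFace d k τ' := hh ▸ ctr_mem hk σ'
    have h2 := (hmem j).2 hτ
    rw [ctr_apply] at h2
    have h3 : (σ' j : ℝ) = (τ' j : ℝ) := by
      field_simp at h2; exact h2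
    exact st_inj h3
  funext j
  by_cases hσ : σ j = 0 <;> by_cases hτ : τ j = 0
  · rw [hσ, hτ]
  · exact key σ τ h j hτ
  · exact ((key τ σ h.symm j hσ).symm)
  · exact key σ τ h j hτ

theorem lfun_eq_clf {d : ℕ} (l : Euc d →L[ℝ] ℝ) (y : Euc d) :
    l y = lfun d (fun j => l (EuclideanSpace.single j 1)) y := by
  rw [clf_repr, lfun_apply]

theorem cube_exposed_char {d : ℕ} {k : ℝ} (hk : 0 < k) {F : Set (Euc d)}
    (hexp : IsExposed ℝ ((1/k) • hcube d) F) (hne : F.Nonempty) :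
    ∃ σ, F = cubeFace d k σ := by
  obtain ⟨l, rfl⟩ := hexp hne
  set c : Fin d → ℝ := fun j => l (EuclideanSpace.single j 1) with hc
  have hmx : ∀ y, l y = lfun d c y := fun y => lfun_eq_clf l y
  set σ' : Fin d → SignType := fun j => SignType.sign (c j) with hσ'
  have hctr := ctr_mem hk σ'
  have hval : lfun d c (ctr d k σ') = (∑ j, |c j|)/k :=
    (cube_lfun_eq_iff hk c (fun j => (hctr j).1)).2 hctr
  refine ⟨σ', ?_⟩
  ext x
  constructor
  · rintro ⟨hx, hopt⟩
    have hxc := (mem_scaled_hcube hk x).1 hx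
    rw [← cube_lfun_eq_iff hk c hxc]
    apply le_antisymm (cube_lfun_le hk c hxc)
    have h3 := hopt _ (cubeFace_subset hk σ' hctr)
    rw [hmx (ctr d k σ'), hmx x] at h3
    calc (∑ j, |c j|)/k = lfun d c (ctr d k σ') := hval.symm
      _ ≤ lfun d c x := h3
  · intro hx
    have hxc : ∀ j, |x j| ≤ 1/k := fun j => (hx j).1
    refine ⟨(mem_scaled_hcube hk x).2 hxc, fun y hy => ?_⟩
    rw [hmx y, hmx x]
    have hxval : lfun d c x = (∑ j, |c j|)/k := (cube_lfun_eq_iff hk c hxc).2 hx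
    rw [hxval]
    exact cube_lfun_le hk c ((mem_scaled_hcube hk y).1 hy)

theorem e1_mem_cross {d : ℕ} (hd : 1 ≤ d) :
    EuclideanSpace.single (⟨0, hd⟩ : Fin d) (1:ℝ) ∈ cross d := by
  show ∑ i, |EuclideanSpace.single (⟨0, hd⟩ : Fin d) (1:ℝ) i| ≤ 1
  have : ∀ i, |EuclideanSpace.single (⟨0, hd⟩ : Fin d) (1:ℝ) i|
      = if i = ⟨0, hd⟩ then 1 else 0 := by
    intro i; rw [EuclideanSpace.single_apply]; split <;> simp
  rw [show ∑ i, |EuclideanSpace.single (⟨0, hd⟩ : Fin d) (1:ℝ) i|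
      = ∑ i, if i = (⟨0, hd⟩ : Fin d) then (1:ℝ) else 0 from
    Finset.sum_congr rfl fun i _ => this i]
  simp

theorem rho_cube_constraint {d : ℕ} (hd : 1 ≤ d) {k : ℝ} (hk1 : 1 < k)
    (σ : Fin d → SignType) (hexp : IsExposed ℝ (rho d k) (cubeFace d k σ)) :
    k < ((suppF σ).card : ℝ) := by
  classical
  have hk : 0 < k := lt_trans one_pos hk1
  obtain ⟨m, hm⟩ := hexp ⟨ctr d k σ, ctr_mem hk σ⟩
  set c : Fin d → ℝ := fun j => m (EuclideanSpace.single j 1) with hc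
  have hmx : ∀ y, m y = lfun d c y := fun y => lfun_eq_clf m y
  by_cases hc0 : ∀ j, c j = 0
  · exfalso
    have hm0 : ∀ y, m y = 0 := by
      intro y; rw [hmx, lfun_apply]
      apply Finset.sum_eq_zero; intro j _; rw [hc0 j, zero_mul]
    have hFρ : cubeFace d k σ = rho d k := by
      rw [hm]; ext z; simp [hm0]
    have he1 : EuclideanSpace.single (⟨0, hd⟩ : Fin d) (1:ℝ) ∈ cubeFace d k σ := by
      rw [hFρ]; exact cross_subset_rho (e1_mem_cross hd)
    have := (he1 ⟨0, hd⟩).1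
    rw [EuclideanSpace.single_apply, if_pos rfl] at this
    rw [abs_one] at this
    have : k ≤ 1 := by rwa [le_div_iff₀ hk, one_mul] at this
    linarith
  · push_neg at hc0
    obtain ⟨j0, hj0⟩ := hc0
    set σ' : Fin d → SignType := fun j => SignType.sign (c j) with hσ'
    set M : ℝ := (∑ j, |c j|)/k with hMdef
    have hctr' := ctr_mem hk σ'
    have hctr'val : lfun d c (ctr d k σ') = M :=
      (cube_lfun_eq_iff hk c (fun j => (hctr' j).1)).2 hctr'
    -- every x in the face has value M and lies in cubeFace σ'
    have hsub : cubeFace d k σ ⊆ cubeFace d k σ' := by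
      intro x hx
      have hx' := hm ▸ hx
      obtain ⟨hxρ, hxopt⟩ := hx'
      have hxc := fun j => (hx j).1
      have hge : M ≤ lfun d c x := by
        have := hxopt _ (cube_subset_rho (cubeFace_subset hk σ' hctr'))
        rw [hmx, hmx, hctr'val] at this; exact this
      have hxval : lfun d c x = M :=
        le_antisymm (cube_lfun_le hk c hxc) hge
      exact (cube_lfun_eq_iff hk c hxc).1 hxval
    -- value M on rho is an upper bound
    have hub : ∀ y ∈ rho d k, m y ≤ M := by
      intro y hy
      have hctrF := hm ▸ ctr_mem hk σ
      obtain ⟨_, hopt⟩ := hctrF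
      have h1 := hopt y hy
      have h2 : lfun d c (ctr d k σ) = M :=
        (cube_lfun_eq_iff hk c (fun j => (ctr_mem hk σ j).1)).2 (hsub (ctr_mem hk σ))
      rw [hmx (ctr d k σ), h2] at h1
      exact h1
    -- each |c j| is strictly below M
    have claim : ∀ j, |c j| < M := by
      intro j
      rcases lt_or_ge (|c j|) M with h | h
      · exact h
      exfalso
      set p : Euc d := ((SignType.sign (c j) : ℝ)) • EuclideanSpace.single j 1 with hp
      have hpcoord : ∀ i, p i = (SignType.sign (c j) : ℝ) * (if i = j then 1 else 0) := by
        intro i; rw [hp, pilp_smul_apply, EuclideanSpace.single_apply]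
      have hpcross : p ∈ cross d := by
        show ∑ i, |p i| ≤ 1
        calc ∑ i, |p i| = ∑ i, |(SignType.sign (c j) : ℝ)| * (if i = j then 1 else 0) := by
              apply Finset.sum_congr rfl; intro i _
              rw [hpcoord i, abs_mul]
              congr 1
              split <;> simp
          _ = |(SignType.sign (c j) : ℝ)| := by simp
          _ ≤ 1 := st_abs_le _
      have hpval : m p = |c j| := by
        rw [hmx, lfun_apply]
        have : ∀ i, c i * p i = (if i = j then |c j| else 0) := by
          intro i; rw [hpcoord i]
          by_cases hij : i = j
          · subst hij; rw [if_pos rfl, if_pos rfl, mul_one, mul_comm (c i), real_sign_mul]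
          · rw [if_neg hij, if_neg hij, mul_zero, mul_zero]
        simp [this]
      have hpF : p ∈ cubeFace d k σ := by
        rw [hm]
        refine ⟨cross_subset_rho hpcross, fun y hy => ?_⟩
        rw [hpval]
        exact le_trans (hub y hy) h
      by_cases hcj : c j = 0
      · have h0 : M ≤ 0 := by rw [hcj, abs_zero] at h; exact h
        set q : Euc d := ((SignType.sign (c j0) : ℝ)) • EuclideanSpace.single j0 1 with hq
        have hqcross : q ∈ cross d := by
          show ∑ i, |q i| ≤ 1
          calc ∑ i, |q i| = ∑ i, |(SignType.sign (c j0) : ℝ)| * (if i = j0 then 1 else 0) := by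
                apply Finset.sum_congr rfl; intro i _
                rw [hq, pilp_smul_apply, EuclideanSpace.single_apply, abs_mul]
                congr 1
                split <;> simp
            _ = |(SignType.sign (c j0) : ℝ)| := by simp
            _ ≤ 1 := st_abs_le _
        have hqval : m q = |c j0| := by
          rw [hmx, lfun_apply]
          have hterm : ∀ i, c i * q i = (if i = j0 then |c j0| else 0) := by
            intro i; rw [hq, pilp_smul_apply, EuclideanSpace.single_apply]
            by_cases hij : i = j0
            · subst hij; rw [if_pos rfl, if_pos rfl, mul_one, mul_comm (c i), real_sign_mul]
            · rw [if_neg hij, if_neg hij, mul_zero, mul_zero]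
          simp [hterm]
        have hle := hub q (cross_subset_rho hqcross)
        rw [hqval] at hle
        have hM0' : 0 < |c j0| := abs_pos.2 hj0
        linarith
      · have h1 := (hpF j).1
        rw [hpcoord j, if_pos rfl, mul_one] at h1
        rw [st_abs_eq _ (by simp [sign_eq_zero_iff, hcj])] at h1
        have : k ≤ 1 := by rwa [le_div_iff₀ hk, one_mul] at h1
        linarith
    have hM0 : 0 < M := lt_of_le_of_lt (abs_nonneg (c j0)) (claim j0)
    have hj0supp : j0 ∈ suppF σ' := by
      rw [suppF, Finset.mem_filter]
      exact ⟨Finset.mem_univ _, by simp [hσ', sign_eq_zero_iff, hj0]⟩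
    have hsum : ∑ j ∈ suppF σ', |c j| = ∑ j, |c j| := by
      apply Finset.sum_subset (Finset.subset_univ _)
      intro j _ hj
      rw [suppF, Finset.mem_filter] at hj
      push_neg at hj
      have hz : σ' j = 0 := hj (Finset.mem_univ _)
      rw [hσ'] at hz
      rw [sign_eq_zero_iff.1 hz, abs_zero]
    have hstrict : ∑ j ∈ suppF σ', |c j| < ((suppF σ').card : ℝ) * M := by
      calc ∑ j ∈ suppF σ', |c j| < ∑ _j ∈ suppF σ', M :=
            Finset.sum_lt_sum_of_nonempty ⟨j0, hj0supp⟩ (fun j _ => claim j)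
        _ = ((suppF σ').card : ℝ) * M := by rw [Finset.sum_const, nsmul_eq_mul]
    have hkM : k * M = ∑ j, |c j| := by
      rw [hMdef]; field_simp
    have hklt : k < ((suppF σ').card : ℝ) := by
      have hlt : k * M < ((suppF σ').card : ℝ) * M := by rw [hkM, ← hsum]; exact hstrict
      exact lt_of_mul_lt_mul_right hlt hM0.le
    have hsubsupp : suppF σ' ⊆ suppF σ := by
      intro j hj
      rw [suppF, Finset.mem_filter] at hj ⊢
      refine ⟨Finset.mem_univ _, ?_⟩
      have hmem := hsub (ctr_mem hk σ) j
      have heq := hmem.2 hj.2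
      rw [ctr_apply] at heq
      have h3 : (σ j : ℝ) = (σ' j : ℝ) := by field_simp at heq; exact heq
      rw [st_inj h3]; exact hj.2
    calc k < ((suppF σ').card : ℝ) := hklt
      _ ≤ ((suppF σ).card : ℝ) := by exact_mod_cast Finset.card_le_card hsubsupp

open Finset in
theorem card_sign_supp (d m : ℕ) :
    (Finset.univ.filter (fun σ : Fin d → SignType => (suppF σ).card = m)).card
      = d.choose m * 2 ^ m := by
  classical
  rw [Finset.card_eq_sum_card_fiberwise
    (f := suppF) (t := Finset.univ.powersetCard m)
    (fun σ hσ => by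
      rw [Finset.mem_coe, Finset.mem_powersetCard_univ]
      exact (Finset.mem_filter.1 hσ).2)]
  have hfiber : ∀ S ∈ Finset.univ.powersetCard m,
      ((Finset.univ.filter (fun σ : Fin d → SignType => (suppF σ).card = m)).filter
        (fun σ => suppF σ = S)).card = 2 ^ m := by
    intro S hS
    have hScard : S.card = m := (Finset.mem_powersetCard_univ).1 hS
    have : ((Finset.univ.filter (fun σ : Fin d → SignType => (suppF σ).card = m)).filter
        (fun σ => suppF σ = S)).card = (Finset.univ : Finset (↥S → Bool)).card := by
      apply Finset.card_nbij' (i := fun σ => fun j : ↥S => decide (σ j.1 = SignType.pos))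
        (j := fun b => fun jj => if h : jj ∈ S then
          (if b ⟨jj, h⟩ then SignType.pos else SignType.neg) else SignType.zero)
      · intro σ hσ; exact Finset.mem_univ _
      · intro b hb
        have hsupp : suppF (fun jj => if h : jj ∈ S then
            (if b ⟨jj, h⟩ then SignType.pos else SignType.neg) else SignType.zero) = S := by
          ext j
          rw [suppF, Finset.mem_filter]
          constructor
          · rintro ⟨_, hj⟩
            by_contra hjS
            rw [dif_neg hjS] at hj
            exact hj rfl
          · intro hjS
            refine ⟨Finset.mem_univ _, ?_⟩
            rw [dif_pos hjS]
            split <;> simp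
        rw [Finset.mem_coe, Finset.mem_filter, Finset.mem_filter]
        exact ⟨⟨Finset.mem_univ _, by rw [hsupp, hScard]⟩, hsupp⟩
      · intro σ hσ
        have hσS : suppF σ = S := (Finset.mem_filter.1 hσ).2
        funext j
        beta_reduce
        by_cases hjS : j ∈ S
        · rw [dif_pos hjS]
          have hj : σ j ≠ 0 := by
            have := hσS ▸ hjS
            rw [suppF, Finset.mem_filter] at this
            exact this.2
          cases hj' : σ j
          · exact absurd hj' hj
          · simp [hj']
          · simp [hj']
        · rw [dif_neg hjS]
          have : σ j = 0 := by
            by_contra hne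
            exact hjS (hσS ▸ (Finset.mem_filter.2 ⟨Finset.mem_univ _, hne⟩ : j ∈ suppF σ))
          rw [this]; rfl
      · intro b hb
        funext jj
        show decide ((if h : (jj : Fin d) ∈ S then
            (if b ⟨jj, h⟩ then SignType.pos else SignType.neg) else SignType.zero)
            = SignType.pos) = b jj
        rw [dif_pos jj.2]
        rcases hbv : b jj with _ | _ <;> simp [hbv]
    rw [this, Finset.card_univ, Fintype.card_fun, Fintype.card_bool, Fintype.card_coe, hScard]
  rw [Finset.sum_congr rfl hfiber, Finset.sum_const, Finset.card_powersetCard,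
    Finset.card_univ, Fintype.card_fin, smul_eq_mul]

theorem cube_branch_set {d : ℕ} (hd : 1 ≤ d) {k : ℝ} (hk1 : 1 < k) (i : ℕ) :
    {F : Set (Euc d) | IsExposed ℝ (rho d k) F ∧ IsExposed ℝ ((1/k) • hcube d) F ∧ F.Nonempty ∧
        Module.finrank ℝ (vectorSpan ℝ F) = i}
      = cubeFace d k '' {σ | (zsF σ).card = i ∧ k < ((suppF σ).card : ℝ)} := by
  have hk : 0 < k := lt_trans one_pos hk1
  ext F
  constructor
  · rintro ⟨hρ, hcub, hne, hdim⟩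
    obtain ⟨σ, rfl⟩ := cube_exposed_char hk hcub hne
    exact ⟨σ, ⟨(cubeFace_finrank hk σ).symm.trans hdim, rho_cube_constraint hd hk1 σ hρ⟩, rfl⟩
  · rintro ⟨σ, ⟨hzs, hsupp⟩, rfl⟩
    exact ⟨cubeFace_exposed_rho hk1 σ hsupp, cubeFace_exposed_cube hk σ,
      ⟨ctr d k σ, ctr_mem hk σ⟩, (cubeFace_finrank hk σ).trans hzs⟩

theorem cube_count {d : ℕ} (hd : 1 ≤ d) {k : ℝ} (hk1 : 1 < k) (hkd : k ≤ d) (i : ℕ)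
    (hi : (i:ℝ) < (d:ℝ) - k) :
    {F : Set (Euc d) | IsExposed ℝ (rho d k) F ∧ IsExposed ℝ ((1/k) • hcube d) F ∧ F.Nonempty ∧
        Module.finrank ℝ (vectorSpan ℝ F) = i}.ncard = 2 ^ (d - i) * d.choose i := by
  classical
  have hk : 0 < k := lt_trans one_pos hk1
  have hid : i < d := by
    have : (i:ℝ) < (d:ℝ) := by linarith
    exact_mod_cast this
  rw [cube_branch_set hd hk1 i]
  have hset : {σ : Fin d → SignType | (zsF σ).card = i ∧ k < ((suppF σ).card : ℝ)}
      = ↑(Finset.univ.filter (fun σ : Fin d → SignType => (suppF σ).card = d - i)) := by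
    ext σ
    have h2 := zs_supp_card σ
    simp only [Set.mem_setOf_eq, Finset.coe_filter, Finset.mem_univ, true_and,
      Set.mem_setOf_eq]
    constructor
    · rintro ⟨h1, _⟩; omega
    · intro h1
      refine ⟨by omega, ?_⟩
      rw [h1]
      rw [Nat.cast_sub (le_of_lt hid)]
      linarith
  rw [hset, Set.ncard_image_of_injOn (fun a _ b _ h => cubeFace_inj hk h),
    Set.ncard_coe_finset, card_sign_supp, Nat.choose_symm (le_of_lt hid), mul_comm]

theorem cube_empty {d : ℕ} (hd : 1 ≤ d) {k : ℝ} (hk1 : 1 < k) (i : ℕ)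
    (hi : (d:ℝ) - k ≤ (i:ℝ)) (hid : i < d) :
    {F : Set (Euc d) | IsExposed ℝ (rho d k) F ∧ IsExposed ℝ ((1/k) • hcube d) F ∧ F.Nonempty ∧
        Module.finrank ℝ (vectorSpan ℝ F) = i} = ∅ := by
  rw [cube_branch_set hd hk1 i]
  ext F
  simp only [Set.mem_image, Set.mem_setOf_eq, Set.mem_empty_iff_false, iff_false,
    not_exists]
  rintro σ ⟨⟨h1, h2⟩, _⟩
  have h3 := zs_supp_card σ
  have h4 : ((suppF σ).card : ℝ) = (d:ℝ) - i := by
    have : (suppF σ).card = d - i := by omega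
    rw [this, Nat.cast_sub (le_of_lt hid)]
  rw [h4] at h2
  linarith

theorem st_ne_zero {s : SignType} (h : s ≠ 0) : (s:ℝ) ≠ 0 := by
  cases s <;> simp_all

theorem real_sign_mul_abs (r : ℝ) : (SignType.sign r : ℝ) * |r| = r := by
  rcases lt_trichotomy r 0 with h|h|h
  · rw [sign_neg h, abs_of_neg h]; simp
  · simp [h]
  · rw [sign_pos h, abs_of_pos h]; simp

/-- A face of the cross-polytope given by a sign pattern. -/
def crossFace (d : ℕ) (σ : Fin d → SignType) : Set (Euc d) :=
  {x | ∑ j, |x j| ≤ 1 ∧ ∑ j, (σ j : ℝ) * x j = 1}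

theorem crossFace_iff {d : ℕ} (σ : Fin d → SignType) (x : Euc d) :
    x ∈ crossFace d σ ↔ (∀ j, (σ j : ℝ) * x j = |x j|) ∧ ∑ j, |x j| = 1 := by
  constructor
  · rintro ⟨h1, h2⟩
    have hterm : ∀ j, (σ j : ℝ) * x j ≤ |x j| := by
      intro j
      calc (σ j : ℝ) * x j ≤ |(σ j : ℝ) * x j| := le_abs_self _
        _ = |(σ j : ℝ)| * |x j| := abs_mul _ _
        _ ≤ 1 * |x j| := mul_le_mul_of_nonneg_right (st_abs_le _) (abs_nonneg _)
        _ = |x j| := one_mul _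
    have hsum : ∑ j, |x j| = 1 := by
      apply le_antisymm h1
      calc (1:ℝ) = ∑ j, (σ j : ℝ) * x j := h2.symm
        _ ≤ ∑ j, |x j| := Finset.sum_le_sum (fun j _ => hterm j)
    refine ⟨?_, hsum⟩
    have hzero : ∀ j ∈ Finset.univ, |x j| - (σ j : ℝ) * x j = 0 := by
      apply (Finset.sum_eq_zero_iff_of_nonneg (fun j _ => sub_nonneg.2 (hterm j))).1
      rw [Finset.sum_sub_distrib, hsum, h2, sub_self]
    intro j
    have := hzero j (Finset.mem_univ j)
    linarith
  · rintro ⟨h1, h2⟩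
    refine ⟨le_of_eq h2, ?_⟩
    rw [Finset.sum_congr rfl (fun j _ => h1 j), h2]

/-- vertex of the cross polytope -/
def vtx (d : ℕ) (σ : Fin d → SignType) (j : Fin d) : Euc d :=
  ((σ j : ℝ)) • EuclideanSpace.single j 1

theorem vtx_apply {d : ℕ} (σ : Fin d → SignType) (j i : Fin d) :
    vtx d σ j i = (σ j : ℝ) * (if i = j then 1 else 0) := by
  rw [vtx, pilp_smul_apply, EuclideanSpace.single_apply]

theorem vtx_mem {d : ℕ} (σ : Fin d → SignType) (j : Fin d) (hj : σ j ≠ 0) :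
    vtx d σ j ∈ crossFace d σ := by
  rw [crossFace_iff]
  have habs : ∀ i, |vtx d σ j i| = if i = j then 1 else 0 := by
    intro i
    rw [vtx_apply, abs_mul]
    by_cases hij : i = j
    · simp [hij, st_abs_eq _ hj]
    · simp [hij]
  constructor
  · intro i
    rw [habs i, vtx_apply]
    by_cases hij : i = j
    · subst hij; rw [if_pos rfl, mul_one, st_sq _ hj]
    · rw [if_neg hij, mul_zero, mul_zero]
  · rw [Finset.sum_congr rfl (fun i _ => habs i)]
    simp

theorem cross_convex (d : ℕ) : Convex ℝ (cross d) := by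
  intro x hx y hy a b ha hb hab
  show ∑ j, |(a • x + b • y) j| ≤ 1
  calc ∑ j, |(a • x + b • y) j| ≤ ∑ j, (a * |x j| + b * |y j|) := by
        apply Finset.sum_le_sum
        intro j _
        have e : (a • x + b • y) j = a * x j + b * y j := rfl
        rw [e]
        calc |a * x j + b * y j| ≤ |a * x j| + |b * y j| := abs_add_le _ _
          _ = a * |x j| + b * |y j| := by
              rw [abs_mul, abs_mul, abs_of_nonneg ha, abs_of_nonneg hb]
    _ = a * ∑ j, |x j| + b * ∑ j, |y j| := by
        rw [Finset.sum_add_distrib, Finset.mul_sum, Finset.mul_sum]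
    _ ≤ a * 1 + b * 1 :=
        add_le_add (mul_le_mul_of_nonneg_left hx ha) (mul_le_mul_of_nonneg_left hy hb)
    _ = 1 := by rw [mul_one, mul_one, hab]

theorem crossFace_convex {d : ℕ} (σ : Fin d → SignType) : Convex ℝ (crossFace d σ) := by
  have : crossFace d σ = cross d ∩ {x | lfun d (fun j => (σ j : ℝ)) x = 1} := by
    ext x
    rw [crossFace]
    simp only [Set.mem_inter_iff, Set.mem_setOf_eq, lfun_apply]
    exact Iff.rfl
  rw [this]
  exact (cross_convex d).inter (convex_hyperplane
    (ContinuousLinearMap.toLinearMap (lfun d (fun j => (σ j : ℝ)))).isLinear 1)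

theorem cross_lfun_eq_iff {d : ℕ} (c : Fin d → ℝ) {M : ℝ} (hM : 0 < M)
    (hle : ∀ j, |c j| ≤ M) (σ : Fin d → SignType)
    (hσ1 : ∀ j, |c j| = M → (σ j : ℝ) * M = c j)
    (hσ2 : ∀ j, |c j| ≠ M → σ j = 0)
    {x : Euc d} (hx : x ∈ cross d) : lfun d c x = M ↔ x ∈ crossFace d σ := by
  have hterm_le : ∀ j, c j * x j ≤ M * |x j| := by
    intro j
    calc c j * x j ≤ |c j * x j| := le_abs_self _
      _ = |c j| * |x j| := abs_mul _ _
      _ ≤ M * |x j| := mul_le_mul_of_nonneg_right (hle j) (abs_nonneg _)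
  constructor
  · intro h
    rw [lfun_apply] at h
    have hMsum : M * ∑ j, |x j| ≤ M := by
      calc M * ∑ j, |x j| ≤ M * 1 := mul_le_mul_of_nonneg_left hx (le_of_lt hM)
        _ = M := mul_one _
    have hsum1 : ∑ j, |x j| = 1 := by
      have h1 : M ≤ M * ∑ j, |x j| := by
        calc M = ∑ j, c j * x j := h.symm
          _ ≤ ∑ j, M * |x j| := Finset.sum_le_sum (fun j _ => hterm_le j)
          _ = M * ∑ j, |x j| := by rw [Finset.mul_sum]
      have h2 : M * ∑ j, |x j| = M := le_antisymm hMsum h1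
      have := mul_left_cancel₀ (ne_of_gt hM) (h2.trans (mul_one M).symm)
      exact this
    have hterm_eq : ∀ j, c j * x j = M * |x j| := by
      have hz : ∀ j ∈ Finset.univ, M * |x j| - c j * x j = 0 := by
        apply (Finset.sum_eq_zero_iff_of_nonneg
          (fun j _ => sub_nonneg.2 (hterm_le j))).1
        rw [Finset.sum_sub_distrib, ← Finset.mul_sum, hsum1, mul_one, h, sub_self]
      intro j
      have := hz j (Finset.mem_univ j)
      linarith
    rw [crossFace_iff]
    refine ⟨?_, hsum1⟩
    intro j
    by_cases hcj : |c j| = M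
    · have hσj := hσ1 j hcj
      have h1 : (σ j : ℝ) * x j * M = M * |x j| := by
        calc (σ j : ℝ) * x j * M = ((σ j : ℝ) * M) * x j := by ring
          _ = c j * x j := by rw [hσj]
          _ = M * |x j| := hterm_eq j
      have h2 : (σ j : ℝ) * x j * M = |x j| * M := by rw [h1]; ring
      exact mul_right_cancel₀ (ne_of_gt hM) h2
    · rw [hσ2 j hcj]
      have hxj : x j = 0 := by
        by_contra hne
        have habs : 0 < |x j| := abs_pos.2 hne
        have hlt : |c j| < M := lt_of_le_of_ne (hle j) hcj
        have : c j * x j < M * |x j| := by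
          calc c j * x j ≤ |c j| * |x j| := by
                calc c j * x j ≤ |c j * x j| := le_abs_self _
                  _ = |c j| * |x j| := abs_mul _ _
            _ < M * |x j| := by exact mul_lt_mul_of_pos_right hlt habs
        rw [hterm_eq j] at this
        exact lt_irrefl _ this
      rw [hxj]; simp
  · intro hmem
    rw [crossFace_iff] at hmem
    obtain ⟨h1, h2⟩ := hmem
    have hterm : ∀ j, c j * x j = M * |x j| := by
      intro j
      by_cases hcj : |c j| = M
      · have hσj := hσ1 j hcj
        calc c j * x j = ((σ j : ℝ) * M) * x j := by rw [hσj]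
          _ = M * ((σ j : ℝ) * x j) := by ring
          _ = M * |x j| := by rw [h1 j]
      · have hz := hσ2 j hcj
        have : |x j| = 0 := by rw [← h1 j, hz]; simp
        have hxj : x j = 0 := abs_eq_zero.1 this
        rw [hxj]; simp
    rw [lfun_apply, Finset.sum_congr rfl (fun j _ => hterm j), ← Finset.mul_sum, h2,
      mul_one]

theorem smul_single_mem_cross {d : ℕ} (j : Fin d) (s : ℝ) (hs : |s| ≤ 1) :
    s • EuclideanSpace.single j (1:ℝ) ∈ cross d := by
  show ∑ i, |(s • EuclideanSpace.single j (1:ℝ)) i| ≤ 1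
  have h : ∀ i, |(s • EuclideanSpace.single j (1:ℝ)) i| = |s| * (if i = j then 1 else 0) := by
    intro i
    rw [pilp_smul_apply, EuclideanSpace.single_apply, abs_mul]
    by_cases hij : i = j
    · simp [hij]
    · simp [hij]
  rw [Finset.sum_congr rfl (fun i _ => h i)]
  rw [← Finset.mul_sum]
  simp [hs]

theorem lfun_smul_single {d : ℕ} (c : Fin d → ℝ) (j : Fin d) (s : ℝ) :
    lfun d c (s • EuclideanSpace.single j (1:ℝ)) = s * c j := by
  rw [lfun_apply]
  have h : ∀ i, c i * (s • EuclideanSpace.single j (1:ℝ)) i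
      = (if i = j then s * c j else 0) := by
    intro i
    rw [pilp_smul_apply, EuclideanSpace.single_apply]
    by_cases hij : i = j
    · subst hij; rw [if_pos rfl, if_pos rfl]; ring
    · rw [if_neg hij, if_neg hij]; ring_nf
  rw [Finset.sum_congr rfl (fun i _ => h i)]
  simp

theorem crossFace_subset_cross {d : ℕ} (σ : Fin d → SignType) :
    crossFace d σ ⊆ cross d := fun _ hx => hx.1

theorem vtx_eq_smul {d : ℕ} (σ : Fin d → SignType) (j : Fin d) :
    vtx d σ j = ((σ j : ℝ)) • EuclideanSpace.single j (1:ℝ) := rfl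

theorem crossFace_exposed_cross {d : ℕ} (σ : Fin d → SignType) (j0 : Fin d)
    (hj0 : σ j0 ≠ 0) : IsExposed ℝ (cross d) (crossFace d σ) := by
  intro _
  refine ⟨lfun d (fun j => (σ j : ℝ)), ?_⟩
  have hvtx : vtx d σ j0 ∈ cross d := by
    rw [vtx_eq_smul]
    exact smul_single_mem_cross j0 _ (st_abs_le _)
  have hvtxval : lfun d (fun j => (σ j : ℝ)) (vtx d σ j0) = 1 := by
    rw [vtx_eq_smul, lfun_smul_single, st_sq _ hj0]
  ext x
  constructor
  · rintro ⟨hx1, hx2⟩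
    refine ⟨hx1, fun y hy => ?_⟩
    have hy1 : lfun d (fun j => (σ j : ℝ)) y ≤ 1 :=
      cross_lfun_le _ (fun j => st_abs_le _) zero_le_one hy
    have hx2' : lfun d (fun j => (σ j : ℝ)) x = 1 := by rw [lfun_apply]; exact hx2
    rw [hx2']
    exact hy1
  · rintro ⟨hx, hmax⟩
    refine ⟨hx, ?_⟩
    have hle : lfun d (fun j => (σ j : ℝ)) x ≤ 1 :=
      cross_lfun_le _ (fun j => st_abs_le _) zero_le_one hx
    have hge := hmax (vtx d σ j0) hvtx
    rw [hvtxval] at hge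
    have heq := le_antisymm hle hge
    rw [lfun_apply] at heq
    exact heq

theorem cross_exposed_char {d : ℕ} {F : Set (Euc d)}
    (hexp : IsExposed ℝ (cross d) F) (hne : F.Nonempty) :
    F = cross d ∨ ∃ σ : Fin d → SignType, (∃ j0, σ j0 ≠ 0) ∧ F = crossFace d σ := by
  classical
  obtain ⟨l, rfl⟩ := hexp hne
  set c : Fin d → ℝ := fun j => l (EuclideanSpace.single j 1) with hc
  have hmx : ∀ y, l y = lfun d c y := fun y => lfun_eq_clf l y
  by_cases hc0 : ∀ j, c j = 0
  · left
    ext x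
    constructor
    · exact fun hx => hx.1
    · intro hx
      refine ⟨hx, fun y hy => ?_⟩
      rw [hmx, hmx, lfun_apply, lfun_apply]
      have hz : ∀ z : Euc d, ∑ j, c j * z j = 0 := by
        intro z
        apply Finset.sum_eq_zero
        intro j _
        rw [hc0 j, zero_mul]
      rw [hz, hz]
  · right
    push_neg at hc0
    obtain ⟨ja, hja⟩ := hc0
    -- maximum of |c|
    obtain ⟨j0, _, hj0max⟩ := Finset.exists_max_image Finset.univ (fun j => |c j|)
      ⟨ja, Finset.mem_univ ja⟩
    set M : ℝ := |c j0| with hM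
    have hMpos : 0 < M := by
      have := hj0max ja (Finset.mem_univ ja)
      have h2 : 0 < |c ja| := abs_pos.2 hja
      exact lt_of_lt_of_le h2 this
    set σ : Fin d → SignType := fun j => if |c j| = M then SignType.sign (c j) else 0
      with hσ
    have hσ1 : ∀ j, |c j| = M → (σ j : ℝ) * M = c j := by
      intro j hj
      rw [hσ]
      simp only [if_pos hj]
      rw [← hj, real_sign_mul_abs]
    have hσ2 : ∀ j, |c j| ≠ M → σ j = 0 := by
      intro j hj
      rw [hσ]
      simp only [if_neg hj]
    have hσj0 : σ j0 ≠ 0 := by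
      rw [hσ]
      simp only [if_pos (rfl : |c j0| = M)]
      have : c j0 ≠ 0 := by
        intro h0
        rw [hM, h0, abs_zero] at hMpos
        exact lt_irrefl _ hMpos
      simp [sign_eq_zero_iff, this, hM]
    refine ⟨σ, ⟨j0, hσj0⟩, ?_⟩
    have hvtx := vtx_mem σ j0 hσj0
    have hvtxval : lfun d c (vtx d σ j0) = M :=
      (cross_lfun_eq_iff c hMpos (fun j => hj0max j (Finset.mem_univ j)) σ hσ1 hσ2
        (crossFace_subset_cross σ hvtx)).2 hvtx
    ext x
    constructor
    · rintro ⟨hx, hmax⟩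
      rw [← cross_lfun_eq_iff c hMpos (fun j => hj0max j (Finset.mem_univ j)) σ hσ1 hσ2 hx]
      apply le_antisymm
      · exact cross_lfun_le c (fun j => hj0max j (Finset.mem_univ j)) (le_of_lt hMpos) hx
      · have := hmax (vtx d σ j0) (crossFace_subset_cross σ hvtx)
        rw [hmx, hmx, hvtxval] at this
        exact this
    · intro hx
      refine ⟨crossFace_subset_cross σ hx, fun y hy => ?_⟩
      rw [hmx, hmx]
      have hxval : lfun d c x = M :=
        (cross_lfun_eq_iff c hMpos (fun j => hj0max j (Finset.mem_univ j)) σ hσ1 hσ2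
          (crossFace_subset_cross σ hx)).2 hx
      rw [hxval]
      exact cross_lfun_le c (fun j => hj0max j (Finset.mem_univ j)) (le_of_lt hMpos) hy

theorem zero_mem_cross {d : ℕ} : (0 : Euc d) ∈ cross d := by
  show ∑ i, |(0 : Euc d) i| ≤ 1
  have : ∀ i, |(0 : Euc d) i| = 0 := fun i => by
    show |(0:ℝ)| = 0
    simp
  rw [Finset.sum_congr rfl (fun i _ => this i)]
  simp

theorem cross_finrank (d : ℕ) :
    Module.finrank ℝ (vectorSpan ℝ (cross d)) = d := by
  have htop : vectorSpan ℝ (cross d) = ⊤ := by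
    apply le_antisymm le_top
    intro x _
    rw [euc_decomp d x]
    apply Submodule.sum_mem
    intro j _
    apply Submodule.smul_mem
    have h1 : EuclideanSpace.single j (1:ℝ) ∈ cross d := by
      have := smul_single_mem_cross j 1 (by norm_num)
      rwa [one_smul] at this
    have := vsub_mem_vectorSpan ℝ h1 (zero_mem_cross (d := d))
    rwa [vsub_eq_sub, sub_zero] at this
  rw [htop, finrank_top, finrank_euclideanSpace_fin]

theorem crossFace_vectorSpan {d : ℕ} (σ : Fin d → SignType) (j0 : Fin d)
    (hj0 : σ j0 ≠ 0) :
    vectorSpan ℝ (crossFace d σ) =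
      Submodule.span ℝ (Set.range (fun jj : {j : Fin d // σ j ≠ 0 ∧ j ≠ j0} =>
        vtx d σ jj.1 - vtx d σ j0)) := by
  apply le_antisymm
  · apply Submodule.span_le.2
    rintro u hu
    rw [Set.mem_vsub] at hu
    obtain ⟨x, hx, y, hy, rfl⟩ := hu
    rw [vsub_eq_sub]
    have hxc := (crossFace_iff σ x).1 hx
    have hyc := (crossFace_iff σ y).1 hy
    set b : Fin d → ℝ := fun j => (σ j : ℝ) * (x j - y j) with hb
    have hsum0 : ∑ j, b j = 0 := by
      have h1 : ∑ j, (σ j : ℝ) * x j = 1 := hx.2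
      have h2 : ∑ j, (σ j : ℝ) * y j = 1 := hy.2
      have : ∑ j, b j = ∑ j, (σ j : ℝ) * x j - ∑ j, (σ j : ℝ) * y j := by
        rw [← Finset.sum_sub_distrib]
        apply Finset.sum_congr rfl
        intro j _
        rw [hb]; ring
      rw [this, h1, h2, sub_self]
    have hdecomp : x - y = ∑ j, b j • ((σ j : ℝ) • EuclideanSpace.single j (1:ℝ)) := by
      ext m
      rw [WithLp.ofLp_sum, Finset.sum_apply m Finset.univ _]
      have hterm : ∀ j, (b j • ((σ j : ℝ) • EuclideanSpace.single j (1:ℝ))) m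
          = (if m = j then b j * (σ j : ℝ) else 0) := by
        intro j
        rw [pilp_smul_apply, pilp_smul_apply, EuclideanSpace.single_apply]
        by_cases hmj : m = j
        · rw [if_pos hmj, if_pos hmj]; ring
        · rw [if_neg hmj, if_neg hmj]; ring
      rw [Finset.sum_congr rfl (fun j _ => hterm j), Finset.sum_ite_eq, if_pos
        (Finset.mem_univ m)]
      show x m - y m = b m * (σ m : ℝ)
      by_cases hm : σ m = 0
      · have hx0 : |x m| = 0 := by rw [← hxc.1 m, hm]; simp
        have hy0 : |y m| = 0 := by rw [← hyc.1 m, hm]; simp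
        rw [abs_eq_zero.1 hx0, abs_eq_zero.1 hy0, hb, hm]
        simp
      · rw [hb]
        have := st_sq _ hm
        calc x m - y m = ((σ m : ℝ) * (σ m : ℝ)) * (x m - y m) := by rw [this, one_mul]
          _ = (σ m : ℝ) * (x m - y m) * (σ m : ℝ) := by ring
    rw [hdecomp,
      show (∑ j, b j • ((σ j : ℝ) • EuclideanSpace.single j (1:ℝ)))
        = ∑ j, b j • ((σ j : ℝ) • EuclideanSpace.single j (1:ℝ)
            - (σ j0 : ℝ) • EuclideanSpace.single j0 (1:ℝ))
          + (∑ j, b j) • ((σ j0 : ℝ) • EuclideanSpace.single j0 (1:ℝ)) from by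
        rw [Finset.sum_smul, ← Finset.sum_add_distrib]
        apply Finset.sum_congr rfl
        intro j _
        rw [smul_sub]
        abel]
    rw [hsum0, zero_smul, add_zero]
    apply Submodule.sum_mem
    intro j _
    by_cases hj : σ j = 0
    · have : b j = 0 := by
        show (σ j : ℝ) * (x j - y j) = 0
        rw [hj]; simp
      rw [this, zero_smul]
      exact Submodule.zero_mem _
    · by_cases hjj : j = j0
      · subst hjj
        rw [sub_self, smul_zero]
        exact Submodule.zero_mem _
      · exact Submodule.smul_mem _ _ (Submodule.subset_span ⟨⟨j, hj, hjj⟩, rfl⟩)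
  · apply Submodule.span_le.2
    rintro _ ⟨⟨j, hj, hjj⟩, rfl⟩
    have h1 := vtx_mem σ j hj
    have h2 := vtx_mem σ j0 hj0
    have := vsub_mem_vectorSpan ℝ h1 h2
    rwa [vsub_eq_sub] at this

theorem st_mul_eq_one {s t : SignType} (h : (s:ℝ) * (t:ℝ) = 1) : s = t := by
  cases s <;> cases t <;> simp_all <;> norm_num at h

theorem crossFace_li {d : ℕ} (σ : Fin d → SignType) (j0 : Fin d) (hj0 : σ j0 ≠ 0) :
    LinearIndependent ℝ (fun jj : {j : Fin d // σ j ≠ 0 ∧ j ≠ j0} =>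
      vtx d σ jj.1 - vtx d σ j0) := by
  rw [Fintype.linearIndependent_iff]
  intro g hg i1
  have happ := congrArg (fun z : Euc d => z i1.1) hg
  simp only at happ
  rw [WithLp.ofLp_sum, Finset.sum_apply i1.1 Finset.univ _] at happ
  have hterm : ∀ i : {j : Fin d // σ j ≠ 0 ∧ j ≠ j0},
      (g i • (vtx d σ i.1 - vtx d σ j0)) i1.1
        = (if i1 = i then g i * (σ i1.1 : ℝ) else 0) := by
    intro i
    rw [pilp_smul_apply, pilp_sub_apply, vtx_apply, vtx_apply, if_neg i1.2.2]
    by_cases h : i1 = i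
    · subst h
      rw [if_pos rfl, if_pos rfl]
      ring
    · rw [if_neg (fun hh => h (Subtype.ext hh)), if_neg h]
      ring
  rw [Finset.sum_congr rfl (fun i _ => hterm i), Finset.sum_ite_eq,
    if_pos (Finset.mem_univ i1)] at happ
  have h0 : (0 : Euc d) i1.1 = 0 := rfl
  rw [h0] at happ
  rcases mul_eq_zero.1 happ with h | h
  · exact h
  · exact absurd h (st_ne_zero i1.2.1)

theorem crossFace_finrank {d : ℕ} (σ : Fin d → SignType) (j0 : Fin d) (hj0 : σ j0 ≠ 0) :
    Module.finrank ℝ (vectorSpan ℝ (crossFace d σ)) = (suppF σ).card - 1 := by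
  classical
  rw [crossFace_vectorSpan σ j0 hj0, finrank_span_eq_card (crossFace_li σ j0 hj0),
    Fintype.card_subtype]
  have heq : Finset.univ.filter (fun j : Fin d => σ j ≠ 0 ∧ j ≠ j0)
      = (suppF σ).erase j0 := by
    ext j
    rw [Finset.mem_filter, Finset.mem_erase, suppF, Finset.mem_filter]
    constructor
    · rintro ⟨h1, h2, h3⟩; exact ⟨h3, h1, h2⟩
    · rintro ⟨h1, h2, h3⟩; exact ⟨h2, h3, h1⟩
  rw [heq, Finset.card_erase_of_mem]
  rw [suppF, Finset.mem_filter]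
  exact ⟨Finset.mem_univ _, hj0⟩

theorem crossFace_key {d : ℕ} {σ τ : Fin d → SignType}
    (h : crossFace d σ = crossFace d τ) : ∀ j, σ j ≠ 0 → τ j = σ j := by
  intro j hj
  have hv := vtx_mem σ j hj
  rw [h, crossFace_iff] at hv
  have h1 := hv.1 j
  have hvj : vtx d σ j j = (σ j : ℝ) := by rw [vtx_apply, if_pos rfl, mul_one]
  rw [hvj, st_abs_eq _ hj] at h1
  exact st_mul_eq_one h1

theorem crossFace_inj {d : ℕ} {σ τ : Fin d → SignType}
    (h : crossFace d σ = crossFace d τ) : σ = τ := by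
  funext j
  by_cases hσ : σ j = 0
  · by_cases hτ : τ j = 0
    · rw [hσ, hτ]
    · exact crossFace_key h.symm j hτ
  · exact (crossFace_key h j hσ).symm

theorem sum_ite_supp {d : ℕ} (σ : Fin d → SignType) (r : ℝ) :
    ∑ j, (if σ j = 0 then 0 else r) = ((suppF σ).card : ℝ) * r := by
  classical
  have hf : Finset.filter (fun j => ¬ σ j = 0) Finset.univ = suppF σ := by
    ext j; simp [suppF]
  rw [Finset.sum_ite, Finset.sum_const, Finset.sum_const, smul_zero, zero_add, hf,
    nsmul_eq_mul]

theorem crossFace_exposed_rho {d : ℕ} {k : ℝ} (hk : 0 < k) (σ : Fin d → SignType)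
    (j0 : Fin d) (hj0 : σ j0 ≠ 0) (hcard : ((suppF σ).card : ℝ) < k) :
    IsExposed ℝ (rho d k) (crossFace d σ) := by
  intro _
  refine ⟨lfun d (fun j => (σ j : ℝ)), ?_⟩
  refine (argmax_hull (M := 1) ?_ ?_ ?_ ?_ (crossFace_convex σ)
    ⟨vtx d σ j0, vtx_mem σ j0 hj0⟩).symm
  · rintro a (ha | ha)
    · exact cross_lfun_le _ (fun j => st_abs_le _) zero_le_one ha
    · have h1 := cube_lfun_le hk (fun j => ((σ j : ℝ))) ((mem_scaled_hcube hk a).1 ha)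
      rw [sum_abs_coe] at h1
      have h2 : ((suppF σ).card : ℝ)/k < 1 := by rw [div_lt_one hk]; exact hcard
      linarith
  · rintro a (ha | ha) haM
    · exact ⟨ha, by rw [lfun_apply] at haM; exact haM⟩
    · exfalso
      have h1 := cube_lfun_le hk (fun j => ((σ j : ℝ))) ((mem_scaled_hcube hk a).1 ha)
      rw [haM, sum_abs_coe] at h1
      have h2 : ((suppF σ).card : ℝ)/k < 1 := by rw [div_lt_one hk]; exact hcard
      linarith
  · exact subset_trans (crossFace_subset_cross σ) cross_subset_rho
  · intro x hx
    rw [lfun_apply]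
    exact hx.2

theorem rho_cross_constraint {d : ℕ} {k : ℝ} (hk : 0 < k) (hkd : k < d)
    (σ : Fin d → SignType) (j0 : Fin d) (hj0 : σ j0 ≠ 0)
    (hexp : IsExposed ℝ (rho d k) (crossFace d σ)) :
    ((suppF σ).card : ℝ) < k := by
  classical
  obtain ⟨m, hm⟩ := hexp ⟨vtx d σ j0, vtx_mem σ j0 hj0⟩
  set c : Fin d → ℝ := fun j => m (EuclideanSpace.single j 1) with hc
  have hmx : ∀ y, m y = lfun d c y := fun y => lfun_eq_clf m y
  have hvtxF := vtx_mem σ j0 hj0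
  have hvtx' := hm ▸ hvtxF
  obtain ⟨hvρ, hopt⟩ := hvtx'
  set M0 : ℝ := m (vtx d σ j0) with hM0
  have hub : ∀ y ∈ rho d k, m y ≤ M0 := hopt
  have havert : ∀ j, |c j| ≤ M0 := by
    intro j
    have hp1 : m ((1:ℝ) • EuclideanSpace.single j 1) = c j := by
      rw [hmx, lfun_smul_single, one_mul]
    have hp2 : m ((-1:ℝ) • EuclideanSpace.single j 1) = -(c j) := by
      rw [hmx, lfun_smul_single]; ring
    have h1 := hub _ (cross_subset_rho (smul_single_mem_cross j 1 (by norm_num)))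
    have h2 := hub _ (cross_subset_rho (smul_single_mem_cross j (-1) (by norm_num)))
    rw [hp1] at h1
    rw [hp2] at h2
    rw [abs_le]
    constructor <;> linarith
  have hvertval : ∀ j, σ j ≠ 0 → c j = (σ j : ℝ) * M0 := by
    intro j hj
    have hvF := vtx_mem σ j hj
    have hv' := hm ▸ hvF
    obtain ⟨hvρ2, hopt2⟩ := hv'
    have h3 : m (vtx d σ j) = M0 := le_antisymm (hub _ hvρ2) (hopt2 _ hvρ)
    rw [hmx, vtx_eq_smul, lfun_smul_single] at h3
    have hsq := st_sq _ hj
    calc c j = ((σ j:ℝ) * (σ j:ℝ)) * c j := by rw [hsq, one_mul]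
      _ = (σ j:ℝ) * ((σ j:ℝ) * c j) := by ring
      _ = (σ j:ℝ) * M0 := by rw [h3]
  have hM0pos : 0 < M0 := by
    rcases lt_or_ge 0 M0 with h | h
    · exact h
    · exfalso
      have hc0 : ∀ j, c j = 0 := fun j =>
        abs_eq_zero.1 (le_antisymm (le_trans (havert j) h) (abs_nonneg _))
      have hm0 : ∀ y : Euc d, m y = 0 := by
        intro y
        rw [hmx, lfun_apply]
        apply Finset.sum_eq_zero
        intro j _
        rw [hc0 j, zero_mul]
      have h0F : (0 : Euc d) ∈ crossFace d σ := by
        rw [hm]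
        exact ⟨cross_subset_rho zero_mem_cross, fun y hy => by rw [hm0, hm0]⟩
      have h2 := h0F.2
      have hz : ∑ j, (σ j:ℝ) * (0:Euc d) j = 0 := by
        apply Finset.sum_eq_zero
        intro j _
        show (σ j:ℝ) * 0 = 0
        ring
      rw [hz] at h2
      norm_num at h2
  have hctrcube := cubeFace_subset hk σ (ctr_mem hk σ)
  have hqval : m (ctr d k σ) = ((suppF σ).card : ℝ) * (M0/k) := by
    rw [hmx, lfun_apply]
    have hterm : ∀ j, c j * ctr d k σ j = (if σ j = 0 then 0 else M0/k) := by
      intro j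
      rw [ctr_apply]
      by_cases hj : σ j = 0
      · rw [if_pos hj, hj]
        simp
      · rw [if_neg hj, hvertval j hj]
        have hsq := st_sq _ hj
        calc (σ j:ℝ) * M0 * ((σ j:ℝ)/k) = ((σ j:ℝ) * (σ j:ℝ)) * (M0 / k) := by ring
          _ = M0/k := by rw [hsq, one_mul]
    rw [Finset.sum_congr rfl (fun j _ => hterm j), sum_ite_supp]
  have hcard_le : ((suppF σ).card : ℝ) * (M0/k) ≤ M0 := by
    rw [← hqval]
    exact hub _ (cube_subset_rho hctrcube)
  have hle : ((suppF σ).card : ℝ) ≤ k := by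
    by_contra hgt
    push_neg at hgt
    have hMk : 0 < M0/k := by positivity
    have : M0 < ((suppF σ).card : ℝ) * (M0/k) := by
      calc M0 = k * (M0/k) := by field_simp
        _ < ((suppF σ).card : ℝ) * (M0/k) := by
          exact mul_lt_mul_of_pos_right hgt hMk
    linarith
  by_contra hnotlt
  push_neg at hnotlt
  have heq : ((suppF σ).card : ℝ) = k := le_antisymm hle hnotlt
  have hlt_d : (suppF σ).card < d := by
    have : ((suppF σ).card:ℝ) < d := by rw [heq]; exact hkd
    exact_mod_cast this
  have hex : ∃ j1, j1 ∉ suppF σ := by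
    by_contra hall
    push_neg at hall
    have : suppF σ = Finset.univ := Finset.eq_univ_iff_forall.2 hall
    rw [this, Finset.card_univ, Fintype.card_fin] at hlt_d
    exact lt_irrefl _ hlt_d
  obtain ⟨j1, hj1⟩ := hex
  have hσj1 : σ j1 = 0 := by
    by_contra hne
    exact hj1 (Finset.mem_filter.2 ⟨Finset.mem_univ _, hne⟩)
  have hcoord : ∀ s : ℝ, ∀ j, ((ctr d k σ + (s/k) • EuclideanSpace.single j1 1 : Euc d)) j
      = (σ j:ℝ)/k + (s/k) * (if j = j1 then 1 else 0) := by
    intro s j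
    rw [pilp_add_apply, pilp_smul_apply, ctr_apply, EuclideanSpace.single_apply]
  have hmem_qs : ∀ s : ℝ, |s| ≤ 1 →
      ctr d k σ + (s/k) • EuclideanSpace.single j1 1 ∈ (1/k) • hcube d := by
    intro s hs
    rw [mem_scaled_hcube hk]
    intro j
    rw [hcoord s j]
    by_cases hj : j = j1
    · subst hj
      rw [hσj1]
      simp only [SignType.coe_zero, zero_div, if_pos rfl, mul_one, zero_add,
        eq_self_iff_true, if_true]
      rw [abs_div, abs_of_pos hk]
      gcongr
    · rw [if_neg hj, mul_zero, add_zero, abs_div, abs_of_pos hk]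
      gcongr
      exact st_abs_le _
  have hqs_val : ∀ s : ℝ, m (ctr d k σ + (s/k) • EuclideanSpace.single j1 1)
      = M0 + (s/k) * c j1 := by
    intro s
    rw [map_add, hqval, heq]
    have h1 : m ((s/k) • EuclideanSpace.single j1 1) = (s/k) * c j1 := by
      rw [hmx, lfun_smul_single]
    rw [h1]
    congr 1
    field_simp
  have hcj1 : c j1 = 0 := by
    have h1 := hub _ (cube_subset_rho (hmem_qs 1 (by norm_num)))
    have h2 := hub _ (cube_subset_rho (hmem_qs (-1) (by norm_num)))
    rw [hqs_val] at h1 h2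
    rw [neg_div] at h2
    have hk' : 0 < 1/k := by positivity
    rcases lt_trichotomy (c j1) 0 with h | h | h
    · exfalso
      have hpos : 0 < (-(1/k)) * c j1 := mul_pos_of_neg_of_neg (by linarith) h
      linarith
    · exact h
    · exfalso
      have hpos : 0 < (1/k) * c j1 := mul_pos hk' h
      linarith
  have hq1F : ctr d k σ + ((1:ℝ)/k) • EuclideanSpace.single j1 1 ∈ crossFace d σ := by
    rw [hm]
    refine ⟨cube_subset_rho (hmem_qs 1 (by norm_num)), fun y hy => ?_⟩
    rw [hqs_val 1, hcj1, mul_zero, add_zero]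
    exact hub y hy
  have h1 := hq1F.1
  have hcoord2 : ∀ j, |((ctr d k σ + ((1:ℝ)/k) • EuclideanSpace.single j1 1 : Euc d)) j|
      = (if σ j = 0 then 0 else 1/k) + (if j = j1 then 1/k else 0) := by
    intro j
    rw [hcoord 1 j]
    by_cases hj : j = j1
    · subst hj
      rw [hσj1]
      simp only [SignType.coe_zero, zero_div, zero_add, eq_self_iff_true, if_true,
        mul_one]
      rw [abs_div, abs_one, abs_of_pos hk]
    · rw [if_neg hj, if_neg hj, mul_zero, add_zero, add_zero, abs_div, abs_of_pos hk]
      by_cases hσj : σ j = 0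
      · rw [if_pos hσj, hσj]
        simp
      · rw [if_neg hσj, st_abs_eq _ hσj]
  have hsum : ∑ j, |((ctr d k σ + ((1:ℝ)/k) • EuclideanSpace.single j1 1 : Euc d)) j|
      = ((suppF σ).card:ℝ) * (1/k) + 1/k := by
    rw [Finset.sum_congr rfl (fun j _ => hcoord2 j), Finset.sum_add_distrib, sum_ite_supp]
    congr 1
    rw [Finset.sum_ite_eq' Finset.univ j1 (fun _ => (1:ℝ)/k)]
    rw [if_pos (Finset.mem_univ j1)]
  have hfin : ((suppF σ).card:ℝ) * (1/k) + 1/k ≤ 1 := by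
    rw [← hsum]
    exact h1
  rw [heq] at hfin
  have hkk : k * (1/k) = 1 := by field_simp
  rw [hkk] at hfin
  have hk' : 0 < 1/k := by positivity
  linarith

theorem cross_branch_set {d : ℕ} {k : ℝ} (hk : 0 < k) (hkd : k < d) (i : ℕ) (hid : i < d) :
    {F : Set (Euc d) | IsExposed ℝ (rho d k) F ∧ IsExposed ℝ (cross d) F ∧ F.Nonempty ∧
        Module.finrank ℝ (vectorSpan ℝ F) = i}
      = crossFace d '' {σ | (suppF σ).card = i + 1 ∧ ((i:ℝ) + 1 < k)} := by
  ext F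
  constructor
  · rintro ⟨hρ, hcr, hne, hdim⟩
    rcases cross_exposed_char hcr hne with hF | ⟨σ, ⟨j0, hj0⟩, rfl⟩
    · exfalso
      rw [hF, cross_finrank] at hdim
      omega
    · have hfr := crossFace_finrank σ j0 hj0
      rw [hdim] at hfr
      have hcard1 : 1 ≤ (suppF σ).card :=
        Finset.card_pos.2 ⟨j0, Finset.mem_filter.2 ⟨Finset.mem_univ _, hj0⟩⟩
      have hcard : (suppF σ).card = i + 1 := by omega
      have hklt := rho_cross_constraint hk hkd σ j0 hj0 hρ
      rw [hcard] at hklt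
      refine ⟨σ, ⟨hcard, ?_⟩, rfl⟩
      push_cast at hklt ⊢
      linarith
  · rintro ⟨σ, ⟨hcard, hik⟩, rfl⟩
    have hj0 : ∃ j0, σ j0 ≠ 0 := by
      have hpos : 0 < (suppF σ).card := by omega
      obtain ⟨j0, hj0⟩ := Finset.card_pos.1 hpos
      exact ⟨j0, (Finset.mem_filter.1 hj0).2⟩
    obtain ⟨j0, hj0⟩ := hj0
    have hcR : ((suppF σ).card : ℝ) < k := by rw [hcard]; push_cast; linarith
    refine ⟨crossFace_exposed_rho hk σ j0 hj0 hcR, crossFace_exposed_cross σ j0 hj0,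
      ⟨vtx d σ j0, vtx_mem σ j0 hj0⟩, ?_⟩
    rw [crossFace_finrank σ j0 hj0, hcard]
    omega

theorem cross_count {d : ℕ} {k : ℝ} (hk1 : 1 ≤ k) (hkd : k < d) (i : ℕ)
    (hi : (i:ℝ) < k - 1) :
    {F : Set (Euc d) | IsExposed ℝ (rho d k) F ∧ IsExposed ℝ (cross d) F ∧ F.Nonempty ∧
        Module.finrank ℝ (vectorSpan ℝ F) = i}.ncard = 2 ^ (i + 1) * d.choose (i + 1) := by
  classical
  have hk : 0 < k := lt_of_lt_of_le one_pos hk1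
  have hid : i < d := by
    have : (i:ℝ) < d := by linarith
    exact_mod_cast this
  rw [cross_branch_set hk hkd i hid]
  have hset : {σ : Fin d → SignType | (suppF σ).card = i + 1 ∧ ((i:ℝ) + 1 < k)}
      = ↑(Finset.univ.filter (fun σ : Fin d → SignType => (suppF σ).card = i + 1)) := by
    ext σ
    simp only [Set.mem_setOf_eq, Finset.coe_filter, Finset.mem_univ, true_and]
    constructor
    · rintro ⟨h, _⟩; exact h
    · intro h; exact ⟨h, by linarith⟩
  rw [hset, Set.ncard_image_of_injOn (fun a _ b _ h => crossFace_inj h),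
    Set.ncard_coe_finset, card_sign_supp, mul_comm]

theorem cross_empty {d : ℕ} {k : ℝ} (hk1 : 1 ≤ k) (hkd : k < d) (i : ℕ)
    (hi : k - 1 ≤ (i:ℝ)) (hid : i < d) :
    {F : Set (Euc d) | IsExposed ℝ (rho d k) F ∧ IsExposed ℝ (cross d) F ∧ F.Nonempty ∧
        Module.finrank ℝ (vectorSpan ℝ F) = i} = ∅ := by
  have hk : 0 < k := lt_of_lt_of_le one_pos hk1
  rw [cross_branch_set hk hkd i hid]
  ext F
  simp only [Set.mem_image, Set.mem_setOf_eq, Set.mem_empty_iff_false, iff_false,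
    not_exists]
  rintro σ ⟨⟨h1, h2⟩, _⟩
  linarith


/-- If `k > 1` then `ρ_{d,k}` and `γ_d/k` share exactly `2^{d-i} binom(d,i)` faces of
dimension `i` when `0 ≤ i < d-k` and none when `d-k ≤ i < d`; if `k < d` then `ρ_{d,k}` and
`β_d` share exactly `2^{i+1} binom(d,i+1)` faces of dimension `i` when `0 ≤ i < k-1` and
none when `k-1 ≤ i < d`. -/
theorem shared_faces_rho (d : ℕ) (hd : 1 ≤ d) (k : ℝ) (hk1 : 1 ≤ k) (hkd : k ≤ d) :
    (1 < k → ∀ i : ℕ,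
      ((i : ℝ) < d - k →
        {F : Set (EuclideanSpace ℝ (Fin d)) | IsExposed ℝ (rho d k) F ∧
            IsExposed ℝ ((1 / k) • hcube d) F ∧ F.Nonempty ∧
            Module.finrank ℝ (vectorSpan ℝ F) = i}.ncard = 2 ^ (d - i) * d.choose i) ∧
      ((d : ℝ) - k ≤ (i : ℝ) → i < d →
        {F : Set (EuclideanSpace ℝ (Fin d)) | IsExposed ℝ (rho d k) F ∧
            IsExposed ℝ ((1 / k) • hcube d) F ∧ F.Nonempty ∧
            Module.finrank ℝ (vectorSpan ℝ F) = i} = ∅)) ∧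
    (k < d → ∀ i : ℕ,
      ((i : ℝ) < k - 1 →
        {F : Set (EuclideanSpace ℝ (Fin d)) | IsExposed ℝ (rho d k) F ∧
            IsExposed ℝ (cross d) F ∧ F.Nonempty ∧
            Module.finrank ℝ (vectorSpan ℝ F) = i}.ncard = 2 ^ (i + 1) * d.choose (i + 1)) ∧
      (k - 1 ≤ (i : ℝ) → i < d →
        {F : Set (EuclideanSpace ℝ (Fin d)) | IsExposed ℝ (rho d k) F ∧
            IsExposed ℝ (cross d) F ∧ F.Nonempty ∧
            Module.finrank ℝ (vectorSpan ℝ F) = i} = ∅)) := by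
  constructor
  · intro hk1' i
    exact ⟨fun hi => cube_count hd hk1' hkd i hi,
      fun hi hid => cube_empty hd hk1' i hi hid⟩
  · intro hkd' i
    exact ⟨fun hi => cross_count hk1 hkd' i hi,
      fun hi hid => cross_empty hk1 hkd' i hi hid⟩
end
end

section
/- Let k be an integer with 1 < k < d. The total number of non-empty exposed faces of ρ_{d,k} (including ρ_{d,k} itself) is at least 3^d; in particular, ρ_{d,k} satisfies Kalai's 3^d conjecture for centrally symmetric polytopes. -/
open scoped Pointwise

noncomputable section

section Aux


def cubeV (d : ℕ) : Set (EuclideanSpace ℝ (Fin d)) := {v | ∀ i, v i = 1 ∨ v i = -1}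
def crossV (d : ℕ) : Set (EuclideanSpace ℝ (Fin d)) :=
  Set.range (fun p : Fin d × Bool => EuclideanSpace.single p.1 (if p.2 then (1:ℝ) else -1))
def vertSet (d : ℕ) (k : ℝ) : Set (EuclideanSpace ℝ (Fin d)) :=
  crossV d ∪ (1 / k) • cubeV d

lemma cubeV_subset_hcube : cubeV d ⊆ hcube d := by
  intro v hv i
  rcases hv i with h | h <;> rw [h] <;> norm_num

lemma crossV_subset_cross : crossV d ⊆ cross d := by
  rintro w ⟨p, rfl⟩
  show ∑ i, |EuclideanSpace.single p.1 (if p.2 then (1:ℝ) else -1) i| ≤ 1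
  have : ∀ i, |EuclideanSpace.single p.1 (if p.2 then (1:ℝ) else -1) i|
      = if i = p.1 then |if p.2 then (1:ℝ) else -1| else 0 := by
    intro i
    rw [EuclideanSpace.single_apply]
    by_cases h : i = p.1 <;> simp [h]
  rw [Finset.sum_congr rfl fun i _ => this i, Finset.sum_ite_eq' Finset.univ p.1]
  rcases p.2 <;> simp

lemma vertSet_finite (k : ℝ) : (vertSet d k).Finite := by
  apply Set.Finite.union (Set.finite_range _)
  apply Set.Finite.smul_set
  have : cubeV d ⊆ (WithLp.toLp 2) '' ((Set.univ : Set (Fin d)).pi (fun _ => ({1, -1} : Set ℝ))) := by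
    intro v hv
    exact ⟨v.ofLp, fun i _ => hv i, rfl⟩
  exact Set.Finite.subset ((Set.Finite.pi fun _ => (Set.finite_singleton _).insert _).image _) this

lemma hcube_subset_hull : hcube d ⊆ convexHull ℝ (cubeV d) := by
  intro x hx
  have h : x.ofLp ∈ convexHull ℝ ((Set.univ : Set (Fin d)).pi (fun _ => ({1, -1} : Set ℝ))) := by
    apply mem_convexHull_pi
    intro i _
    rw [convexHull_pair, segment_symm, segment_eq_Icc (by norm_num : (-1:ℝ) ≤ 1)]
    exact abs_le.mp (hx i)
  have he : ((WithLp.linearEquiv 2 ℝ (Fin d → ℝ)).symm : (Fin d → ℝ) →ₗ[ℝ] EuclideanSpace ℝ (Fin d)) ''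
      ((Set.univ : Set (Fin d)).pi (fun _ => ({1, -1} : Set ℝ))) ⊆ cubeV d := by
    rintro _ ⟨y, hy, rfl⟩ i
    exact hy i (Set.mem_univ i)
  have h2 := Set.mem_image_of_mem
    ((WithLp.linearEquiv 2 ℝ (Fin d → ℝ)).symm : (Fin d → ℝ) →ₗ[ℝ] EuclideanSpace ℝ (Fin d)) h
  rw [LinearMap.image_convexHull] at h2
  exact convexHull_mono he h2

lemma single_eq_smul (i : Fin d) (c : ℝ) :
    EuclideanSpace.single i c = c • EuclideanSpace.single i (1:ℝ) := by
  ext j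
  simp [EuclideanSpace.single_apply, mul_ite]

lemma eq_sum_single (x : EuclideanSpace ℝ (Fin d)) :
    x = ∑ i, x i • EuclideanSpace.single i (1:ℝ) := by
  have h := (EuclideanSpace.basisFun (Fin d) ℝ).sum_repr x
  simp only [EuclideanSpace.basisFun_apply, EuclideanSpace.basisFun_repr] at h
  exact h.symm

lemma cross_subset_hull (hd : 0 < d) : cross d ⊆ convexHull ℝ (crossV d) := by
  intro x hx
  have hd0 : (d:ℝ) ≠ 0 := Nat.cast_ne_zero.mpr hd.ne'
  set t : ℝ := ∑ i, |x i| with ht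
  have hx' : t ≤ 1 := hx
  set pt : Fin d × Bool → EuclideanSpace ℝ (Fin d) :=
    fun p => EuclideanSpace.single p.1 (if p.2 then (1:ℝ) else -1) with hpt
  set w : Fin d × Bool → ℝ := fun p =>
    (|x p.1| + (if p.2 then x p.1 else -x p.1)) / 2 + (1 - t) / (2 * d) with hwdef
  have hw0 : ∀ p ∈ Finset.univ, 0 ≤ w p := by
    intro p _
    have h1 : 0 ≤ |x p.1| + (if p.2 then x p.1 else -x p.1) := by
      rcases p.2 <;> simp <;> nlinarith [neg_abs_le (x p.1), le_abs_self (x p.1)]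
    have h2 : (0:ℝ) ≤ (1 - t) / (2 * d) := div_nonneg (by linarith) (by positivity)
    have h3 := div_nonneg h1 (by norm_num : (0:ℝ) ≤ 2)
    simp only [hwdef]
    linarith
  have key : ∀ i : Fin d, w (i, true) + w (i, false) = |x i| + (1 - t) / d := by
    intro i
    simp only [hwdef, if_pos, if_neg, ↓reduceIte, Bool.false_eq_true]
    field_simp
    ring
  have hws : ∑ p, w p = 1 := by
    rw [Fintype.sum_prod_type]
    have : ∀ i : Fin d, ∑ b, w (i, b) = |x i| + (1 - t) / d := by
      intro i
      rw [Fintype.sum_bool]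
      exact key i
    rw [Finset.sum_congr rfl (fun i _ => this i), Finset.sum_add_distrib,
      Finset.sum_const, Finset.card_univ, Fintype.card_fin, nsmul_eq_mul]
    rw [← ht]
    field_simp
    ring
  have hmem : ∀ p ∈ Finset.univ, pt p ∈ crossV d := fun p _ => Set.mem_range_self p
  have hcm : Finset.univ.centerMass w pt = x := by
    rw [Finset.centerMass_eq_of_sum_1 _ _ hws]
    have : ∀ p : Fin d × Bool, w p • pt p
        = (w p * (if p.2 then (1:ℝ) else -1)) • EuclideanSpace.single p.1 (1:ℝ) := by
      intro p
      rw [hpt]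
      simp only []
      rw [single_eq_smul p.1 (if p.2 then (1:ℝ) else -1), smul_smul]
    rw [Finset.sum_congr rfl (fun p _ => this p), Fintype.sum_prod_type]
    have h2 : ∀ i : Fin d,
        ∑ b, (w (i, b) * (if b then (1:ℝ) else -1)) • EuclideanSpace.single i (1:ℝ)
        = x i • EuclideanSpace.single i (1:ℝ) := by
      intro i
      rw [Fintype.sum_bool]
      rw [← add_smul]
      congr 1
      simp only [hwdef]
      norm_num
      ring
    rw [Finset.sum_congr rfl (fun i _ => h2 i)]
    exact (eq_sum_single x).symm
  rw [← hcm]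
  exact Finset.centerMass_mem_convexHull _ hw0 (by rw [hws]; norm_num) hmem

lemma rho_eq_hull (hd : 0 < d) (k : ℝ) : rho d k = convexHull ℝ (vertSet d k) := by
  apply Set.Subset.antisymm
  · apply convexHull_min ?_ (convex_convexHull ℝ _)
    rintro z (hz | hz)
    · exact convexHull_mono Set.subset_union_left (cross_subset_hull hd hz)
    · obtain ⟨x, hx, rfl⟩ := hz
      have : (1/k) • x ∈ (1/k) • convexHull ℝ (cubeV d) :=
        Set.smul_mem_smul_set (hcube_subset_hull hx)
      rw [← convexHull_smul] at this
      exact convexHull_mono Set.subset_union_right this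
  · apply convexHull_mono
    rintro z (hz | hz)
    · exact Set.mem_union_left _ (crossV_subset_cross hz)
    · obtain ⟨x, hx, rfl⟩ := hz
      exact Set.mem_union_right _ (Set.smul_mem_smul_set (cubeV_subset_hcube hx))


variable {E : Type*} [NormedAddCommGroup E] [NormedSpace ℝ E]

lemma mem_convexHull_argmax {V : Set E} {f : E →L[ℝ] ℝ} {M : ℝ}
    (hV : ∀ v ∈ V, f v ≤ M) {x : E} (hx : x ∈ convexHull ℝ V) (hfx : f x = M) :
    x ∈ convexHull ℝ {v | v ∈ V ∧ f v = M} := by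
  rw [convexHull_eq] at hx
  obtain ⟨ι, t, w, z, hw0, hws, hz, hcm⟩ := hx
  rw [Finset.centerMass_eq_of_sum_1 _ _ hws] at hcm
  have hfsum : ∑ i ∈ t, w i * f (z i) = M := by
    have : f x = ∑ i ∈ t, w i * f (z i) := by
      rw [← hcm, map_sum]
      exact Finset.sum_congr rfl fun i _ => by rw [map_smul, smul_eq_mul]
    rw [← this, hfx]
  have hzero : ∀ i ∈ t, w i * (M - f (z i)) = 0 := by
    have hsum0 : ∑ i ∈ t, w i * (M - f (z i)) = 0 := by
      have : ∑ i ∈ t, w i * (M - f (z i)) = (∑ i ∈ t, w i) * M - ∑ i ∈ t, w i * f (z i) := by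
        rw [Finset.sum_mul, ← Finset.sum_sub_distrib]
        exact Finset.sum_congr rfl fun i _ => by ring
      rw [this, hws, hfsum]; ring
    intro i hi
    have hnn : ∀ j ∈ t, 0 ≤ w j * (M - f (z j)) :=
      fun j hj => mul_nonneg (hw0 j hj) (by linarith [hV (z j) (hz j hj)])
    exact (Finset.sum_eq_zero_iff_of_nonneg hnn).mp hsum0 i hi
  set t' := t.filter (fun i => w i ≠ 0) with ht'
  have hws' : ∑ i ∈ t', w i = 1 := by
    rw [ht', Finset.sum_filter_ne_zero]; exact hws
  have hx' : x = ∑ i ∈ t', w i • z i := by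
    rw [← hcm, ht']
    rw [Finset.sum_filter_of_ne]
    intro i _ hne
    exact fun h => hne (by rw [h, zero_smul])
  have hz' : ∀ i ∈ t', z i ∈ {v | v ∈ V ∧ f v = M} := by
    intro i hi
    rw [ht', Finset.mem_filter] at hi
    refine ⟨hz i hi.1, ?_⟩
    have := hzero i hi.1
    rcases mul_eq_zero.mp this with h | h
    · exact absurd h hi.2
    · linarith
  rw [hx', ← Finset.centerMass_eq_of_sum_1 _ _ hws']
  exact Finset.centerMass_mem_convexHull _
    (fun i hi => hw0 i (Finset.mem_filter.mp hi).1) (by rw [hws']; norm_num) hz'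

lemma exposed_eq_hull_inter {V A : Set E} (hA : A = convexHull ℝ V) {F : Set E}
    (hF : IsExposed ℝ A F) (hne : F.Nonempty) : F = convexHull ℝ (V ∩ F) := by
  obtain ⟨l, hl⟩ := hF hne
  obtain ⟨x0, hx0⟩ := hne
  set M := l x0 with hM
  have hx0' := hl ▸ hx0
  have hmax : ∀ y ∈ A, l y ≤ M := hx0'.2
  have hVA : V ⊆ A := hA ▸ subset_convexHull ℝ V
  have hFM : ∀ x ∈ F, l x = M := by
    intro x hx
    have hx' := hl ▸ hx
    exact le_antisymm (hmax x hx'.1) (hx'.2 x0 hx0'.1)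
  apply Set.Subset.antisymm
  · intro x hx
    have h1 : x ∈ convexHull ℝ {v | v ∈ V ∧ l v = M} := by
      apply mem_convexHull_argmax (fun v hv => hmax v (hVA hv))
      · exact hA ▸ (hl ▸ hx).1
      · exact hFM x hx
    refine convexHull_mono ?_ h1
    rintro v ⟨hvV, hvM⟩
    refine ⟨hvV, ?_⟩
    rw [hl]
    exact ⟨hVA hvV, fun y hy => hvM ▸ hmax y hy⟩
  · apply convexHull_min Set.inter_subset_right
    exact hF.convex (hA ▸ convex_convexHull ℝ V)

lemma exposed_faces_finite {V A : Set E} (hVfin : V.Finite) (hA : A = convexHull ℝ V) :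
    {F : Set E | IsExposed ℝ A F ∧ F.Nonempty}.Finite := by
  have hinj : Set.InjOn (fun F => V ∩ F) {F : Set E | IsExposed ℝ A F ∧ F.Nonempty} := by
    rintro F1 ⟨h1, h1n⟩ F2 ⟨h2, h2n⟩ heq
    rw [exposed_eq_hull_inter hA h1 h1n, exposed_eq_hull_inter hA h2 h2n]
    simp only at heq
    rw [heq]
  apply Set.Finite.of_finite_image ?_ hinj
  apply Set.Finite.subset hVfin.finite_subsets
  rintro S ⟨F, _, rfl⟩
  exact Set.inter_subset_left

def sVec (s : Fin d → SignType) : EuclideanSpace ℝ (Fin d) := WithLp.toLp 2 (fun i => (s i : ℝ))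
def lf (s : Fin d → SignType) : EuclideanSpace ℝ (Fin d) →L[ℝ] ℝ := innerSL ℝ (sVec s)
lemma lf_apply (s : Fin d → SignType) (x : EuclideanSpace ℝ (Fin d)) :
    lf s x = ∑ i, (s i : ℝ) * x i := by
  simp [lf, sVec, innerSL_apply_apply, PiLp.inner_apply, RCLike.inner_apply, starRingEnd_apply]
  exact Finset.sum_congr rfl fun i _ => mul_comm _ _
lemma lf_single (s : Fin d → SignType) (j : Fin d) (ε : ℝ) :
    lf s (EuclideanSpace.single j ε) = (s j : ℝ) * ε := by
  rw [lf_apply]; simp [EuclideanSpace.single_apply, mul_ite]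
lemma lf_smul (s : Fin d → SignType) (c : ℝ) (x : EuclideanSpace ℝ (Fin d)) :
    lf s (c • x) = c * lf s x := by simp [map_smul]

def msup (s : Fin d → SignType) : ℕ := (Finset.univ.filter fun i => s i ≠ 0).card

-- pointwise sign lemmas
lemma sign_mul_le (a : SignType) {b : ℝ} (hb : |b| ≤ 1) :
    (a : ℝ) * b ≤ if a = 0 then 0 else 1 := by
  rcases abs_le.mp hb with ⟨h1, h2⟩
  cases a <;> simp <;> linarith
lemma sign_mul_lt (a : SignType) {b : ℝ} (hb : b = 1 ∨ b = -1) (ha : a ≠ 0)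
    (hne : b ≠ (a : ℝ)) : (a : ℝ) * b < 1 := by
  cases a <;> rcases hb with rfl | rfl <;> simp_all <;> norm_num
lemma sgn_mul_self {a : SignType} (ha : a ≠ 0) : (a : ℝ) * (a : ℝ) = 1 := by
  cases a <;> simp_all
lemma sign_eq_of_mul_eq_one {a b : SignType} (h : (a : ℝ) * (b : ℝ) = 1) : a = b := by
  cases a <;> cases b <;> simp_all <;> norm_num at h
lemma sign_mul_le_one (a b : SignType) : (a : ℝ) * (b : ℝ) ≤ 1 := by
  cases a <;> cases b <;> norm_num
lemma sign_coe_inj {a b : SignType} (h : (a : ℝ) = (b : ℝ)) : a = b := by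
  cases a <;> cases b <;> simp_all <;> norm_num at h
lemma sign_abs_le (a : SignType) : |(a : ℝ)| ≤ 1 := by cases a <;> simp

lemma msup_cast_eq (s : Fin d → SignType) :
    ∑ i, (if s i = 0 then (0:ℝ) else 1) = msup s := by
  calc ∑ i, (if s i = 0 then (0:ℝ) else 1)
      = ∑ i, (if s i ≠ 0 then (1:ℝ) else 0) :=
        Finset.sum_congr rfl (fun i _ => by by_cases h : s i = 0 <;> simp [h])
    _ = msup s := by rw [Finset.sum_boole, msup]

lemma sum_le_msup (s : Fin d → SignType) {x : EuclideanSpace ℝ (Fin d)}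
    (hx : ∀ i, |x i| ≤ 1) : ∑ i, (s i : ℝ) * x i ≤ msup s := by
  calc ∑ i, (s i : ℝ) * x i ≤ ∑ i, (if s i = 0 then (0:ℝ) else 1) :=
        Finset.sum_le_sum fun i _ => sign_mul_le (s i) (hx i)
    _ = msup s := msup_cast_eq s

lemma sum_eq_msup_iff (s : Fin d → SignType) {v : EuclideanSpace ℝ (Fin d)}
    (hv : v ∈ cubeV d) :
    ∑ i, (s i : ℝ) * v i = msup s ↔ ∀ i, s i ≠ 0 → v i = (s i : ℝ) := by
  have habs : ∀ i, |v i| ≤ 1 := fun i => by rcases hv i with h | h <;> rw [h] <;> norm_num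
  constructor
  · intro h i hi
    by_contra hne
    have hlt : (s i : ℝ) * v i < if s i = 0 then 0 else 1 := by
      rw [if_neg hi]
      exact sign_mul_lt (s i) (hv i) hi hne
    have : ∑ j, (s j : ℝ) * v j < ∑ j, (if s j = 0 then (0:ℝ) else 1) :=
      Finset.sum_lt_sum (fun j _ => sign_mul_le (s j) (habs j)) ⟨i, Finset.mem_univ i, hlt⟩
    rw [h, msup_cast_eq s] at this
    exact lt_irrefl _ this
  · intro h
    calc ∑ i, (s i : ℝ) * v i = ∑ i, (if s i = 0 then (0:ℝ) else 1) := by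
          refine Finset.sum_congr rfl fun i _ => ?_
          by_cases hi : s i = 0
          · simp [hi]
          · rw [if_neg hi, h i hi, sgn_mul_self hi]
      _ = msup s := msup_cast_eq s

lemma single_mem_cross {j : Fin d} {ε : ℝ} (hε : |ε| = 1) :
    EuclideanSpace.single j ε ∈ cross d := by
  show ∑ i, |EuclideanSpace.single j ε i| ≤ 1
  have : ∀ i, |EuclideanSpace.single j ε i| = if i = j then |ε| else 0 := by
    intro i
    rw [EuclideanSpace.single_apply]
    by_cases h : i = j <;> simp [h]
  rw [Finset.sum_congr rfl fun i _ => this i, Finset.sum_ite_eq' Finset.univ j fun _ => |ε|]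
  simp [hε]

lemma single_mem_rho {k : ℝ} {j : Fin d} {ε : ℝ} (hε : |ε| = 1) :
    EuclideanSpace.single j ε ∈ rho d k :=
  subset_convexHull ℝ _ (Set.mem_union_left _ (single_mem_cross hε))

lemma cube_smul_mem_rho {k : ℝ} {v : EuclideanSpace ℝ (Fin d)} (hv : v ∈ cubeV d) :
    (1 / k) • v ∈ rho d k := by
  apply subset_convexHull ℝ _
  apply Set.mem_union_right
  exact Set.smul_mem_smul_set fun i => by rcases hv i with h | h <;> rw [h] <;> norm_num

lemma lf_le_on_rho {k : ℝ} (hk : 1 ≤ k) (s : Fin d → SignType) {M : ℝ}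
    (h1 : 1 ≤ M) (hm : (msup s : ℝ) / k ≤ M) :
    ∀ y ∈ rho d k, lf s y ≤ M := by
  have hk0 : (0:ℝ) < k := lt_of_lt_of_le one_pos hk
  intro y hy
  have hsub : rho d k ⊆ {z | lf s z ≤ M} := by
    apply convexHull_min ?_ ?_
    · rintro z (hz | ⟨x, hx, rfl⟩)
      · have : lf s z ≤ ∑ i, |z i| := by
          rw [lf_apply]
          apply Finset.sum_le_sum
          intro i _
          calc (s i : ℝ) * z i ≤ |(s i : ℝ) * z i| := le_abs_self _
            _ = |(s i : ℝ)| * |z i| := abs_mul _ _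
            _ ≤ 1 * |z i| := mul_le_mul_of_nonneg_right (sign_abs_le (s i)) (abs_nonneg _)
            _ = |z i| := one_mul _
        have hz1 : ∑ i, |z i| ≤ 1 := hz
        show lf s z ≤ M
        linarith
      · show lf s ((1/k) • x) ≤ M
        rw [lf_smul]
        have hb : ∑ i, (s i : ℝ) * x i ≤ msup s := sum_le_msup s hx
        have hpos : (0:ℝ) ≤ 1 / k := by positivity
        calc (1/k) * lf s x ≤ (1/k) * (msup s) := by
              rw [lf_apply]; exact mul_le_mul_of_nonneg_left hb hpos
          _ = (msup s : ℝ) / k := by ring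
          _ ≤ M := hm
    · have : {z : EuclideanSpace ℝ (Fin d) | lf s z ≤ M} = (lf s) ⁻¹' Set.Iic M := rfl
      rw [this]
      exact (convex_Iic M).linear_preimage (lf s : EuclideanSpace ℝ (Fin d) →ₗ[ℝ] ℝ)
  exact hsub hy

def Mv (k : ℝ) (s : Fin d → SignType) : ℝ := max 1 ((msup s : ℝ) / k)

def faceOf (k : ℝ) (s : Fin d → SignType) : Set (EuclideanSpace ℝ (Fin d)) :=
  (lf s).toExposed (rho d k)

lemma faceOf_isExposed (k : ℝ) (s : Fin d → SignType) :
    IsExposed ℝ (rho d k) (faceOf k s) :=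
  ContinuousLinearMap.toExposed.isExposed

lemma mem_faceOf {k : ℝ} {s : Fin d → SignType} {x : EuclideanSpace ℝ (Fin d)} :
    x ∈ faceOf k s ↔ x ∈ rho d k ∧ ∀ y ∈ rho d k, lf s y ≤ lf s x := Iff.rfl

lemma one_le_Mv {k : ℝ} (s : Fin d → SignType) : 1 ≤ Mv k s := le_max_left _ _

lemma Mv_div_le {k : ℝ} (s : Fin d → SignType) : (msup s : ℝ) / k ≤ Mv k s := le_max_right _ _

lemma Mv_eq_one {k : ℝ} (hk : 0 < k) {s : Fin d → SignType} (h : (msup s : ℝ) ≤ k) :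
    Mv k s = 1 := max_eq_left ((div_le_one hk).mpr h)

lemma Mv_eq_div {k : ℝ} (hk : 0 < k) {s : Fin d → SignType} (h : k ≤ (msup s : ℝ)) :
    Mv k s = (msup s : ℝ) / k := max_eq_right ((one_le_div hk).mpr h)

lemma exists_supp {s : Fin d → SignType} (hs : s ≠ 0) : ∃ j, s j ≠ 0 := by
  by_contra h
  push_neg at h
  exact hs (funext fun i => h i)

def extVec (s : Fin d → SignType) : EuclideanSpace ℝ (Fin d) :=
  WithLp.toLp 2 (fun i => if s i ≠ 0 then (s i : ℝ) else 1)

lemma extVec_mem_cubeV (s : Fin d → SignType) : extVec s ∈ cubeV d := by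
  intro i
  show (if s i ≠ 0 then (s i : ℝ) else 1) = 1 ∨ (if s i ≠ 0 then (s i : ℝ) else 1) = -1
  by_cases h : s i = 0
  · simp [h]
  · rw [if_pos h]
    cases hi : s i <;> simp_all

lemma lf_attained {k : ℝ} (hk : 1 ≤ k) {s : Fin d → SignType} (hs : s ≠ 0) :
    ∃ w ∈ rho d k, lf s w = Mv k s := by
  have hk0 : (0:ℝ) < k := lt_of_lt_of_le one_pos hk
  rcases le_or_gt ((msup s : ℝ)) k with h | h
  · obtain ⟨j, hj⟩ := exists_supp hs
    refine ⟨EuclideanSpace.single j ((s j : ℝ)), single_mem_rho ?_, ?_⟩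
    · cases hsj : s j <;> simp_all
    · rw [lf_single, sgn_mul_self hj, Mv_eq_one hk0 h]
  · refine ⟨(1/k) • extVec s, cube_smul_mem_rho (extVec_mem_cubeV s), ?_⟩
    rw [lf_smul, lf_apply, Mv_eq_div hk0 h.le]
    have : ∑ i, (s i : ℝ) * extVec s i = msup s := by
      rw [sum_eq_msup_iff s (extVec_mem_cubeV s)]
      intro i hi
      show (if s i ≠ 0 then (s i : ℝ) else 1) = (s i : ℝ)
      rw [if_pos hi]
    rw [this]; ring

lemma mem_faceOf_iff {k : ℝ} (hk : 1 ≤ k) {s : Fin d → SignType} (hs : s ≠ 0)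
    {x : EuclideanSpace ℝ (Fin d)} :
    x ∈ faceOf k s ↔ x ∈ rho d k ∧ lf s x = Mv k s := by
  obtain ⟨w, hw, hfw⟩ := lf_attained hk hs
  have hbd := lf_le_on_rho hk s (one_le_Mv s) (Mv_div_le s)
  rw [mem_faceOf]
  constructor
  · rintro ⟨hx, hmax⟩
    exact ⟨hx, le_antisymm (hbd x hx) (hfw ▸ hmax w hw)⟩
  · rintro ⟨hx, hfx⟩
    exact ⟨hx, fun y hy => by rw [hfx]; exact hbd y hy⟩

lemma faceOf_zero (k : ℝ) : faceOf (d := d) k 0 = rho d k := by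
  ext x
  rw [mem_faceOf]
  have h0 : ∀ y : EuclideanSpace ℝ (Fin d), lf (0 : Fin d → SignType) y = 0 := by
    intro y
    rw [lf_apply]
    simp
  constructor
  · exact fun h => h.1
  · intro hx
    exact ⟨hx, fun y _ => by rw [h0, h0]⟩

lemma sign_coe_ne_zero {a : SignType} (ha : a ≠ 0) : (a : ℝ) ≠ 0 := by
  cases a <;> simp_all

lemma faceOf_ne_rho {k : ℝ} (hk : 1 ≤ k) {t : Fin d → SignType} (ht : t ≠ 0) :
    faceOf k t ≠ rho d k := by
  intro h
  obtain ⟨j, hj⟩ := exists_supp ht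
  have habs : |(-(t j : ℝ))| = 1 := by cases hjj : t j <;> simp_all
  have hw : EuclideanSpace.single j (-(t j : ℝ)) ∈ rho d k := single_mem_rho habs
  have hmem : EuclideanSpace.single j (-(t j : ℝ)) ∈ faceOf k t := h ▸ hw
  rw [mem_faceOf_iff hk ht] at hmem
  have : lf t (EuclideanSpace.single j (-(t j : ℝ))) = -1 := by
    rw [lf_single, mul_neg, sgn_mul_self hj]
  rw [this] at hmem
  have := one_le_Mv (k := k) t
  linarith [hmem.2 ▸ this]

lemma keyA {k : ℝ} (hk : 1 < k) {u v : Fin d → SignType} (hu : u ≠ 0) (hv : v ≠ 0)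
    (hum : (msup u : ℝ) ≤ k) (hvm : (msup v : ℝ) ≤ k)
    (h : faceOf k u = faceOf k v) : ∀ i, u i ≠ 0 → u i = v i := by
  intro i hi
  have hk0 : (0:ℝ) < k := lt_trans one_pos hk
  have habs : |(u i : ℝ)| = 1 := by cases hii : u i <;> simp_all
  have hmem : EuclideanSpace.single i ((u i : ℝ)) ∈ faceOf k u := by
    rw [mem_faceOf_iff hk.le hu]
    exact ⟨single_mem_rho habs, by rw [lf_single, sgn_mul_self hi, Mv_eq_one hk0 hum]⟩
  rw [h, mem_faceOf_iff hk.le hv, Mv_eq_one hk0 hvm] at hmem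
  have : (v i : ℝ) * (u i : ℝ) = 1 := by rw [← lf_single v i ((u i : ℝ))]; exact hmem.2
  exact (sign_eq_of_mul_eq_one this).symm

lemma keyB {k : ℝ} (hk : 1 < k) {u v : Fin d → SignType}
    (hum : k < (msup u : ℝ)) (hvm : k < (msup v : ℝ))
    (h : faceOf k u = faceOf k v) : ∀ i, v i ≠ 0 → u i = v i := by
  have hk0 : (0:ℝ) < k := lt_trans one_pos hk
  have hu : u ≠ 0 := by
    rintro rfl
    simp [msup] at hum
    linarith
  have hv : v ≠ 0 := by
    rintro rfl
    simp [msup] at hvm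
    linarith
  set vv : EuclideanSpace ℝ (Fin d) :=
    WithLp.toLp 2 (fun i => if u i ≠ 0 then (u i : ℝ) else if v i ≠ 0 then -(v i : ℝ) else 1) with hvvdef
  have hvvcube : vv ∈ cubeV d := by
    intro i
    show (if u i ≠ 0 then (u i : ℝ) else if v i ≠ 0 then -(v i : ℝ) else 1) = 1 ∨
      (if u i ≠ 0 then (u i : ℝ) else if v i ≠ 0 then -(v i : ℝ) else 1) = -1
    by_cases h1 : u i = 0
    · by_cases h2 : v i = 0
      · rw [if_neg (by simp [h1]), if_neg (by simp [h2])]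
        left; rfl
      · rw [if_neg (by simp [h1]), if_pos h2]
        cases hv2 : v i <;> simp_all
    · rw [if_pos h1]
      cases hu2 : u i <;> simp_all
  have hsum : ∑ i, (u i : ℝ) * vv i = msup u := by
    rw [sum_eq_msup_iff u hvvcube]
    intro i hi
    show (if u i ≠ 0 then (u i : ℝ) else _) = (u i : ℝ)
    rw [if_pos hi]
  have hmem : (1/k) • vv ∈ faceOf k u := by
    rw [mem_faceOf_iff hk.le hu]
    refine ⟨cube_smul_mem_rho hvvcube, ?_⟩
    rw [lf_smul, lf_apply, hsum, Mv_eq_div hk0 hum.le]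
    ring
  rw [h, mem_faceOf_iff hk.le hv, Mv_eq_div hk0 hvm.le] at hmem
  have hvsum : ∑ i, (v i : ℝ) * vv i = msup v := by
    have := hmem.2
    rw [lf_smul, lf_apply] at this
    field_simp at this
    linarith
  rw [sum_eq_msup_iff v hvvcube] at hvsum
  intro i hi
  have := hvsum i hi
  by_cases h1 : u i = 0
  · exfalso
    have : (if u i ≠ 0 then (u i : ℝ) else if v i ≠ 0 then -(v i : ℝ) else 1) = (v i : ℝ) := this
    rw [if_neg (by simpa using h1), if_pos hi] at this
    have hvne := sign_coe_ne_zero hi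
    exact hvne (by linarith)
  · have : (if u i ≠ 0 then (u i : ℝ) else if v i ≠ 0 then -(v i : ℝ) else 1) = (v i : ℝ) := this
    rw [if_pos h1] at this
    exact sign_coe_inj this

lemma faceOf_inj {k : ℝ} (hk : 1 < k) :
    Function.Injective (faceOf (d := d) k) := by
  have hk0 : (0:ℝ) < k := lt_trans one_pos hk
  intro s t h
  by_cases hs : s = 0 <;> by_cases ht : t = 0
  · rw [hs, ht]
  · subst hs
    rw [faceOf_zero] at h
    exact absurd h.symm (faceOf_ne_rho hk.le ht)
  · subst ht
    rw [faceOf_zero] at h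
    exact absurd h (faceOf_ne_rho hk.le hs)
  · rcases le_or_gt ((msup s : ℝ)) k with hsk | hsk <;>
      rcases le_or_gt ((msup t : ℝ)) k with htk | htk
    · -- case A
      funext i
      by_cases hsi : s i = 0
      · by_cases hti : t i = 0
        · rw [hsi, hti]
        · exact ((keyA hk ht hs htk hsk h.symm i hti).symm)
      · exact keyA hk hs ht hsk htk h i hsi
    · -- case C : s small, t big
      exfalso
      obtain ⟨j, hj⟩ := exists_supp hs
      have habs : |(s j : ℝ)| = 1 := by cases hjj : s j <;> simp_all
      have hmem : EuclideanSpace.single j ((s j : ℝ)) ∈ faceOf k s := by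
        rw [mem_faceOf_iff hk.le hs]
        exact ⟨single_mem_rho habs, by rw [lf_single, sgn_mul_self hj, Mv_eq_one hk0 hsk]⟩
      rw [h, mem_faceOf_iff hk.le ht, Mv_eq_div hk0 htk.le] at hmem
      have h1 : (t j : ℝ) * (s j : ℝ) = (msup t : ℝ) / k := by
        rw [← lf_single t j ((s j : ℝ))]; exact hmem.2
      have h2 : (1:ℝ) < (msup t : ℝ) / k := (one_lt_div hk0).mpr htk
      linarith [sign_mul_le_one (t j) (s j)]
    · -- case C' : t small, s big
      exfalso
      obtain ⟨j, hj⟩ := exists_supp ht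
      have habs : |(t j : ℝ)| = 1 := by cases hjj : t j <;> simp_all
      have hmem : EuclideanSpace.single j ((t j : ℝ)) ∈ faceOf k t := by
        rw [mem_faceOf_iff hk.le ht]
        exact ⟨single_mem_rho habs, by rw [lf_single, sgn_mul_self hj, Mv_eq_one hk0 htk]⟩
      rw [← h, mem_faceOf_iff hk.le hs, Mv_eq_div hk0 hsk.le] at hmem
      have h1 : (s j : ℝ) * (t j : ℝ) = (msup s : ℝ) / k := by
        rw [← lf_single s j ((t j : ℝ))]; exact hmem.2
      have h2 : (1:ℝ) < (msup s : ℝ) / k := (one_lt_div hk0).mpr hsk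
      linarith [sign_mul_le_one (s j) (t j)]
    · -- case B
      funext i
      by_cases hti : t i = 0
      · by_cases hsi : s i = 0
        · rw [hsi, hti]
        · exact (keyB hk htk hsk h.symm i hsi).symm
      · exact keyB hk hsk htk h i hti

end Aux

/-- For integer `k` with `1 < k < d`, the polytope `ρ_{d,k}` has at least `3^d` non-empty
exposed faces (including `ρ_{d,k}` itself), so it satisfies Kalai's `3^d` conjecture. -/
theorem kalai_for_rho (d k : ℕ) (hk1 : 1 < k) (hkd : k < d) :
    3 ^ d ≤ {F : Set (EuclideanSpace ℝ (Fin d)) |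
      IsExposed ℝ (rho d (k : ℝ)) F ∧ F.Nonempty}.ncard := by
  have hd : 0 < d := by omega
  have hK : (1:ℝ) < (k:ℝ) := by exact_mod_cast hk1
  set S : Set (Set (EuclideanSpace ℝ (Fin d))) :=
    {F | IsExposed ℝ (rho d (k : ℝ)) F ∧ F.Nonempty} with hS
  have hSfin : S.Finite :=
    exposed_faces_finite (vertSet_finite (d := d) (k : ℝ)) (rho_eq_hull hd (k : ℝ))
  have hne : ∀ s : Fin d → SignType, (faceOf (k : ℝ) s).Nonempty := by
    intro s
    by_cases hs : s = 0
    · rw [hs, faceOf_zero]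
      refine ⟨0, subset_convexHull ℝ _ (Set.mem_union_left _ ?_)⟩
      show ∑ i, |(0 : EuclideanSpace ℝ (Fin d)) i| ≤ 1
      simp
    · obtain ⟨w, hw, hfw⟩ := lf_attained hK.le hs
      exact ⟨w, (mem_faceOf_iff hK.le hs).mpr ⟨hw, hfw⟩⟩
  have hmemS : ∀ s : Fin d → SignType, faceOf (k : ℝ) s ∈ S :=
    fun s => ⟨faceOf_isExposed (k : ℝ) s, hne s⟩
  set g : (Fin d → SignType) → S := fun s => ⟨faceOf (k : ℝ) s, hmemS s⟩ with hg
  have hginj : Function.Injective g := by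
    intro a b hab
    exact faceOf_inj hK (congrArg Subtype.val hab)
  haveI : Finite ↥S := hSfin.to_subtype
  have hcard : Nat.card (Fin d → SignType) ≤ Nat.card ↥S :=
    Nat.card_le_card_of_injective g hginj
  have h3 : Nat.card (Fin d → SignType) = 3 ^ d := by
    rw [Nat.card_eq_fintype_card, Fintype.card_fun]
    have : Fintype.card SignType = 3 := by decide
    rw [this, Fintype.card_fin]
  rw [← Nat.card_coe_set_eq]
  rw [h3] at hcard
  exact hcard
end
end
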